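/- arXiv:1108.2249 — 10 statements merged into one kernel-verified Lean document; each statement's English description precedes it below -/
import Mathlib

section
/- Let 0 ≤ s < 1/2. There exists a constant C = C(s) > 0 such that for all square-summable sequences a, b : ℤ → ℂ one has Σ_{ξ∈ℤ, ξ≠0} ⟨ξ⟩² | Σ_{ξ₁∈ℤ, ξ₁≠0, ξ₁≠ξ} (⟨ξ₁⟩^s ⟨ξ−ξ₁⟩^s)/(⟨ξ⟩^s · ξ₁ · (ξ−ξ₁)) · a_{ξ₁} b_{ξ−ξ₁} |² ≤ C ‖a‖_{ℓ²}² ‖b‖_{ℓ²}². (This is the Fourier-coefficient form of Lemma 3.1: the bilinear normal-form operator T(u,v), defined by the symbol ⟨ξ₁⟩^s⟨ξ₂⟩^s/(⟨ξ₁+ξ₂⟩^s ξ₁ ξ₂) restricted to ξ₁ξ₂(ξ₁+ξ₂) ≠ 0, maps L²(𝕋) × L²(𝕋) boundedly into H¹(𝕋).) -/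
open scoped BigOperators

noncomputable def jp (n : ℤ) : ℝ := 1 + |(n : ℝ)|

lemma jp_pos (n : ℤ) : 0 < jp n := by unfold jp; positivity

lemma one_le_jp (n : ℤ) : 1 ≤ jp n := by
  unfold jp; linarith [abs_nonneg ((n : ℝ))]

lemma one_le_abs_cast {n : ℤ} (hn : n ≠ 0) : 1 ≤ |(n : ℝ)| := by
  have : (1 : ℤ) ≤ |n| := Int.one_le_abs hn
  calc (1:ℝ) = ((1:ℤ):ℝ) := by norm_num
  _ ≤ ((|n|:ℤ):ℝ) := by exact_mod_cast this
  _ = |(n:ℝ)| := by push_cast; ring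

lemma jp_le_two_abs {n : ℤ} (hn : n ≠ 0) : jp n ≤ 2 * |(n : ℝ)| := by
  have := one_le_abs_cast hn; unfold jp; linarith

/-- summability of `⟨n⟩^(-α)` over `ℤ` for `α > 1`. -/
lemma summable_jp_rpow {α : ℝ} (hα : 1 < α) :
    Summable (fun n : ℤ => jp n ^ (-α)) := by
  have hbase : Summable (fun n : ℤ => |(n : ℝ)| ^ (-α)) := Real.summable_abs_int_rpow hα
  have hsingle : Summable (fun n : ℤ => if n = 0 then (1:ℝ) else 0) := by
    apply summable_of_ne_finset_zero (s := {0})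
    intro n hn
    simp only [Finset.mem_singleton] at hn
    simp [hn]
  refine Summable.of_nonneg_of_le (fun n => (Real.rpow_nonneg (jp_pos n).le _))
    (fun n => ?_) (hbase.add hsingle)
  by_cases hn : n = 0
  · subst hn
    simp only [if_pos rfl]
    have : jp 0 = 1 := by unfold jp; norm_num
    rw [this, Real.one_rpow]
    have : |((0:ℤ) : ℝ)| ^ (-α) = 0 := by
      rw [show |((0:ℤ):ℝ)| = 0 by norm_num]
      exact Real.zero_rpow (by linarith)
    rw [this]; norm_num
  · simp only [if_neg hn, add_zero]
    apply Real.rpow_le_rpow_of_nonpos (by positivity) (by unfold jp; linarith [abs_nonneg ((n:ℝ))])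
      (by linarith)

/-- if `x ≤ 2 y` then `y^(-α) ≤ 2^α x^(-α)`. -/
lemma rpow_neg_le_of_le {x y α : ℝ} (hx : 0 < x) (hy : 0 < y) (hxy : x ≤ 2 * y)
    (hα : 0 ≤ α) : y ^ (-α) ≤ 2 ^ α * x ^ (-α) := by
  have hx' : (0:ℝ) < x ^ α := Real.rpow_pos_of_pos hx α
  have hy' : (0:ℝ) < y ^ α := Real.rpow_pos_of_pos hy α
  have h1 : x ^ α ≤ 2 ^ α * y ^ α := by
    rw [← Real.mul_rpow (by norm_num) hy.le]
    exact Real.rpow_le_rpow hx.le hxy hα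
  rw [Real.rpow_neg hy.le, Real.rpow_neg hx.le]
  rw [inv_eq_one_div, show (2:ℝ)^α * (x^α)⁻¹ = 2^α / x^α by rw [div_eq_mul_inv],
    div_le_div_iff₀ hy' hx']
  linarith

lemma conv_pointwise {α : ℝ} (hα : 0 ≤ α) (ξ ξ₁ : ℤ) :
    jp ξ₁ ^ (-α) * jp (ξ - ξ₁) ^ (-α) ≤
      2 ^ α * jp ξ ^ (-α) * (jp ξ₁ ^ (-α) + jp (ξ - ξ₁) ^ (-α)) := by
  have h1 : jp ξ ≤ jp ξ₁ + jp (ξ - ξ₁) := by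
    unfold jp
    have : |(ξ:ℝ)| ≤ |(ξ₁:ℝ)| + |((ξ - ξ₁ : ℤ):ℝ)| := by
      have := abs_add_le ((ξ₁:ℝ)) (((ξ - ξ₁ : ℤ):ℝ))
      push_cast at this ⊢
      convert this using 2
      all_goals first | rfl | ring
    linarith
  have n1 : (0:ℝ) ≤ jp ξ₁ ^ (-α) := Real.rpow_nonneg (jp_pos _).le _
  have n2 : (0:ℝ) ≤ jp (ξ - ξ₁) ^ (-α) := Real.rpow_nonneg (jp_pos _).le _
  have n3 : (0:ℝ) ≤ 2 ^ α * jp ξ ^ (-α) :=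
    mul_nonneg (Real.rpow_nonneg (by norm_num) _) (Real.rpow_nonneg (jp_pos _).le _)
  rcases le_total (jp (ξ - ξ₁)) (jp ξ₁) with h | h
  · have key : jp ξ₁ ^ (-α) ≤ 2 ^ α * jp ξ ^ (-α) :=
      rpow_neg_le_of_le (jp_pos _) (jp_pos _) (by linarith) hα
    calc jp ξ₁ ^ (-α) * jp (ξ - ξ₁) ^ (-α)
        ≤ (2 ^ α * jp ξ ^ (-α)) * jp (ξ - ξ₁) ^ (-α) := by
          exact mul_le_mul_of_nonneg_right key n2
      _ ≤ 2 ^ α * jp ξ ^ (-α) * (jp ξ₁ ^ (-α) + jp (ξ - ξ₁) ^ (-α)) := by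
          apply mul_le_mul_of_nonneg_left _ n3
          linarith
  · have key : jp (ξ - ξ₁) ^ (-α) ≤ 2 ^ α * jp ξ ^ (-α) :=
      rpow_neg_le_of_le (jp_pos _) (jp_pos _) (by linarith) hα
    calc jp ξ₁ ^ (-α) * jp (ξ - ξ₁) ^ (-α)
        ≤ jp ξ₁ ^ (-α) * (2 ^ α * jp ξ ^ (-α)) := by
          exact mul_le_mul_of_nonneg_left key n1
      _ ≤ 2 ^ α * jp ξ ^ (-α) * (jp ξ₁ ^ (-α) + jp (ξ - ξ₁) ^ (-α)) := by
          rw [mul_comm (jp ξ₁ ^ (-α))]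
          apply mul_le_mul_of_nonneg_left _ n3
          linarith

lemma tsum_shift (α : ℝ) (ξ : ℤ) :
    (∑' ξ₁ : ℤ, jp (ξ - ξ₁) ^ (-α)) = ∑' n : ℤ, jp n ^ (-α) :=
  (Equiv.subLeft ξ).tsum_eq (fun n => jp n ^ (-α))

lemma conv_summable {α : ℝ} (hα : 1 < α) (ξ : ℤ) :
    Summable (fun ξ₁ : ℤ => jp ξ₁ ^ (-α) * jp (ξ - ξ₁) ^ (-α)) := by
  have h1 : Summable (fun ξ₁ : ℤ => jp (ξ - ξ₁) ^ (-α)) :=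
    (Equiv.subLeft ξ).summable_iff.mpr (summable_jp_rpow hα)
  refine Summable.of_nonneg_of_le
    (fun n => mul_nonneg (Real.rpow_nonneg (jp_pos _).le _) (Real.rpow_nonneg (jp_pos _).le _))
    (fun n => conv_pointwise (by linarith) ξ n)
    (((summable_jp_rpow hα).add h1).mul_left _)

lemma conv_tsum_le {α : ℝ} (hα : 1 < α) (ξ : ℤ) :
    (∑' ξ₁ : ℤ, jp ξ₁ ^ (-α) * jp (ξ - ξ₁) ^ (-α)) ≤
      2 ^ α * jp ξ ^ (-α) * (2 * ∑' n : ℤ, jp n ^ (-α)) := by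
  have h1 : Summable (fun ξ₁ : ℤ => jp (ξ - ξ₁) ^ (-α)) :=
    (Equiv.subLeft ξ).summable_iff.mpr (summable_jp_rpow hα)
  have h0 := summable_jp_rpow hα
  calc (∑' ξ₁ : ℤ, jp ξ₁ ^ (-α) * jp (ξ - ξ₁) ^ (-α))
      ≤ ∑' ξ₁ : ℤ, 2 ^ α * jp ξ ^ (-α) * (jp ξ₁ ^ (-α) + jp (ξ - ξ₁) ^ (-α)) :=
        Summable.tsum_le_tsum (fun n => conv_pointwise (by linarith) ξ n) (conv_summable hα ξ)
          ((h0.add h1).mul_left _)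
    _ = 2 ^ α * jp ξ ^ (-α) * ((∑' n : ℤ, jp n ^ (-α)) + ∑' ξ₁ : ℤ, jp (ξ - ξ₁) ^ (-α)) := by
        rw [tsum_mul_left, Summable.tsum_add h0 h1]
    _ = 2 ^ α * jp ξ ^ (-α) * (2 * ∑' n : ℤ, jp n ^ (-α)) := by
        rw [tsum_shift]; ring

/-- Cauchy–Schwarz for tsums of nonnegative sequences: summability part. -/
lemma cs_summable {f g : ℤ → ℝ} (hf0 : ∀ n, 0 ≤ f n) (hg0 : ∀ n, 0 ≤ g n)
    (hf : Summable (fun n => f n ^ 2)) (hg : Summable (fun n => g n ^ 2)) :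
    Summable (fun n => f n * g n) := by
  refine Summable.of_nonneg_of_le (fun n => mul_nonneg (hf0 n) (hg0 n)) (fun n => ?_)
    ((hf.add hg).div_const 2)
  nlinarith [sq_nonneg (f n - g n)]

/-- Cauchy–Schwarz for tsums of nonnegative sequences. -/
lemma cs_tsum {f g : ℤ → ℝ} (hf0 : ∀ n, 0 ≤ f n) (hg0 : ∀ n, 0 ≤ g n)
    (hf : Summable (fun n => f n ^ 2)) (hg : Summable (fun n => g n ^ 2)) :
    (∑' n, f n * g n) ^ 2 ≤ (∑' n, f n ^ 2) * ∑' n, g n ^ 2 := by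
  set A := ∑' n, f n ^ 2 with hA
  set B := ∑' n, g n ^ 2 with hB
  have hA0 : 0 ≤ A := tsum_nonneg (fun n => sq_nonneg _)
  have hB0 : 0 ≤ B := tsum_nonneg (fun n => sq_nonneg _)
  have key : (∑' n, f n * g n) ≤ Real.sqrt A * Real.sqrt B := by
    apply Summable.tsum_le_of_sum_le (cs_summable hf0 hg0 hf hg)
    intro u
    have h1 : (∑ i ∈ u, f i * g i) ^ 2 ≤ (∑ i ∈ u, f i ^ 2) * ∑ i ∈ u, g i ^ 2 :=
      Finset.sum_mul_sq_le_sq_mul_sq u f g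
    have h2 : (∑ i ∈ u, f i ^ 2) ≤ A := hf.sum_le_tsum u (fun i _ => sq_nonneg _)
    have h3 : (∑ i ∈ u, g i ^ 2) ≤ B := hg.sum_le_tsum u (fun i _ => sq_nonneg _)
    have h4 : (∑ i ∈ u, f i * g i) ≤ Real.sqrt ((∑ i ∈ u, f i ^ 2) * ∑ i ∈ u, g i ^ 2) := by
      rw [show (∑ i ∈ u, f i * g i) = Real.sqrt ((∑ i ∈ u, f i * g i)^2) from
        (Real.sqrt_sq (Finset.sum_nonneg (fun i _ => mul_nonneg (hf0 i) (hg0 i)))).symm]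
      exact Real.sqrt_le_sqrt h1
    calc (∑ i ∈ u, f i * g i) ≤ Real.sqrt ((∑ i ∈ u, f i ^ 2) * ∑ i ∈ u, g i ^ 2) := h4
      _ ≤ Real.sqrt (A * B) := Real.sqrt_le_sqrt (by
          exact mul_le_mul h2 h3 (Finset.sum_nonneg (fun i _ => sq_nonneg _)) hA0)
      _ = Real.sqrt A * Real.sqrt B := Real.sqrt_mul hA0 B
  have h0 : 0 ≤ ∑' n, f n * g n := tsum_nonneg (fun n => mul_nonneg (hf0 n) (hg0 n))
  calc (∑' n, f n * g n) ^ 2 ≤ (Real.sqrt A * Real.sqrt B) ^ 2 := by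
        apply pow_le_pow_left₀ h0 key
    _ = A * B := by rw [mul_pow, Real.sq_sqrt hA0, Real.sq_sqrt hB0]

noncomputable def Kf (s : ℝ) (ξ : ℤ) (ξ₁ : ℤ) : ℝ :=
  if ξ₁ ≠ 0 ∧ ξ₁ ≠ ξ then
    jp ξ₁ ^ s * jp (ξ - ξ₁) ^ s / (jp ξ ^ s * |(ξ₁ : ℝ)| * |((ξ - ξ₁ : ℤ) : ℝ)|)
  else 0

lemma sq_rpow {t : ℝ} (ht : 0 < t) (s : ℝ) : (t ^ s) ^ 2 = t ^ (2 * s) := by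
  rw [show (2:ℝ) * s = s * 2 by ring, Real.rpow_mul ht.le, Real.rpow_two]

lemma Kf_nonneg (s : ℝ) (ξ ξ₁ : ℤ) : 0 ≤ Kf s ξ ξ₁ := by
  unfold Kf
  split
  · apply div_nonneg
    · exact mul_nonneg (Real.rpow_nonneg (jp_pos _).le _) (Real.rpow_nonneg (jp_pos _).le _)
    · exact mul_nonneg (mul_nonneg (Real.rpow_nonneg (jp_pos _).le _) (abs_nonneg _)) (abs_nonneg _)
  · exact le_refl 0

lemma Kf_sq_le {s : ℝ} (hs0 : 0 ≤ s) (ξ ξ₁ : ℤ) :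
    Kf s ξ ξ₁ ^ 2 ≤
      16 * jp ξ ^ (-(2*s)) * (jp ξ₁ ^ (-(2-2*s)) * jp (ξ - ξ₁) ^ (-(2-2*s))) := by
  have rhs_nonneg : (0:ℝ) ≤ 16 * jp ξ ^ (-(2*s)) *
      (jp ξ₁ ^ (-(2-2*s)) * jp (ξ - ξ₁) ^ (-(2-2*s))) := by
    apply mul_nonneg (mul_nonneg (by norm_num) (Real.rpow_nonneg (jp_pos _).le _))
    exact mul_nonneg (Real.rpow_nonneg (jp_pos _).le _) (Real.rpow_nonneg (jp_pos _).le _)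
  unfold Kf
  split
  case isTrue h =>
    obtain ⟨h1, h2⟩ := h
    have hsub : ξ - ξ₁ ≠ 0 := sub_ne_zero.mpr (Ne.symm h2)
    set u := jp ξ₁ with hu
    set v := jp (ξ - ξ₁) with hv
    set w := jp ξ with hw
    set x := |(ξ₁ : ℝ)| with hx
    set y := |((ξ - ξ₁ : ℤ) : ℝ)| with hy
    have hu0 : 0 < u := jp_pos _
    have hv0 : 0 < v := jp_pos _
    have hw0 : 0 < w := jp_pos _
    have hx1 : 1 ≤ x := one_le_abs_cast h1
    have hy1 : 1 ≤ y := one_le_abs_cast hsub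
    have hux : u ≤ 2 * x := jp_le_two_abs h1
    have hvy : v ≤ 2 * y := jp_le_two_abs hsub
    have hx0 : (0:ℝ) < x := by linarith
    have hy0 : (0:ℝ) < y := by linarith
    set U := u ^ (2*s) with hU
    set V := v ^ (2*s) with hV
    set W := w ^ (2*s) with hW
    have hU0 : 0 < U := Real.rpow_pos_of_pos hu0 _
    have hV0 : 0 < V := Real.rpow_pos_of_pos hv0 _
    have hW0 : 0 < W := Real.rpow_pos_of_pos hw0 _
    have lhs_eq : (u ^ s * v ^ s / (w ^ s * x * y)) ^ 2 = U * V / (W * (x^2 * y^2)) := by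
      rw [div_pow, mul_pow, mul_pow, mul_pow, sq_rpow hu0, sq_rpow hv0, sq_rpow hw0]
      ring
    have rhs_eq : 16 * w ^ (-(2*s)) * (u ^ (-(2-2*s)) * v ^ (-(2-2*s))) =
        16 * U * V / (W * (u^2 * v^2)) := by
      rw [show -(2*s) = -(2*s) by rfl]
      rw [Real.rpow_neg hw0.le, show -(2-2*s) = 2*s - 2 by ring,
        Real.rpow_sub hu0, Real.rpow_sub hv0, Real.rpow_two, Real.rpow_two]
      field_simp
      ring
    rw [lhs_eq, rhs_eq]
    have hkey : u^2 * v^2 ≤ 16 * (x^2 * y^2) := by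
      have ha : u^2 ≤ 4 * x^2 := by nlinarith
      have hb : v^2 ≤ 4 * y^2 := by nlinarith
      calc u^2 * v^2 ≤ (4*x^2) * (4*y^2) :=
            mul_le_mul ha hb (sq_nonneg v) (by positivity)
        _ = 16 * (x^2*y^2) := by ring
    rw [div_le_div_iff₀ (by positivity) (by positivity)]
    have := mul_le_mul_of_nonneg_left hkey (show (0:ℝ) ≤ U * V * W by positivity)
    nlinarith [this]
  case isFalse h =>
    simpa using rhs_nonneg

lemma Kf_sq_summable {s : ℝ} (hs0 : 0 ≤ s) (hs : s < 1/2) (ξ : ℤ) :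
    Summable (fun ξ₁ => Kf s ξ ξ₁ ^ 2) := by
  have hα : (1:ℝ) < 2 - 2*s := by linarith
  exact Summable.of_nonneg_of_le (fun n => sq_nonneg _) (fun n => Kf_sq_le hs0 ξ n)
    ((conv_summable hα ξ).mul_left _)

lemma Kf_sq_tsum_le {s : ℝ} (hs0 : 0 ≤ s) (hs : s < 1/2) (ξ : ℤ) :
    jp ξ ^ 2 * (∑' ξ₁, Kf s ξ ξ₁ ^ 2) ≤
      32 * 2 ^ (2-2*s) * (∑' n : ℤ, jp n ^ (-(2-2*s))) := by
  have hα : (1:ℝ) < 2 - 2*s := by linarith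
  set α := 2 - 2*s with hαdef
  set S := ∑' n : ℤ, jp n ^ (-α) with hS
  have hS0 : 0 ≤ S := tsum_nonneg (fun n => Real.rpow_nonneg (jp_pos _).le _)
  have hw0 : 0 < jp ξ := jp_pos ξ
  have step1 : (∑' ξ₁, Kf s ξ ξ₁ ^ 2) ≤
      16 * jp ξ ^ (-(2*s)) * (2 ^ α * jp ξ ^ (-α) * (2 * S)) := by
    calc (∑' ξ₁, Kf s ξ ξ₁ ^ 2)
        ≤ ∑' ξ₁, 16 * jp ξ ^ (-(2*s)) * (jp ξ₁ ^ (-α) * jp (ξ - ξ₁) ^ (-α)) :=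
          Summable.tsum_le_tsum (fun n => Kf_sq_le hs0 ξ n) (Kf_sq_summable hs0 hs ξ)
            ((conv_summable hα ξ).mul_left _)
      _ = 16 * jp ξ ^ (-(2*s)) * ∑' ξ₁, jp ξ₁ ^ (-α) * jp (ξ - ξ₁) ^ (-α) := tsum_mul_left
      _ ≤ 16 * jp ξ ^ (-(2*s)) * (2 ^ α * jp ξ ^ (-α) * (2 * S)) := by
          apply mul_le_mul_of_nonneg_left (conv_tsum_le hα ξ)
          exact mul_nonneg (by norm_num) (Real.rpow_nonneg hw0.le _)
  have step2 : jp ξ ^ 2 * (∑' ξ₁, Kf s ξ ξ₁ ^ 2) ≤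
      jp ξ ^ 2 * (16 * jp ξ ^ (-(2*s)) * (2 ^ α * jp ξ ^ (-α) * (2 * S))) :=
    mul_le_mul_of_nonneg_left step1 (by positivity)
  refine step2.trans (le_of_eq ?_)
  have hpow : jp ξ ^ 2 * (jp ξ ^ (-(2*s)) * jp ξ ^ (-α)) = 1 := by
    rw [← Real.rpow_add hw0, ← Real.rpow_two, ← Real.rpow_add hw0]
    rw [show (2:ℝ) + (-(2*s) + -α) = 0 by rw [hαdef]; ring]
    exact Real.rpow_zero _
  calc jp ξ ^ 2 * (16 * jp ξ ^ (-(2*s)) * (2 ^ α * jp ξ ^ (-α) * (2 * S)))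
      = 32 * 2 ^ α * S * (jp ξ ^ 2 * (jp ξ ^ (-(2*s)) * jp ξ ^ (-α))) := by ring
    _ = 32 * 2 ^ α * S := by rw [hpow, mul_one]

lemma norm_term (s : ℝ) (hs0 : 0 ≤ s) (a b : ℤ → ℂ) (ξ ξ₁ : ℤ) :
    ‖(if ξ₁ ≠ 0 ∧ ξ₁ ≠ ξ then
        (((1 + |(ξ₁ : ℝ)|) ^ s * (1 + |((ξ - ξ₁ : ℤ) : ℝ)|) ^ s /
            ((1 + |(ξ : ℝ)|) ^ s * (ξ₁ : ℝ) * ((ξ - ξ₁ : ℤ) : ℝ)) : ℝ) : ℂ) *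
          a ξ₁ * b (ξ - ξ₁)
      else 0)‖ = Kf s ξ ξ₁ * (‖a ξ₁‖ * ‖b (ξ - ξ₁)‖) := by
  unfold Kf
  split
  case isTrue h =>
    rw [norm_mul, norm_mul, Complex.norm_real, Real.norm_eq_abs]
    have habs : |(1 + |(ξ₁ : ℝ)|) ^ s * (1 + |((ξ - ξ₁ : ℤ) : ℝ)|) ^ s /
        ((1 + |(ξ : ℝ)|) ^ s * (ξ₁ : ℝ) * ((ξ - ξ₁ : ℤ) : ℝ))| =
        jp ξ₁ ^ s * jp (ξ - ξ₁) ^ s / (jp ξ ^ s * |(ξ₁ : ℝ)| * |((ξ - ξ₁ : ℤ) : ℝ)|) := by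
      rw [abs_div, abs_mul, abs_mul, abs_mul]
      unfold jp
      rw [abs_of_nonneg (Real.rpow_nonneg (by positivity) s),
        abs_of_nonneg (Real.rpow_nonneg (by positivity) s),
        abs_of_nonneg (Real.rpow_nonneg (by positivity) s)]
    rw [habs]; ring
  case isFalse h => simp

lemma main_xi {s : ℝ} (hs0 : 0 ≤ s) (hs : s < 1/2) (a b : ℤ → ℂ) (ξ : ℤ)
    (hslice : Summable (fun ξ₁ : ℤ => ‖a ξ₁‖ ^ 2 * ‖b (ξ - ξ₁)‖ ^ 2)) :
    jp ξ ^ 2 * ‖∑' ξ₁ : ℤ, (if ξ₁ ≠ 0 ∧ ξ₁ ≠ ξ then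
        (((1 + |(ξ₁ : ℝ)|) ^ s * (1 + |((ξ - ξ₁ : ℤ) : ℝ)|) ^ s /
            ((1 + |(ξ : ℝ)|) ^ s * (ξ₁ : ℝ) * ((ξ - ξ₁ : ℤ) : ℝ)) : ℝ) : ℂ) *
          a ξ₁ * b (ξ - ξ₁)
      else 0)‖ ^ 2
    ≤ (32 * 2 ^ (2-2*s) * (∑' n : ℤ, jp n ^ (-(2-2*s)))) *
        ∑' ξ₁ : ℤ, ‖a ξ₁‖ ^ 2 * ‖b (ξ - ξ₁)‖ ^ 2 := by
  set g : ℤ → ℝ := fun ξ₁ => ‖a ξ₁‖ * ‖b (ξ - ξ₁)‖ with hgdef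
  have hg0 : ∀ n, 0 ≤ g n := fun n => mul_nonneg (norm_nonneg _) (norm_nonneg _)
  have hg2 : Summable (fun n => g n ^ 2) :=
    hslice.congr (fun n => (mul_pow _ _ 2).symm)
  have hK2 : Summable (fun ξ₁ => Kf s ξ ξ₁ ^ 2) := Kf_sq_summable hs0 hs ξ
  have hKg : Summable (fun ξ₁ => Kf s ξ ξ₁ * g ξ₁) :=
    cs_summable (Kf_nonneg s ξ) hg0 hK2 hg2
  have hnorm : ∀ ξ₁, ‖(if ξ₁ ≠ 0 ∧ ξ₁ ≠ ξ then
        (((1 + |(ξ₁ : ℝ)|) ^ s * (1 + |((ξ - ξ₁ : ℤ) : ℝ)|) ^ s /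
            ((1 + |(ξ : ℝ)|) ^ s * (ξ₁ : ℝ) * ((ξ - ξ₁ : ℤ) : ℝ)) : ℝ) : ℂ) *
          a ξ₁ * b (ξ - ξ₁)
      else 0)‖ = Kf s ξ ξ₁ * g ξ₁ := fun ξ₁ => norm_term s hs0 a b ξ ξ₁
  have hsum_norm : Summable (fun ξ₁ => ‖(if ξ₁ ≠ 0 ∧ ξ₁ ≠ ξ then
        (((1 + |(ξ₁ : ℝ)|) ^ s * (1 + |((ξ - ξ₁ : ℤ) : ℝ)|) ^ s /
            ((1 + |(ξ : ℝ)|) ^ s * (ξ₁ : ℝ) * ((ξ - ξ₁ : ℤ) : ℝ)) : ℝ) : ℂ) *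
          a ξ₁ * b (ξ - ξ₁)
      else 0)‖) := hKg.congr (fun n => (hnorm n).symm)
  have step1 : ‖∑' ξ₁ : ℤ, (if ξ₁ ≠ 0 ∧ ξ₁ ≠ ξ then
        (((1 + |(ξ₁ : ℝ)|) ^ s * (1 + |((ξ - ξ₁ : ℤ) : ℝ)|) ^ s /
            ((1 + |(ξ : ℝ)|) ^ s * (ξ₁ : ℝ) * ((ξ - ξ₁ : ℤ) : ℝ)) : ℝ) : ℂ) *
          a ξ₁ * b (ξ - ξ₁)
      else 0)‖ ≤ ∑' ξ₁, Kf s ξ ξ₁ * g ξ₁ := by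
    refine (norm_tsum_le_tsum_norm hsum_norm).trans (le_of_eq ?_)
    exact tsum_congr hnorm
  have step2 : ‖∑' ξ₁ : ℤ, (if ξ₁ ≠ 0 ∧ ξ₁ ≠ ξ then
        (((1 + |(ξ₁ : ℝ)|) ^ s * (1 + |((ξ - ξ₁ : ℤ) : ℝ)|) ^ s /
            ((1 + |(ξ : ℝ)|) ^ s * (ξ₁ : ℝ) * ((ξ - ξ₁ : ℤ) : ℝ)) : ℝ) : ℂ) *
          a ξ₁ * b (ξ - ξ₁)
      else 0)‖ ^ 2 ≤ (∑' ξ₁, Kf s ξ ξ₁ ^ 2) * ∑' ξ₁, g ξ₁ ^ 2 := by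
    calc _ ≤ (∑' ξ₁, Kf s ξ ξ₁ * g ξ₁) ^ 2 :=
          pow_le_pow_left₀ (norm_nonneg _) step1 2
      _ ≤ (∑' ξ₁, Kf s ξ ξ₁ ^ 2) * ∑' ξ₁, g ξ₁ ^ 2 :=
          cs_tsum (Kf_nonneg s ξ) hg0 hK2 hg2
  have hg2_nonneg : 0 ≤ ∑' ξ₁, g ξ₁ ^ 2 := tsum_nonneg (fun n => sq_nonneg _)
  have final : jp ξ ^ 2 * ‖∑' ξ₁ : ℤ, (if ξ₁ ≠ 0 ∧ ξ₁ ≠ ξ then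
        (((1 + |(ξ₁ : ℝ)|) ^ s * (1 + |((ξ - ξ₁ : ℤ) : ℝ)|) ^ s /
            ((1 + |(ξ : ℝ)|) ^ s * (ξ₁ : ℝ) * ((ξ - ξ₁ : ℤ) : ℝ)) : ℝ) : ℂ) *
          a ξ₁ * b (ξ - ξ₁)
      else 0)‖ ^ 2
      ≤ (jp ξ ^ 2 * (∑' ξ₁, Kf s ξ ξ₁ ^ 2)) * ∑' ξ₁, g ξ₁ ^ 2 := by
    rw [mul_assoc]
    apply mul_le_mul_of_nonneg_left _ (by positivity)
    exact step2
  refine final.trans ?_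
  have := mul_le_mul_of_nonneg_right (Kf_sq_tsum_le hs0 hs ξ) hg2_nonneg
  refine this.trans (le_of_eq ?_)
  congr 1
  exact tsum_congr (fun n => mul_pow _ _ 2)

def shiftEquiv : ℤ × ℤ ≃ ℤ × ℤ where
  toFun q := (q.2, q.1 - q.2)
  invFun p := (p.1 + p.2, p.1)
  left_inv q := by simp
  right_inv p := by simp

set_option maxHeartbeats 1000000 in
/-- Lemma 3.1 (Fourier-coefficient form): the bilinear normal-form operator `T`,
with symbol `⟨ξ₁⟩^s ⟨ξ₂⟩^s / (⟨ξ₁+ξ₂⟩^s ξ₁ ξ₂)` restricted to `ξ₁ ξ₂ (ξ₁+ξ₂) ≠ 0`,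
maps `L²(𝕋) × L²(𝕋)` boundedly into `H¹(𝕋)`. -/
theorem stmt0 (s : ℝ) (hs0 : 0 ≤ s) (hs : s < 1/2) :
    ∃ C : ℝ, 0 < C ∧ ∀ a b : ℤ → ℂ,
      Summable (fun ξ : ℤ => ‖a ξ‖ ^ 2) → Summable (fun ξ : ℤ => ‖b ξ‖ ^ 2) →
      (∑' ξ : ℤ, (if ξ ≠ 0 then
          (1 + |(ξ : ℝ)|) ^ 2 *
            ‖∑' ξ₁ : ℤ, (if ξ₁ ≠ 0 ∧ ξ₁ ≠ ξ then
              (((1 + |(ξ₁ : ℝ)|) ^ s * (1 + |((ξ - ξ₁ : ℤ) : ℝ)|) ^ s /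
                  ((1 + |(ξ : ℝ)|) ^ s * (ξ₁ : ℝ) * ((ξ - ξ₁ : ℤ) : ℝ)) : ℝ) : ℂ) *
                a ξ₁ * b (ξ - ξ₁)
              else 0)‖ ^ 2
        else 0))
      ≤ C * (∑' ξ : ℤ, ‖a ξ‖ ^ 2) * (∑' ξ : ℤ, ‖b ξ‖ ^ 2) := by
  have hα : (1:ℝ) < 2 - 2*s := by linarith
  set S := ∑' n : ℤ, jp n ^ (-(2-2*s)) with hSdef
  have hS1 : (1:ℝ) ≤ S := by
    have h0 : jp (0:ℤ) ^ (-(2-2*s)) = 1 := by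
      rw [show jp (0:ℤ) = 1 by unfold jp; norm_num, Real.one_rpow]
    calc (1:ℝ) = jp (0:ℤ) ^ (-(2-2*s)) := h0.symm
      _ ≤ S := Summable.le_tsum (summable_jp_rpow hα) 0
        (fun n _ => Real.rpow_nonneg (jp_pos _).le _)
  set C₁ : ℝ := 32 * 2 ^ (2-2*s) * S with hC₁def
  have hC₁pos : 0 < C₁ := by
    have h2 : (0:ℝ) < 2 ^ (2-2*s) := Real.rpow_pos_of_pos (by norm_num) _
    have : (0:ℝ) < S := by linarith
    positivity
  refine ⟨C₁, hC₁pos, ?_⟩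
  intro a b ha hb
  -- Fubini setup
  set Q : ℤ × ℤ → ℝ := fun p => ‖a p.1‖ ^ 2 * ‖b p.2‖ ^ 2 with hQdef
  have hQ : Summable Q :=
    ha.mul_of_nonneg hb (fun n => sq_nonneg _) (fun n => sq_nonneg _)
  have hP : Summable (fun q : ℤ × ℤ => Q (shiftEquiv q)) :=
    shiftEquiv.summable_iff.mpr hQ
  have hslice : ∀ ξ : ℤ, Summable (fun ξ₁ : ℤ => ‖a ξ₁‖ ^ 2 * ‖b (ξ - ξ₁)‖ ^ 2) := by
    intro ξ
    exact hP.prod_factor ξ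
  set h : ℤ → ℝ := fun ξ => ∑' ξ₁ : ℤ, ‖a ξ₁‖ ^ 2 * ‖b (ξ - ξ₁)‖ ^ 2 with hhdef
  have Hh : HasSum h (∑' q : ℤ × ℤ, Q (shiftEquiv q)) :=
    hP.hasSum.prod_fiberwise (fun ξ => (hslice ξ).hasSum)
  have hh_sum : Summable h := ⟨_, Hh⟩
  have hh_tsum : ∑' ξ, h ξ = (∑' ξ : ℤ, ‖a ξ‖ ^ 2) * (∑' ξ : ℤ, ‖b ξ‖ ^ 2) := by
    rw [Hh.tsum_eq, shiftEquiv.tsum_eq Q]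
    exact (Summable.tsum_mul_tsum ha hb hQ).symm
  have hh_nonneg : ∀ ξ, 0 ≤ h ξ :=
    fun ξ => tsum_nonneg (fun n => mul_nonneg (sq_nonneg _) (sq_nonneg _))
  -- pointwise bound
  have hpt : ∀ ξ : ℤ, (if ξ ≠ 0 then
          (1 + |(ξ : ℝ)|) ^ 2 *
            ‖∑' ξ₁ : ℤ, (if ξ₁ ≠ 0 ∧ ξ₁ ≠ ξ then
              (((1 + |(ξ₁ : ℝ)|) ^ s * (1 + |((ξ - ξ₁ : ℤ) : ℝ)|) ^ s /
                  ((1 + |(ξ : ℝ)|) ^ s * (ξ₁ : ℝ) * ((ξ - ξ₁ : ℤ) : ℝ)) : ℝ) : ℂ) *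
                a ξ₁ * b (ξ - ξ₁)
              else 0)‖ ^ 2
        else 0) ≤ C₁ * h ξ := by
    intro ξ
    split
    case isTrue hξ =>
      exact main_xi hs0 hs a b ξ (hslice ξ)
    case isFalse hξ =>
      exact mul_nonneg hC₁pos.le (hh_nonneg ξ)
  -- conclude
  have hCh : Summable (fun ξ => C₁ * h ξ) := hh_sum.mul_left _
  have hF : Summable (fun ξ : ℤ => (if ξ ≠ 0 then
          (1 + |(ξ : ℝ)|) ^ 2 *
            ‖∑' ξ₁ : ℤ, (if ξ₁ ≠ 0 ∧ ξ₁ ≠ ξ then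
              (((1 + |(ξ₁ : ℝ)|) ^ s * (1 + |((ξ - ξ₁ : ℤ) : ℝ)|) ^ s /
                  ((1 + |(ξ : ℝ)|) ^ s * (ξ₁ : ℝ) * ((ξ - ξ₁ : ℤ) : ℝ)) : ℝ) : ℂ) *
                a ξ₁ * b (ξ - ξ₁)
              else 0)‖ ^ 2
        else 0)) := by
    refine Summable.of_nonneg_of_le (fun ξ => ?_) hpt hCh
    split
    · exact mul_nonneg (by positivity) (sq_nonneg _)
    · exact le_refl 0
  calc (∑' ξ : ℤ, (if ξ ≠ 0 then
          (1 + |(ξ : ℝ)|) ^ 2 *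
            ‖∑' ξ₁ : ℤ, (if ξ₁ ≠ 0 ∧ ξ₁ ≠ ξ then
              (((1 + |(ξ₁ : ℝ)|) ^ s * (1 + |((ξ - ξ₁ : ℤ) : ℝ)|) ^ s /
                  ((1 + |(ξ : ℝ)|) ^ s * (ξ₁ : ℝ) * ((ξ - ξ₁ : ℤ) : ℝ)) : ℝ) : ℂ) *
                a ξ₁ * b (ξ - ξ₁)
              else 0)‖ ^ 2
        else 0))
      ≤ ∑' ξ, C₁ * h ξ := Summable.tsum_le_tsum hpt hF hCh
    _ = C₁ * ∑' ξ, h ξ := tsum_mul_left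
    _ = C₁ * ((∑' ξ : ℤ, ‖a ξ‖ ^ 2) * (∑' ξ : ℤ, ‖b ξ‖ ^ 2)) := by rw [hh_tsum]
    _ = C₁ * (∑' ξ : ℤ, ‖a ξ‖ ^ 2) * (∑' ξ : ℤ, ‖b ξ‖ ^ 2) := by ring
end

section
/- Let 0 ≤ s < 1/2 and 0 < ε ≤ 1/2 − s. Then the quantity M := sup { (⟨ξ₁⟩^s ⟨ξ−ξ₁⟩^s ⟨ξ⟩^{1−s}) / (|ξ₁| · |ξ−ξ₁|^{1/2−ε}) : ξ, ξ₁ ∈ ℤ, ξ·ξ₁·(ξ−ξ₁) ≠ 0, |ξ₁| ≥ |ξ−ξ₁| } is finite; i.e., there is a constant C = C(s, ε) such that ⟨ξ₁⟩^s ⟨ξ−ξ₁⟩^s ⟨ξ⟩^{1−s} ≤ C |ξ₁| |ξ−ξ₁|^{1/2−ε} for all integers ξ, ξ₁ with ξ·ξ₁·(ξ−ξ₁) ≠ 0 and |ξ₁| ≥ |ξ−ξ₁|. -/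
/-- The multiplier bound used in the proof of Lemma 3.1: for `0 ≤ s < 1/2` and
`0 < ε ≤ 1/2 - s`, the quantity
`⟨ξ₁⟩^s ⟨ξ-ξ₁⟩^s ⟨ξ⟩^{1-s} / (|ξ₁| |ξ-ξ₁|^{1/2-ε})` is bounded over all integers
`ξ, ξ₁` with `ξ ξ₁ (ξ-ξ₁) ≠ 0` and `|ξ₁| ≥ |ξ-ξ₁|`. -/
theorem stmt1 (s ε : ℝ) (hs0 : 0 ≤ s) (hs : s < 1/2) (hε0 : 0 < ε) (hε : ε ≤ 1/2 - s) :
    ∃ C : ℝ, 0 < C ∧ ∀ ξ ξ₁ : ℤ, ξ * ξ₁ * (ξ - ξ₁) ≠ 0 → |ξ - ξ₁| ≤ |ξ₁| →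
      (1 + |(ξ₁ : ℝ)|) ^ s * (1 + |((ξ - ξ₁ : ℤ) : ℝ)|) ^ s * (1 + |(ξ : ℝ)|) ^ (1 - s)
        ≤ C * |(ξ₁ : ℝ)| * |((ξ - ξ₁ : ℤ) : ℝ)| ^ (1/2 - ε) := by
  refine ⟨(2:ℝ) ^ s * 2 ^ s * 3 ^ (1 - s), by positivity, ?_⟩
  intro ξ ξ₁ h hle
  have hξ : ξ ≠ 0 := by intro h0; simp [h0] at h
  have hξ₁ : ξ₁ ≠ 0 := by intro h0; simp [h0] at h
  have hd : ξ - ξ₁ ≠ 0 := by intro h0; simp [h0] at h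
  set a : ℝ := |(ξ₁ : ℝ)| with ha_def
  set b : ℝ := |((ξ - ξ₁ : ℤ) : ℝ)| with hb_def
  have ha : (1:ℝ) ≤ a := by
    have : (1:ℤ) ≤ |ξ₁| := Int.one_le_abs hξ₁
    calc (1:ℝ) ≤ ((|ξ₁| : ℤ) : ℝ) := by exact_mod_cast this
    _ = a := by push_cast [ha_def]; simp
  have hb : (1:ℝ) ≤ b := by
    have : (1:ℤ) ≤ |ξ - ξ₁| := Int.one_le_abs hd
    calc (1:ℝ) ≤ ((|ξ - ξ₁| : ℤ) : ℝ) := by exact_mod_cast this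
    _ = b := by push_cast [hb_def]; simp
  have hba : b ≤ a := by
    have := hle
    rw [ha_def, hb_def]
    exact_mod_cast this
  have ha0 : (0:ℝ) < a := lt_of_lt_of_le one_pos ha
  have hb0 : (0:ℝ) < b := lt_of_lt_of_le one_pos hb
  have h1 : 1 + a ≤ 2 * a := by linarith
  have h2 : 1 + b ≤ 2 * b := by linarith
  have h3 : 1 + |(ξ : ℝ)| ≤ 3 * a := by
    have : |(ξ : ℝ)| ≤ a + b := by
      have : |(ξ : ℝ)| = |((ξ₁ : ℝ)) + ((ξ - ξ₁ : ℤ) : ℝ)| := by push_cast; ring_nf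
      rw [this]
      exact (abs_add_le _ _).trans (by rw [ha_def, hb_def])
    linarith
  have hs1 : 0 ≤ 1 - s := by linarith
  have key : (1 + a) ^ s * (1 + b) ^ s * (1 + |(ξ : ℝ)|) ^ (1 - s)
      ≤ (2 * a) ^ s * (2 * b) ^ s * (3 * a) ^ (1 - s) := by
    have p1 : (1 + a) ^ s ≤ (2 * a) ^ s :=
      Real.rpow_le_rpow (by positivity) h1 hs0
    have p2 : (1 + b) ^ s ≤ (2 * b) ^ s :=
      Real.rpow_le_rpow (by positivity) h2 hs0
    have p3 : (1 + |(ξ : ℝ)|) ^ (1 - s) ≤ (3 * a) ^ (1 - s) :=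
      Real.rpow_le_rpow (by positivity) h3 hs1
    have := mul_le_mul (mul_le_mul p1 p2 (by positivity) (by positivity)) p3
      (by positivity) (by positivity)
    exact this
  refine key.trans ?_
  have e1 : (2 * a) ^ s = 2 ^ s * a ^ s := Real.mul_rpow (by norm_num) ha0.le
  have e2 : (2 * b) ^ s = 2 ^ s * b ^ s := Real.mul_rpow (by norm_num) hb0.le
  have e3 : (3 * a) ^ (1 - s) = 3 ^ (1 - s) * a ^ (1 - s) :=
    Real.mul_rpow (by norm_num) ha0.le
  have ea : a ^ s * a ^ (1 - s) = a := by
    rw [← Real.rpow_add ha0]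
    norm_num
  have hbs : b ^ s ≤ b ^ (1/2 - ε) :=
    Real.rpow_le_rpow_of_exponent_le hb (by linarith)
  calc (2 * a) ^ s * (2 * b) ^ s * (3 * a) ^ (1 - s)
      = (2 ^ s * 2 ^ s * 3 ^ (1 - s)) * a * b ^ s := by
        rw [e1, e2, e3]
        rw [show (2:ℝ) ^ s * a ^ s * (2 ^ s * b ^ s) * (3 ^ (1 - s) * a ^ (1 - s))
          = (2 ^ s * 2 ^ s * 3 ^ (1 - s)) * (a ^ s * a ^ (1 - s)) * b ^ s by ring, ea]
    _ ≤ (2 ^ s * 2 ^ s * 3 ^ (1 - s)) * a * b ^ (1/2 - ε) := by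
        apply mul_le_mul_of_nonneg_left hbs (by positivity)
end

section
/- Let s ∈ ℝ and let a : ℤ → ℂ be a finitely supported sequence with a₀ = 0 and a_{−k} = conj(a_k) for all k ∈ ℤ. Then for every nonzero ξ ∈ ℤ, Σ_{ξ₁+ξ₂+ξ₃=ξ, ξ₁+ξ₂≠0, ξ₃≠0} (⟨ξ₁⟩^s ⟨ξ₂⟩^s ⟨ξ₃⟩^s)/(i ξ₃ ⟨ξ⟩^s) · a_{ξ₁} a_{ξ₂} a_{ξ₃} = Σ_{ξ₁+ξ₂+ξ₃=ξ, (ξ₁+ξ₂)(ξ₂+ξ₃)(ξ₃+ξ₁)≠0, ξ₃≠0} (⟨ξ₁⟩^s ⟨ξ₂⟩^s ⟨ξ₃⟩^s)/(i ξ₃ ⟨ξ⟩^s) · a_{ξ₁} a_{ξ₂} a_{ξ₃} − (⟨ξ⟩^{2s}/(i ξ)) |a_ξ|² a_ξ. (That is, the trilinear expression splits exactly into the nonresonant part and the single resonant term −⟨ξ⟩^{2s}/(iξ) · |a_ξ|² a_ξ; the remaining resonant contributions cancel by oddness.) -/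
/-- The Japanese bracket `⟨ξ⟩ = 1 + |ξ|`. -/
noncomputable def jbr (ξ : ℤ) : ℝ := 1 + |(ξ : ℝ)|

/-- The trilinear symbol `⟨ξ₁⟩^s ⟨ξ₂⟩^s ⟨ξ₃⟩^s / (i ξ₃ ⟨ξ⟩^s)`. -/
noncomputable def trilSym (s : ℝ) (ξ ξ₁ ξ₂ ξ₃ : ℤ) : ℂ :=
  ((jbr ξ₁ ^ s * jbr ξ₂ ^ s * jbr ξ₃ ^ s : ℝ) : ℂ) /
    (Complex.I * (ξ₃ : ℂ) * ((jbr ξ ^ s : ℝ) : ℂ))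

lemma jbr_pos (ξ : ℤ) : 0 < jbr ξ := by unfold jbr; positivity

lemma jbr_neg (k : ℤ) : jbr (-k) = jbr k := by unfold jbr; push_cast; rw [abs_neg]

/-- Resonant/nonresonant decomposition of Section 3.1: for a finitely supported,
mean-zero, real-symmetric sequence of Fourier coefficients, the trilinear sum over
`ξ₁+ξ₂+ξ₃ = ξ` with `ξ₁+ξ₂ ≠ 0`, `ξ₃ ≠ 0` splits into the nonresonant part plus the
single resonant term `-⟨ξ⟩^{2s}/(iξ) |a_ξ|² a_ξ`.  (Triples are parametrized by
`(ξ₁, ξ₂)` with `ξ₃ = ξ - ξ₁ - ξ₂`.) -/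
theorem stmt4 (s : ℝ) (a : ℤ → ℂ) (hfin : (Function.support a).Finite)
    (h0 : a 0 = 0) (hsym : ∀ k : ℤ, a (-k) = starRingEnd ℂ (a k))
    (ξ : ℤ) (hξ : ξ ≠ 0) :
    (∑' p : ℤ × ℤ, if p.1 + p.2 ≠ 0 ∧ ξ - p.1 - p.2 ≠ 0 then
        trilSym s ξ p.1 p.2 (ξ - p.1 - p.2) * a p.1 * a p.2 * a (ξ - p.1 - p.2) else 0)
    = (∑' p : ℤ × ℤ, if
          (p.1 + p.2) * (p.2 + (ξ - p.1 - p.2)) * ((ξ - p.1 - p.2) + p.1) ≠ 0 ∧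
            ξ - p.1 - p.2 ≠ 0 then
        trilSym s ξ p.1 p.2 (ξ - p.1 - p.2) * a p.1 * a p.2 * a (ξ - p.1 - p.2) else 0)
      - ((jbr ξ ^ (2 * s) : ℝ) : ℂ) / (Complex.I * (ξ : ℂ)) * ((‖a ξ‖ ^ 2 : ℝ) : ℂ) * a ξ := by
  -- the resonant one-variable summand
  set c : ℤ → ℂ := fun k => trilSym s ξ ξ k (-k) * a ξ * a k * a (-k) with hc
  have hjs : ((jbr ξ ^ s : ℝ) : ℂ) ≠ 0 := by
    exact_mod_cast (Real.rpow_pos_of_pos (jbr_pos ξ) s).ne'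
  have hξc : (ξ : ℂ) ≠ 0 := Int.cast_ne_zero.2 hξ
  have hodd : ∀ k, c (-k) = -c k := by
    intro k
    simp only [hc, trilSym, neg_neg, jbr_neg]
    push_cast
    ring
  have hc0 : c 0 = 0 := by simp [hc, h0]
  have hsumc : Summable c := by
    refine summable_of_finite_support (hfin.subset ?_)
    intro k hk
    simp only [Function.mem_support] at hk ⊢
    intro h; exact hk (by simp [hc, h])
  have htc : ∑' k, c k = 0 := by
    have h1 : ∑' k, c (-k) = ∑' k, c k := (Equiv.neg ℤ).tsum_eq c
    rw [tsum_congr hodd, tsum_neg] at h1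
    linear_combination (-(1:ℂ)/2) * h1
  -- value of `c ξ`
  have hj2 : jbr ξ ^ (2 * s) = jbr ξ ^ s * jbr ξ ^ s := by
    rw [two_mul, Real.rpow_add (jbr_pos ξ)]
  have hmc : a ξ * (starRingEnd ℂ) (a ξ) = ((‖a ξ‖ ^ 2 : ℝ) : ℂ) := by
    rw [Complex.mul_conj]
    norm_cast
    simp [Complex.normSq_eq_norm_sq]
  have hcξ : c ξ = -(((jbr ξ ^ (2 * s) : ℝ) : ℂ) / (Complex.I * (ξ : ℂ)) *
      ((‖a ξ‖ ^ 2 : ℝ) : ℂ) * a ξ) := by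
    have hterm : a ξ * a ξ * a (-ξ) = ((‖a ξ‖ ^ 2 : ℝ) : ℂ) * a ξ := by
      rw [hsym ξ, ← hmc]; ring
    have h1 : c ξ = trilSym s ξ ξ ξ (-ξ) * (a ξ * a ξ * a (-ξ)) := by
      rw [hc]; ring
    rw [h1, hterm]
    simp only [trilSym, jbr_neg, hj2]
    push_cast
    field_simp
  -- correction functions
  set h1f : ℤ × ℤ → ℂ :=
    fun p => if p.1 = ξ then (if ξ + p.2 ≠ 0 ∧ p.2 ≠ 0 then c p.2 else 0) else 0 with hh1
  set h2f : ℤ × ℤ → ℂ :=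
    fun p => if p.2 = ξ then (if p.1 + ξ ≠ 0 ∧ p.1 ≠ 0 then c p.1 else 0) else 0 with hh2
  set h12f : ℤ × ℤ → ℂ := fun p => if p = (ξ, ξ) then c ξ else 0 with hh12
  -- pointwise decomposition
  have hpt : ∀ p : ℤ × ℤ,
      (if p.1 + p.2 ≠ 0 ∧ ξ - p.1 - p.2 ≠ 0 then
        trilSym s ξ p.1 p.2 (ξ - p.1 - p.2) * a p.1 * a p.2 * a (ξ - p.1 - p.2) else 0)
      = (if (p.1 + p.2) * (p.2 + (ξ - p.1 - p.2)) * ((ξ - p.1 - p.2) + p.1) ≠ 0 ∧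
            ξ - p.1 - p.2 ≠ 0 then
          trilSym s ξ p.1 p.2 (ξ - p.1 - p.2) * a p.1 * a p.2 * a (ξ - p.1 - p.2) else 0)
        + h1f p + h2f p - h12f p := by
    rintro ⟨x, y⟩
    simp only [hh1, hh2, hh12, Prod.mk.injEq]
    by_cases hx : x = ξ <;> by_cases hy : y = ξ
    · rw [hx, hy]
      have e : ξ - ξ - ξ = -ξ := by ring
      rw [e]
      rw [if_pos (show ξ + ξ ≠ 0 ∧ (-ξ : ℤ) ≠ 0 from ⟨by omega, by omega⟩),
        if_neg (show ¬((ξ + ξ) * (ξ + -ξ) * (-ξ + ξ) ≠ 0 ∧ (-ξ : ℤ) ≠ 0) from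
          fun h => h.1 (by ring)),
        if_pos rfl, if_pos (show ξ + ξ ≠ 0 ∧ ξ ≠ 0 from ⟨by omega, hξ⟩),
        if_pos (show ξ = ξ ∧ ξ = ξ from ⟨rfl, rfl⟩)]
      simp only [hc]
      ring
    · rw [hx]
      have e : ξ - ξ - y = -y := by ring
      rw [e]
      rw [if_neg (show ¬((ξ + y) * (y + -y) * (-y + ξ) ≠ 0 ∧ (-y : ℤ) ≠ 0) from
          fun h => h.1 (by ring)),
        if_pos rfl, if_neg hy,
        if_neg (show ¬(ξ = ξ ∧ y = ξ) from fun h => hy h.2)]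
      simp only [hc, neg_ne_zero]
      ring
    · rw [hy]
      have e : ξ - x - ξ = -x := by ring
      rw [e]
      rw [if_neg (show ¬((x + ξ) * (ξ + -x) * (-x + x) ≠ 0 ∧ (-x : ℤ) ≠ 0) from
          fun h => h.1 (by ring)),
        if_neg hx, if_pos rfl,
        if_neg (show ¬(x = ξ ∧ ξ = ξ) from fun h => hx h.1)]
      have hterm : trilSym s ξ x ξ (-x) * a x * a ξ * a (-x)
          = trilSym s ξ ξ x (-x) * a ξ * a x * a (-x) := by
        simp only [trilSym]; push_cast; ring
      rw [hterm]
      simp only [hc, neg_ne_zero]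
      ring
    · rw [if_neg hx, if_neg hy,
        if_neg (show ¬(x = ξ ∧ y = ξ) from fun h => hx h.1)]
      have hiff : ((x + y) * (y + (ξ - x - y)) * ((ξ - x - y) + x) ≠ 0 ∧
          ξ - x - y ≠ 0) ↔ (x + y ≠ 0 ∧ ξ - x - y ≠ 0) := by
        constructor
        · rintro ⟨h1, h2⟩
          refine ⟨fun h => h1 ?_, h2⟩
          rw [h]; ring
        · rintro ⟨h1, h2⟩
          exact ⟨mul_ne_zero (mul_ne_zero h1 (by omega)) (by omega), h2⟩
      simp only [hiff]
      ring
  -- summability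
  have hSg : Summable (fun p : ℤ × ℤ => if
      (p.1 + p.2) * (p.2 + (ξ - p.1 - p.2)) * ((ξ - p.1 - p.2) + p.1) ≠ 0 ∧
        ξ - p.1 - p.2 ≠ 0 then
      trilSym s ξ p.1 p.2 (ξ - p.1 - p.2) * a p.1 * a p.2 * a (ξ - p.1 - p.2) else 0) := by
    refine summable_of_finite_support ((hfin.prod hfin).subset ?_)
    intro p hp
    simp only [Function.mem_support] at hp
    refine ⟨?_, ?_⟩ <;> simp only [Function.mem_support, ne_eq] <;>
      intro h <;> exact hp (by simp [h])
  have hS1 : Summable h1f := by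
    refine summable_of_finite_support (((Set.finite_singleton ξ).prod hfin).subset ?_)
    intro p hp
    simp only [Function.mem_support, hh1] at hp
    by_cases hx : p.1 = ξ
    · refine ⟨hx, ?_⟩
      simp only [Function.mem_support, ne_eq]
      intro h
      apply hp
      rw [if_pos hx]
      simp [hc, h]
    · exact absurd (if_neg hx) hp
  have hS2 : Summable h2f := by
    refine summable_of_finite_support ((hfin.prod (Set.finite_singleton ξ)).subset ?_)
    intro p hp
    simp only [Function.mem_support, hh2] at hp
    by_cases hy : p.2 = ξ
    · refine ⟨?_, hy⟩
      simp only [Function.mem_support, ne_eq]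
      intro h
      apply hp
      rw [if_pos hy]
      simp [hc, h]
    · exact absurd (if_neg hy) hp
  have hS12 : Summable h12f := by
    refine summable_of_finite_support ((Set.finite_singleton ((ξ, ξ) : ℤ × ℤ)).subset ?_)
    intro p hp
    simp only [Function.mem_support, hh12] at hp
    by_contra h
    exact hp (if_neg (by simpa using h))
  have hsing : Summable (fun k : ℤ => if k = -ξ then c (-ξ) else 0) := by
    refine summable_of_finite_support ((Set.finite_singleton (-ξ)).subset ?_)
    intro k hk
    simp only [Function.mem_support] at hk
    by_contra h
    exact hk (if_neg (by simpa using h))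
  -- the two line sums
  have hT1 : ∑' p : ℤ × ℤ, h1f p = c ξ := by
    have hinj : Function.Injective (fun k : ℤ => ((ξ, k) : ℤ × ℤ)) := by
      intro u v h
      simpa using congrArg Prod.snd h
    have hsup : Function.support h1f ⊆ Set.range (fun k : ℤ => ((ξ, k) : ℤ × ℤ)) := by
      intro p hp
      simp only [Function.mem_support, hh1] at hp
      by_cases hx : p.1 = ξ
      · exact ⟨p.2, by simp [← hx]⟩
      · exact absurd (if_neg hx) hp
    rw [← hinj.tsum_eq hsup]
    have h2 : ∀ k : ℤ, h1f (ξ, k) = c k - (if k = -ξ then c (-ξ) else 0) := by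
      intro k
      simp only [hh1, if_pos rfl]
      by_cases hk : k = -ξ
      · rw [hk, if_pos rfl,
          if_neg (show ¬(ξ + -ξ ≠ 0 ∧ (-ξ : ℤ) ≠ 0) from fun h => h.1 (by ring)),
          sub_self]
      · rw [if_neg hk, sub_zero]
        by_cases hk0 : k = 0
        · rw [hk0, if_neg (show ¬(ξ + 0 ≠ 0 ∧ (0 : ℤ) ≠ 0) from fun h => h.2 rfl)]
          exact hc0.symm
        · rw [if_pos ⟨by omega, hk0⟩]
    rw [tsum_congr h2, hsumc.tsum_sub hsing, htc, tsum_ite_eq, hodd ξ]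
    ring
  have hT2 : ∑' p : ℤ × ℤ, h2f p = c ξ := by
    have hinj : Function.Injective (fun k : ℤ => ((k, ξ) : ℤ × ℤ)) := by
      intro u v h
      simpa using congrArg Prod.fst h
    have hsup : Function.support h2f ⊆ Set.range (fun k : ℤ => ((k, ξ) : ℤ × ℤ)) := by
      intro p hp
      simp only [Function.mem_support, hh2] at hp
      by_cases hy : p.2 = ξ
      · exact ⟨p.1, by simp [← hy]⟩
      · exact absurd (if_neg hy) hp
    rw [← hinj.tsum_eq hsup]
    have h2 : ∀ k : ℤ, h2f (k, ξ) = c k - (if k = -ξ then c (-ξ) else 0) := by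
      intro k
      simp only [hh2, if_pos rfl]
      by_cases hk : k = -ξ
      · rw [hk, if_pos rfl,
          if_neg (show ¬(-ξ + ξ ≠ 0 ∧ (-ξ : ℤ) ≠ 0) from fun h => h.1 (by ring)),
          sub_self]
      · rw [if_neg hk, sub_zero]
        by_cases hk0 : k = 0
        · rw [hk0, if_neg (show ¬((0 : ℤ) + ξ ≠ 0 ∧ (0 : ℤ) ≠ 0) from fun h => h.2 rfl)]
          exact hc0.symm
        · rw [if_pos ⟨by omega, hk0⟩]
    rw [tsum_congr h2, hsumc.tsum_sub hsing, htc, tsum_ite_eq, hodd ξ]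
    ring
  have hT12 : ∑' p : ℤ × ℤ, h12f p = c ξ := by
    simp only [hh12]
    exact tsum_ite_eq ((ξ, ξ) : ℤ × ℤ) (fun _ => c ξ)
  rw [tsum_congr hpt, ((hSg.add hS1).add hS2).tsum_sub hS12, (hSg.add hS1).tsum_add hS2,
    hSg.tsum_add hS1, hT1, hT2, hT12, hcξ]
  ring
end

section
/- Let s ∈ ℝ and let a, b : ℝ → (ℤ → ℂ) be maps such that for each t, a(t) and b(t) are supported in a fixed finite set of frequencies, and for each ξ the functions t ↦ a_ξ(t) and t ↦ b_ξ(t) are differentiable. For ξ ≠ 0 define T(a,b)_ξ(t) := Σ_{ξ₁+ξ₂=ξ, ξ₁≠0, ξ₂≠0} (⟨ξ₁⟩^s ⟨ξ₂⟩^s)/(⟨ξ⟩^s ξ₁ ξ₂) · a_{ξ₁}(t) b_{ξ₂}(t), and for any such map c define (Lc)_ξ(t) := c_ξ′(t) − i ξ³ c_ξ(t). Then for every ξ ≠ 0 and every t, (L T(a,b))_ξ(t) = T(La, b)_ξ(t) + T(a, Lb)_ξ(t) − (3 i ξ / ⟨ξ⟩^s) Σ_{ξ₁+ξ₂=ξ,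 ξ₁≠0, ξ₂≠0} ⟨ξ₁⟩^s ⟨ξ₂⟩^s a_{ξ₁}(t) b_{ξ₂}(t). -/
/-- Fourier coefficients of the normal form `T(a,b)`:
`T(a,b)_ξ(t) = Σ_{ξ₁+ξ₂=ξ, ξ₁ξ₂≠0} ⟨ξ₁⟩^s ⟨ξ₂⟩^s / (⟨ξ⟩^s ξ₁ ξ₂) a_{ξ₁}(t) b_{ξ₂}(t)`. -/
noncomputable def Tcf (s : ℝ) (a b : ℝ → ℤ → ℂ) (ξ : ℤ) (t : ℝ) : ℂ :=
  ∑' ξ₁ : ℤ, if ξ₁ ≠ 0 ∧ ξ - ξ₁ ≠ 0 then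
    (((1 + |(ξ₁ : ℝ)|) ^ s * (1 + |((ξ - ξ₁ : ℤ) : ℝ)|) ^ s / (1 + |(ξ : ℝ)|) ^ s : ℝ) : ℂ)
      / ((ξ₁ : ℂ) * ((ξ - ξ₁ : ℤ) : ℂ)) * a t ξ₁ * b t (ξ - ξ₁)
  else 0

/-- Fourier-coefficient form of the Airy operator `∂_t + ∂_xxx` on the mode `e^{iξx}`:
`(Lc)_ξ(t) = c_ξ'(t) - i ξ³ c_ξ(t)`. -/
noncomputable def Lcf (c : ℝ → ℤ → ℂ) : ℝ → ℤ → ℂ :=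
  fun t ξ => deriv (fun τ => c τ ξ) t - Complex.I * (ξ : ℂ) ^ 3 * c t ξ

lemma Tcf_eq_sum (s : ℝ) (u v : ℝ → ℤ → ℂ) (S : Finset ℤ)
    (hu : ∀ τ η, η ∉ S → u τ η = 0) (ξ : ℤ) (τ : ℝ) :
    Tcf s u v ξ τ = ∑ ξ₁ ∈ S, (if ξ₁ ≠ 0 ∧ ξ - ξ₁ ≠ 0 then
      (((1 + |(ξ₁ : ℝ)|) ^ s * (1 + |((ξ - ξ₁ : ℤ) : ℝ)|) ^ s / (1 + |(ξ : ℝ)|) ^ s : ℝ) : ℂ)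
        / ((ξ₁ : ℂ) * ((ξ - ξ₁ : ℤ) : ℂ)) * u τ ξ₁ * v τ (ξ - ξ₁) else 0) := by
  refine tsum_eq_sum ?_
  intro η hη
  simp [hu τ η hη]


/-- The normal-form (Leibniz) identity for the bilinear pseudo-differential operator `T`
of Section 3.1:
`L T(a,b) = T(La, b) + T(a, Lb) - (3iξ/⟨ξ⟩^s) Σ_{ξ₁+ξ₂=ξ, ξ₁ξ₂≠0} ⟨ξ₁⟩^s ⟨ξ₂⟩^s a_{ξ₁} b_{ξ₂}`. -/
theorem stmt5 (s : ℝ) (a b : ℝ → ℤ → ℂ) (S : Finset ℤ)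
    (hsupp : ∀ t : ℝ, ∀ ξ : ℤ, ξ ∉ S → a t ξ = 0 ∧ b t ξ = 0)
    (hda : ∀ ξ : ℤ, Differentiable ℝ (fun t => a t ξ))
    (hdb : ∀ ξ : ℤ, Differentiable ℝ (fun t => b t ξ))
    (ξ : ℤ) (hξ : ξ ≠ 0) (t : ℝ) :
    Lcf (fun τ η => Tcf s a b η τ) t ξ
      = Tcf s (Lcf a) b ξ t + Tcf s a (Lcf b) ξ t
        - (3 * Complex.I * (ξ : ℂ) / (((1 + |(ξ : ℝ)|) ^ s : ℝ) : ℂ)) *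
          ∑' ξ₁ : ℤ, if ξ₁ ≠ 0 ∧ ξ - ξ₁ ≠ 0 then
            (((1 + |(ξ₁ : ℝ)|) ^ s * (1 + |((ξ - ξ₁ : ℤ) : ℝ)|) ^ s : ℝ) : ℂ) *
              a t ξ₁ * b t (ξ - ξ₁) else 0 := by
  classical
  have ha0 : ∀ τ η, η ∉ S → a τ η = 0 := fun τ η h => (hsupp τ η h).1
  have hLa0 : ∀ τ η, η ∉ S → Lcf a τ η = 0 := by
    intro τ η h
    have h1 : (fun τ' => a τ' η) = fun _ => (0:ℂ) := funext fun τ' => ha0 τ' η h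
    simp [Lcf, h1, ha0 τ η h]
  -- coefficient abbreviation
  set C : ℤ → ℂ := fun ξ₁ =>
    (((1 + |(ξ₁ : ℝ)|) ^ s * (1 + |((ξ - ξ₁ : ℤ) : ℝ)|) ^ s / (1 + |(ξ : ℝ)|) ^ s : ℝ) : ℂ)
      / ((ξ₁ : ℂ) * ((ξ - ξ₁ : ℤ) : ℂ)) with hCdef
  -- last tsum as finite sum
  have hlast : (∑' ξ₁ : ℤ, if ξ₁ ≠ 0 ∧ ξ - ξ₁ ≠ 0 then
        (((1 + |(ξ₁ : ℝ)|) ^ s * (1 + |((ξ - ξ₁ : ℤ) : ℝ)|) ^ s : ℝ) : ℂ) *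
          a t ξ₁ * b t (ξ - ξ₁) else 0)
      = ∑ ξ₁ ∈ S, (if ξ₁ ≠ 0 ∧ ξ - ξ₁ ≠ 0 then
        (((1 + |(ξ₁ : ℝ)|) ^ s * (1 + |((ξ - ξ₁ : ℤ) : ℝ)|) ^ s : ℝ) : ℂ) *
          a t ξ₁ * b t (ξ - ξ₁) else 0) := by
    refine tsum_eq_sum ?_
    intro η hη
    simp [ha0 t η hη]
  have hfun : (fun τ => Tcf s a b ξ τ) = fun τ => ∑ ξ₁ ∈ S,
      (if ξ₁ ≠ 0 ∧ ξ - ξ₁ ≠ 0 then C ξ₁ * a τ ξ₁ * b τ (ξ - ξ₁) else 0) :=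
    funext fun τ => Tcf_eq_sum s a b S ha0 ξ τ
  have hdiff : ∀ ξ₁ ∈ S, DifferentiableAt ℝ
      (fun τ => if ξ₁ ≠ 0 ∧ ξ - ξ₁ ≠ 0 then C ξ₁ * a τ ξ₁ * b τ (ξ - ξ₁) else 0) t := by
    intro ξ₁ _
    by_cases hP : ξ₁ ≠ 0 ∧ ξ - ξ₁ ≠ 0
    · simp only [if_pos hP]
      exact (((hda ξ₁ t).const_mul (C ξ₁)).mul (hdb (ξ - ξ₁) t))
    · simp only [if_neg hP]
      exact differentiableAt_const 0
  have hderiv : ∀ ξ₁ ∈ S, deriv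
      (fun τ => if ξ₁ ≠ 0 ∧ ξ - ξ₁ ≠ 0 then C ξ₁ * a τ ξ₁ * b τ (ξ - ξ₁) else 0) t
      = if ξ₁ ≠ 0 ∧ ξ - ξ₁ ≠ 0 then
          C ξ₁ * deriv (fun τ => a τ ξ₁) t * b t (ξ - ξ₁)
            + C ξ₁ * a t ξ₁ * deriv (fun τ => b τ (ξ - ξ₁)) t else 0 := by
    intro ξ₁ _
    by_cases hP : ξ₁ ≠ 0 ∧ ξ - ξ₁ ≠ 0
    · simp only [if_pos hP]
      have h1 : HasDerivAt (fun τ => C ξ₁ * a τ ξ₁) (C ξ₁ * deriv (fun τ => a τ ξ₁) t) t :=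
        ((hda ξ₁ t).hasDerivAt).const_mul (C ξ₁)
      have h2 : HasDerivAt (fun τ => b τ (ξ - ξ₁)) (deriv (fun τ => b τ (ξ - ξ₁)) t) t :=
        (hdb (ξ - ξ₁) t).hasDerivAt
      have := (h1.fun_mul h2).deriv
      rw [this]
    · simp only [if_neg hP]
      exact deriv_const t 0
  rw [Tcf_eq_sum s (Lcf a) b S hLa0 ξ t, Tcf_eq_sum s a (Lcf b) S ha0 ξ t, hlast]
  show deriv (fun τ => Tcf s a b ξ τ) t - Complex.I * (ξ:ℂ)^3 * Tcf s a b ξ t = _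
  rw [hfun, Tcf_eq_sum s a b S ha0 ξ t, deriv_fun_sum hdiff, Finset.sum_congr rfl hderiv,
      Finset.mul_sum, Finset.mul_sum, ← Finset.sum_sub_distrib, ← Finset.sum_add_distrib,
      ← Finset.sum_sub_distrib]
  refine Finset.sum_congr rfl fun ξ₁ _ => ?_
  by_cases hP : ξ₁ ≠ 0 ∧ ξ - ξ₁ ≠ 0
  · simp only [if_pos hP, Lcf, hCdef]
    obtain ⟨h1, h2⟩ := hP
    have hz1 : (ξ₁ : ℂ) ≠ 0 := Int.cast_ne_zero.mpr h1
    have hz2 : ((ξ - ξ₁ : ℤ) : ℂ) ≠ 0 := Int.cast_ne_zero.mpr h2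
    have hN : (((1 + |(ξ : ℝ)|) ^ s : ℝ) : ℂ) ≠ 0 := by
      exact_mod_cast ne_of_gt (Real.rpow_pos_of_pos (by positivity) s)
    have hz2' : (ξ : ℂ) - (ξ₁ : ℂ) ≠ 0 := by push_cast at hz2; exact hz2
    push_cast
    field_simp
    ring
  · simp [if_neg hP]
end

section
/- Let s < 1/2, γ ∈ ℝ, and N, T > 0. There exists a constant C = C(N, T, s, γ) such that for all square-summable sequences a, b : ℤ → ℂ with a₀ = b₀ = 0, ‖a‖_{ℓ²} + ‖b‖_{ℓ²} < N, and Σ_{ξ≠0} ⟨ξ⟩^{2γ} |a_ξ − b_ξ|² < ∞, and for all t ∈ [0, T], ( Σ_{ξ≠0} ⟨ξ⟩^{2γ} | a_ξ exp(2it ⟨ξ⟩^{2s} |a_ξ|²/ξ) − b_ξ exp(2it ⟨ξ⟩^{2s} |b_ξ|²/ξ) |² )^{1/2} ≤ C ( Σ_{ξ≠0} ⟨ξ⟩^{2γ} |a_ξ − b_ξ|² )^{1/2}. (This is Lemma 3.4: the resonant solution map f ↦ R[f] is Lipschitz from H^γ data to C([0,T]; H^γ) on L²-balls of radius N, stated at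 the level of Fourier coefficients; the common unimodular factor e^{itξ³} has been cancelled.) -/
lemma exp_I_sub_le (x y : ℝ) :
    ‖Complex.exp (Complex.I * x) - Complex.exp (Complex.I * y)‖ ≤ 2 * |x - y| := by
  have hnorm : ∀ z : ℝ, ‖Complex.exp (Complex.I * z)‖ = 1 := by
    intro z
    rw [Complex.norm_exp]
    simp
  have key : ∀ θ : ℝ, ‖Complex.exp (Complex.I * θ) - 1‖ ≤ 2 * |θ| := by
    intro θ
    rcases le_or_gt ‖Complex.I * θ‖ 1 with h | h
    · have h0 := Complex.norm_exp_sub_one_le h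
      have h1 : ‖Complex.I * θ‖ = |θ| := by
        rw [norm_mul, Complex.norm_I, Complex.norm_real, one_mul, Real.norm_eq_abs]
      rw [h1] at h0
      simpa using h0
    · have h1 : ‖Complex.exp (Complex.I * θ) - 1‖ ≤ 2 := by
        calc ‖Complex.exp (Complex.I * θ) - 1‖ ≤ ‖Complex.exp (Complex.I * θ)‖ + ‖(1:ℂ)‖ :=
            norm_sub_le _ _
        _ = 2 := by rw [hnorm]; norm_num
      have h2 : (1:ℝ) < |θ| := by simpa [map_mul] using h
      nlinarith
  have : Complex.exp (Complex.I * x) - Complex.exp (Complex.I * y)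
      = Complex.exp (Complex.I * y) * (Complex.exp (Complex.I * (x - y)) - 1) := by
    rw [mul_sub, ← Complex.exp_add, mul_one]
    push_cast
    ring_nf
  rw [this, norm_mul, hnorm, one_mul]
  simpa using key (x - y)

set_option maxHeartbeats 1000000 in
/-- Lemma 3.4 (Fourier-coefficient form): the resonant solution map `f ↦ R[f]`
is Lipschitz from `H^γ` data to `C([0,T]; H^γ)` on `L²`-balls of radius `N`
(the common unimodular factor `e^{itξ³}` has been cancelled). -/
theorem stmt7 (s γ N T : ℝ) (hs : s < 1/2) (hN : 0 < N) (hT : 0 < T) :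
    ∃ C : ℝ, 0 < C ∧ ∀ a b : ℤ → ℂ, a 0 = 0 → b 0 = 0 →
      Summable (fun ξ : ℤ => ‖a ξ‖ ^ 2) → Summable (fun ξ : ℤ => ‖b ξ‖ ^ 2) →
      (∑' ξ : ℤ, ‖a ξ‖ ^ 2) ^ ((1:ℝ)/2) + (∑' ξ : ℤ, ‖b ξ‖ ^ 2) ^ ((1:ℝ)/2) < N →
      Summable (fun ξ : ℤ => (1 + |(ξ : ℝ)|) ^ (2 * γ) * ‖a ξ - b ξ‖ ^ 2) →
      ∀ t : ℝ, t ∈ Set.Icc (0:ℝ) T →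
      (∑' ξ : ℤ, if ξ ≠ 0 then (1 + |(ξ : ℝ)|) ^ (2 * γ) *
          ‖a ξ * Complex.exp (Complex.I *
              ((2 * t * (1 + |(ξ : ℝ)|) ^ (2 * s) * ‖a ξ‖ ^ 2 / (ξ : ℝ) : ℝ) : ℂ))
            - b ξ * Complex.exp (Complex.I *
              ((2 * t * (1 + |(ξ : ℝ)|) ^ (2 * s) * ‖b ξ‖ ^ 2 / (ξ : ℝ) : ℝ) : ℂ))‖ ^ 2
        else 0) ^ ((1:ℝ)/2)
      ≤ C * (∑' ξ : ℤ, if ξ ≠ 0 then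
            (1 + |(ξ : ℝ)|) ^ (2 * γ) * ‖a ξ - b ξ‖ ^ 2 else 0) ^ ((1:ℝ)/2) := by
  set K : ℝ := 1 + 16 * T * N ^ 2 with hK
  have hKpos : 0 < K := by positivity
  refine ⟨K, hKpos, ?_⟩
  intro a b ha0 hb0 hsa hsb hab hsum t ht
  set f : ℤ → ℝ := fun ξ => (1 + |(ξ : ℝ)|) ^ (2 * γ) * ‖a ξ - b ξ‖ ^ 2 with hf
  set g : ℤ → ℝ := fun ξ => if ξ ≠ 0 then f ξ else 0 with hg
  set F : ℤ → ℝ := fun ξ => if ξ ≠ 0 then (1 + |(ξ : ℝ)|) ^ (2 * γ) *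
          ‖a ξ * Complex.exp (Complex.I *
              ((2 * t * (1 + |(ξ : ℝ)|) ^ (2 * s) * ‖a ξ‖ ^ 2 / (ξ : ℝ) : ℝ) : ℂ))
            - b ξ * Complex.exp (Complex.I *
              ((2 * t * (1 + |(ξ : ℝ)|) ^ (2 * s) * ‖b ξ‖ ^ 2 / (ξ : ℝ) : ℝ) : ℂ))‖ ^ 2
        else 0 with hF
  -- bounds on norms of coefficients
  have htsum_a : (0:ℝ) ≤ ∑' ξ : ℤ, ‖a ξ‖ ^ 2 := tsum_nonneg (fun ξ => sq_nonneg _)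
  have htsum_b : (0:ℝ) ≤ ∑' ξ : ℤ, ‖b ξ‖ ^ 2 := tsum_nonneg (fun ξ => sq_nonneg _)
  have hNa : ∀ ξ : ℤ, ‖a ξ‖ ≤ N := by
    intro ξ
    have h1 : ‖a ξ‖ ^ 2 ≤ ∑' ξ : ℤ, ‖a ξ‖ ^ 2 :=
      Summable.le_tsum hsa ξ (fun i _ => sq_nonneg _)
    have h2 : ‖a ξ‖ ≤ (∑' ξ : ℤ, ‖a ξ‖ ^ 2) ^ ((1:ℝ)/2) := by
      rw [← Real.sqrt_eq_rpow]
      calc ‖a ξ‖ = Real.sqrt (‖a ξ‖ ^ 2) := by rw [Real.sqrt_sq (norm_nonneg _)]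
      _ ≤ _ := Real.sqrt_le_sqrt h1
    have h3 : (0:ℝ) ≤ (∑' ξ : ℤ, ‖b ξ‖ ^ 2) ^ ((1:ℝ)/2) := Real.rpow_nonneg htsum_b _
    linarith
  have hNb : ∀ ξ : ℤ, ‖b ξ‖ ≤ N := by
    intro ξ
    have h1 : ‖b ξ‖ ^ 2 ≤ ∑' ξ : ℤ, ‖b ξ‖ ^ 2 :=
      Summable.le_tsum hsb ξ (fun i _ => sq_nonneg _)
    have h2 : ‖b ξ‖ ≤ (∑' ξ : ℤ, ‖b ξ‖ ^ 2) ^ ((1:ℝ)/2) := by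
      rw [← Real.sqrt_eq_rpow]
      calc ‖b ξ‖ = Real.sqrt (‖b ξ‖ ^ 2) := by rw [Real.sqrt_sq (norm_nonneg _)]
      _ ≤ _ := Real.sqrt_le_sqrt h1
    have h3 : (0:ℝ) ≤ (∑' ξ : ℤ, ‖a ξ‖ ^ 2) ^ ((1:ℝ)/2) := Real.rpow_nonneg htsum_a _
    linarith
  -- the pointwise key inequality
  have key : ∀ ξ : ℤ, F ξ ≤ K ^ 2 * g ξ := by
    intro ξ
    by_cases hξ : ξ = 0
    · simp [hF, hg, hξ]
    · simp only [hF, hg, hf, if_pos hξ]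
      set w : ℝ := (1 + |(ξ : ℝ)|) ^ (2 * γ) with hw
      have hwpos : 0 < w := Real.rpow_pos_of_pos (by positivity) _
      set α : ℝ := 2 * t * (1 + |(ξ : ℝ)|) ^ (2 * s) * ‖a ξ‖ ^ 2 / (ξ : ℝ) with hα
      set β : ℝ := 2 * t * (1 + |(ξ : ℝ)|) ^ (2 * s) * ‖b ξ‖ ^ 2 / (ξ : ℝ) with hβ
      have hξ1 : (1:ℝ) ≤ |(ξ : ℝ)| := by
        rw [← Int.cast_abs]
        exact_mod_cast Int.one_le_abs (by simpa using hξ)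
      have ht0 : 0 ≤ t := ht.1
      have htT : t ≤ T := ht.2
      -- |α - β| ≤ 8 * T * N * ‖a ξ - b ξ‖
      have hαβ : |α - β| ≤ 8 * T * N * ‖a ξ - b ξ‖ := by
        have hdiff : α - β = 2 * t * (1 + |(ξ : ℝ)|) ^ (2 * s) / (ξ : ℝ) *
            (‖a ξ‖ ^ 2 - ‖b ξ‖ ^ 2) := by
          rw [hα, hβ]; ring
        have hpow : (1 + |(ξ : ℝ)|) ^ (2 * s) ≤ 2 * |(ξ : ℝ)| := by
          calc (1 + |(ξ : ℝ)|) ^ (2 * s) ≤ (1 + |(ξ : ℝ)|) ^ (1:ℝ) :=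
              Real.rpow_le_rpow_of_exponent_le (by linarith) (by linarith)
          _ = 1 + |(ξ : ℝ)| := Real.rpow_one _
          _ ≤ 2 * |(ξ : ℝ)| := by linarith
        have hppos : (0:ℝ) < (1 + |(ξ : ℝ)|) ^ (2 * s) :=
          Real.rpow_pos_of_pos (by positivity) _
        have hc : |2 * t * (1 + |(ξ : ℝ)|) ^ (2 * s) / (ξ : ℝ)| ≤ 4 * T := by
          rw [abs_div, abs_mul, abs_mul]
          rw [abs_of_nonneg (le_of_lt hppos), abs_of_nonneg (by norm_num : (0:ℝ) ≤ 2),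
            abs_of_nonneg ht0]
          rw [div_le_iff₀ (by linarith : (0:ℝ) < |(ξ : ℝ)|)]
          nlinarith [hpow, hppos, mul_le_mul_of_nonneg_left hpow (mul_nonneg (by norm_num : (0:ℝ) ≤ 2) ht0)]
        have hsq : |‖a ξ‖ ^ 2 - ‖b ξ‖ ^ 2| ≤ 2 * N * ‖a ξ - b ξ‖ := by
          have h1 : |‖a ξ‖ - ‖b ξ‖| ≤ ‖a ξ - b ξ‖ := abs_norm_sub_norm_le _ _
          have h2 : ‖a ξ‖ ^ 2 - ‖b ξ‖ ^ 2 = (‖a ξ‖ - ‖b ξ‖) * (‖a ξ‖ + ‖b ξ‖) := by ring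
          rw [h2, abs_mul, abs_of_nonneg (by positivity : (0:ℝ) ≤ ‖a ξ‖ + ‖b ξ‖)]
          have := hNa ξ; have := hNb ξ
          have hnn : (0:ℝ) ≤ ‖a ξ - b ξ‖ := norm_nonneg _
          nlinarith [abs_nonneg (‖a ξ‖ - ‖b ξ‖)]
        have habs : |α - β| = |2 * t * (1 + |(ξ : ℝ)|) ^ (2 * s) / (ξ : ℝ)| *
            |‖a ξ‖ ^ 2 - ‖b ξ‖ ^ 2| := by rw [hdiff, abs_mul]
        have hmm := mul_le_mul hc hsq (abs_nonneg _) (by linarith : (0:ℝ) ≤ 4 * T)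
        rw [habs]
        nlinarith [hmm]
      -- main pointwise norm estimate
      have hmain : ‖a ξ * Complex.exp (Complex.I * (α:ℂ)) -
          b ξ * Complex.exp (Complex.I * (β:ℂ))‖ ≤ K * ‖a ξ - b ξ‖ := by
        have hsplit : a ξ * Complex.exp (Complex.I * (α:ℂ)) -
            b ξ * Complex.exp (Complex.I * (β:ℂ))
            = (a ξ - b ξ) * Complex.exp (Complex.I * (α:ℂ)) +
              b ξ * (Complex.exp (Complex.I * (α:ℂ)) - Complex.exp (Complex.I * (β:ℂ))) := by
          ring
        have hnorm1 : ‖Complex.exp (Complex.I * (α:ℂ))‖ = 1 := by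
          rw [Complex.norm_exp]; simp
        have hE : ‖Complex.exp (Complex.I * (α:ℂ)) - Complex.exp (Complex.I * (β:ℂ))‖
            ≤ 2 * |α - β| := exp_I_sub_le α β
        calc ‖a ξ * Complex.exp (Complex.I * (α:ℂ)) - b ξ * Complex.exp (Complex.I * (β:ℂ))‖
            ≤ ‖(a ξ - b ξ) * Complex.exp (Complex.I * (α:ℂ))‖ +
              ‖b ξ * (Complex.exp (Complex.I * (α:ℂ)) - Complex.exp (Complex.I * (β:ℂ)))‖ := by
              rw [hsplit]; exact norm_add_le _ _
        _ = ‖a ξ - b ξ‖ + ‖b ξ‖ *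
              ‖Complex.exp (Complex.I * (α:ℂ)) - Complex.exp (Complex.I * (β:ℂ))‖ := by
              rw [norm_mul, norm_mul, hnorm1, mul_one]
        _ ≤ ‖a ξ - b ξ‖ + N * (2 * (8 * T * N * ‖a ξ - b ξ‖)) := by
              have hb := hNb ξ
              have hEnn : (0:ℝ) ≤ ‖Complex.exp (Complex.I * (α:ℂ)) -
                Complex.exp (Complex.I * (β:ℂ))‖ := norm_nonneg _
              have h2 : ‖Complex.exp (Complex.I * (α:ℂ)) - Complex.exp (Complex.I * (β:ℂ))‖
                  ≤ 2 * (8 * T * N * ‖a ξ - b ξ‖) := by linarith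
              have h3 := mul_le_mul hb h2 hEnn hN.le
              linarith
        _ = K * ‖a ξ - b ξ‖ := by rw [hK]; ring
      have hsq : ‖a ξ * Complex.exp (Complex.I * (α:ℂ)) -
          b ξ * Complex.exp (Complex.I * (β:ℂ))‖ ^ 2 ≤ K ^ 2 * ‖a ξ - b ξ‖ ^ 2 := by
        calc ‖a ξ * Complex.exp (Complex.I * (α:ℂ)) -
            b ξ * Complex.exp (Complex.I * (β:ℂ))‖ ^ 2 ≤ (K * ‖a ξ - b ξ‖) ^ 2 :=
            pow_le_pow_left₀ (norm_nonneg _) hmain 2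
        _ = K ^ 2 * ‖a ξ - b ξ‖ ^ 2 := by ring
      calc w * ‖a ξ * Complex.exp (Complex.I * (α:ℂ)) -
            b ξ * Complex.exp (Complex.I * (β:ℂ))‖ ^ 2
          ≤ w * (K ^ 2 * ‖a ξ - b ξ‖ ^ 2) := by
            exact mul_le_mul_of_nonneg_left hsq (le_of_lt hwpos)
      _ = K ^ 2 * (w * ‖a ξ - b ξ‖ ^ 2) := by ring
  -- summability
  have hgsum : Summable g := by
    apply Summable.of_nonneg_of_le (fun ξ => ?_) (fun ξ => ?_) hsum
    · by_cases hξ : ξ = 0 <;> simp [hg, hξ, hf] <;> positivity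
    · by_cases hξ : ξ = 0 <;> simp [hg, hξ, hf] <;> positivity
  have hFsum : Summable F := by
    apply Summable.of_nonneg_of_le (fun ξ => ?_) key (hgsum.mul_left (K ^ 2))
    by_cases hξ : ξ = 0 <;> simp [hF, hξ] <;> positivity
  have htsum_le : ∑' ξ, F ξ ≤ K ^ 2 * ∑' ξ, g ξ := by
    calc ∑' ξ, F ξ ≤ ∑' ξ, K ^ 2 * g ξ := Summable.tsum_le_tsum key hFsum (hgsum.mul_left _)
    _ = K ^ 2 * ∑' ξ, g ξ := tsum_mul_left
  have hFnn : (0:ℝ) ≤ ∑' ξ, F ξ := tsum_nonneg (fun ξ => by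
    by_cases hξ : ξ = 0 <;> simp [hF, hξ] <;> positivity)
  have hgnn : (0:ℝ) ≤ ∑' ξ, g ξ := tsum_nonneg (fun ξ => by
    by_cases hξ : ξ = 0 <;> simp [hg, hξ, hf] <;> positivity)
  have hfinal : (∑' ξ, F ξ) ^ ((1:ℝ)/2) ≤ K * (∑' ξ, g ξ) ^ ((1:ℝ)/2) := by
    calc (∑' ξ, F ξ) ^ ((1:ℝ)/2) ≤ (K ^ 2 * ∑' ξ, g ξ) ^ ((1:ℝ)/2) :=
        Real.rpow_le_rpow hFnn htsum_le (by norm_num)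
    _ = (K ^ 2) ^ ((1:ℝ)/2) * (∑' ξ, g ξ) ^ ((1:ℝ)/2) :=
        Real.mul_rpow (sq_nonneg _) hgnn
    _ = K * (∑' ξ, g ξ) ^ ((1:ℝ)/2) := by
        congr 1
        rw [← Real.rpow_natCast K 2, ← Real.rpow_mul hKpos.le]
        norm_num
  exact hfinal
end

section
/- Let γ ∈ ℝ and let a, b : ℤ → ℂ be square-summable sequences. Then ( Σ_{ξ∈ℤ, ξ≠0} ⟨ξ⟩^{2γ} |a_ξ| |b_ξ| (|a_ξ|² − |b_ξ|²)² )^{1/2} ≤ ‖a‖_{ℓ²}^{1/2} ‖b‖_{ℓ²}^{1/2} (‖a‖_{ℓ²} + ‖b‖_{ℓ²}) ( Σ_{ξ≠0} ⟨ξ⟩^{2γ} |a_ξ − b_ξ|² )^{1/2}, where the right-hand side may be infinite. -/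
/-- The estimate for the term (3.5) in the proof of Lemma 3.4:
`(Σ_{ξ≠0} ⟨ξ⟩^{2γ} |a_ξ||b_ξ|(|a_ξ|²-|b_ξ|²)²)^{1/2}
  ≤ ‖a‖^{1/2} ‖b‖^{1/2} (‖a‖+‖b‖) (Σ_{ξ≠0} ⟨ξ⟩^{2γ} |a_ξ-b_ξ|²)^{1/2}`,
stated in `ℝ≥0∞` since the right-hand side may be infinite. -/
theorem stmt8 (γ : ℝ) (a b : ℤ → ℂ)
    (ha : Summable (fun ξ : ℤ => ‖a ξ‖ ^ 2)) (hb : Summable (fun ξ : ℤ => ‖b ξ‖ ^ 2)) :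
    (∑' ξ : ℤ, if ξ ≠ 0 then
        ENNReal.ofReal ((1 + |(ξ : ℝ)|) ^ (2 * γ) * ‖a ξ‖ * ‖b ξ‖ *
          (‖a ξ‖ ^ 2 - ‖b ξ‖ ^ 2) ^ 2)
      else 0) ^ ((1:ℝ)/2)
    ≤ ENNReal.ofReal
        (((∑' ξ : ℤ, ‖a ξ‖ ^ 2) ^ ((1:ℝ)/2)) ^ ((1:ℝ)/2)
          * ((∑' ξ : ℤ, ‖b ξ‖ ^ 2) ^ ((1:ℝ)/2)) ^ ((1:ℝ)/2)
          * ((∑' ξ : ℤ, ‖a ξ‖ ^ 2) ^ ((1:ℝ)/2) + (∑' ξ : ℤ, ‖b ξ‖ ^ 2) ^ ((1:ℝ)/2)))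
      * (∑' ξ : ℤ, if ξ ≠ 0 then
          ENNReal.ofReal ((1 + |(ξ : ℝ)|) ^ (2 * γ) * ‖a ξ - b ξ‖ ^ 2)
        else 0) ^ ((1:ℝ)/2) := by
  set Ta := ∑' ξ : ℤ, ‖a ξ‖ ^ 2 with hTa
  set Tb := ∑' ξ : ℤ, ‖b ξ‖ ^ 2 with hTb
  have hTa0 : 0 ≤ Ta := tsum_nonneg fun _ => sq_nonneg _
  have hTb0 : 0 ≤ Tb := tsum_nonneg fun _ => sq_nonneg _
  set A := Ta ^ ((1:ℝ)/2) with hA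
  set B := Tb ^ ((1:ℝ)/2) with hB
  have hA0 : 0 ≤ A := Real.rpow_nonneg hTa0 _
  have hB0 : 0 ≤ B := Real.rpow_nonneg hTb0 _
  set C := A ^ ((1:ℝ)/2) * B ^ ((1:ℝ)/2) * (A + B) with hC
  have hC0 : 0 ≤ C := by positivity
  -- pointwise ℓ∞ bounds
  have haux : ∀ (c : ℤ → ℂ) (hc : Summable (fun ξ : ℤ => ‖c ξ‖ ^ 2)) (ξ : ℤ),
      ‖c ξ‖ ≤ (∑' ξ : ℤ, ‖c ξ‖ ^ 2) ^ ((1:ℝ)/2) := by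
    intro c hc ξ
    have h1 : ‖c ξ‖ ^ 2 ≤ ∑' ξ : ℤ, ‖c ξ‖ ^ 2 :=
      hc.le_tsum ξ fun _ _ => sq_nonneg _
    have h2 := Real.rpow_le_rpow (sq_nonneg (‖c ξ‖)) h1 (by norm_num : (0:ℝ) ≤ 1/2)
    calc ‖c ξ‖ = (‖c ξ‖ ^ 2) ^ ((1:ℝ)/2) := by
            rw [← Real.rpow_natCast (‖c ξ‖) 2, ← Real.rpow_mul (norm_nonneg _)]
            norm_num
      _ ≤ _ := h2
  have hCsq : C ^ 2 = A * B * (A + B) ^ 2 := by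
    have hAh : (A ^ ((1:ℝ)/2)) ^ 2 = A := by
      rw [← Real.rpow_natCast (A ^ ((1:ℝ)/2)) 2, ← Real.rpow_mul hA0]
      norm_num
    have hBh : (B ^ ((1:ℝ)/2)) ^ 2 = B := by
      rw [← Real.rpow_natCast (B ^ ((1:ℝ)/2)) 2, ← Real.rpow_mul hB0]
      norm_num
    rw [hC, mul_pow, mul_pow, hAh, hBh]
  -- termwise bound
  have key : ∀ ξ : ℤ,
      (if ξ ≠ 0 then ENNReal.ofReal ((1 + |(ξ : ℝ)|) ^ (2 * γ) * ‖a ξ‖ * ‖b ξ‖ *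
          (‖a ξ‖ ^ 2 - ‖b ξ‖ ^ 2) ^ 2) else 0)
      ≤ ENNReal.ofReal (C ^ 2) *
        (if ξ ≠ 0 then ENNReal.ofReal ((1 + |(ξ : ℝ)|) ^ (2 * γ) * ‖a ξ - b ξ‖ ^ 2) else 0) := by
    intro ξ
    by_cases hξ : ξ = 0
    · simp [hξ]
    · simp only [hξ, if_pos, ne_eq, not_false_iff]
      rw [← ENNReal.ofReal_mul (by positivity)]
      apply ENNReal.ofReal_le_ofReal
      have hw : 0 ≤ (1 + |(ξ : ℝ)|) ^ (2 * γ) := Real.rpow_nonneg (by positivity) _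
      have hxA : ‖a ξ‖ ≤ A := haux a ha ξ
      have hyB : ‖b ξ‖ ≤ B := haux b hb ξ
      have hd : |‖a ξ‖ - ‖b ξ‖| ≤ ‖a ξ - b ξ‖ := abs_norm_sub_norm_le _ _
      have hd2 : (‖a ξ‖ - ‖b ξ‖) ^ 2 ≤ ‖a ξ - b ξ‖ ^ 2 := by
        rw [← sq_abs]; exact pow_le_pow_left₀ (abs_nonneg _) hd 2
      have hsum2 : (‖a ξ‖ + ‖b ξ‖) ^ 2 ≤ (A + B) ^ 2 :=
        pow_le_pow_left₀ (by positivity) (add_le_add hxA hyB) 2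
      have hmain : ‖a ξ‖ * ‖b ξ‖ * (‖a ξ‖ ^ 2 - ‖b ξ‖ ^ 2) ^ 2
          ≤ A * B * (A + B) ^ 2 * ‖a ξ - b ξ‖ ^ 2 := by
        have e : (‖a ξ‖ ^ 2 - ‖b ξ‖ ^ 2) ^ 2 = (‖a ξ‖ - ‖b ξ‖) ^ 2 * (‖a ξ‖ + ‖b ξ‖) ^ 2 := by ring
        rw [e]
        calc ‖a ξ‖ * ‖b ξ‖ * ((‖a ξ‖ - ‖b ξ‖) ^ 2 * (‖a ξ‖ + ‖b ξ‖) ^ 2)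
            ≤ A * B * (‖a ξ - b ξ‖ ^ 2 * (A + B) ^ 2) := by
              apply mul_le_mul (mul_le_mul hxA hyB (norm_nonneg _) hA0)
                (mul_le_mul hd2 hsum2 (sq_nonneg _) (sq_nonneg _))
                (by positivity) (by positivity)
          _ = A * B * (A + B) ^ 2 * ‖a ξ - b ξ‖ ^ 2 := by ring
      calc (1 + |(ξ : ℝ)|) ^ (2 * γ) * ‖a ξ‖ * ‖b ξ‖ * (‖a ξ‖ ^ 2 - ‖b ξ‖ ^ 2) ^ 2
          = (1 + |(ξ : ℝ)|) ^ (2 * γ) * (‖a ξ‖ * ‖b ξ‖ * (‖a ξ‖ ^ 2 - ‖b ξ‖ ^ 2) ^ 2) := by ring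
        _ ≤ (1 + |(ξ : ℝ)|) ^ (2 * γ) * (A * B * (A + B) ^ 2 * ‖a ξ - b ξ‖ ^ 2) :=
            mul_le_mul_of_nonneg_left hmain hw
        _ = C ^ 2 * ((1 + |(ξ : ℝ)|) ^ (2 * γ) * ‖a ξ - b ξ‖ ^ 2) := by rw [hCsq]; ring
  have hsum : (∑' ξ : ℤ, if ξ ≠ 0 then
        ENNReal.ofReal ((1 + |(ξ : ℝ)|) ^ (2 * γ) * ‖a ξ‖ * ‖b ξ‖ *
          (‖a ξ‖ ^ 2 - ‖b ξ‖ ^ 2) ^ 2) else 0)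
      ≤ ENNReal.ofReal (C ^ 2) * (∑' ξ : ℤ, if ξ ≠ 0 then
          ENNReal.ofReal ((1 + |(ξ : ℝ)|) ^ (2 * γ) * ‖a ξ - b ξ‖ ^ 2) else 0) := by
    rw [← ENNReal.tsum_mul_left]
    exact ENNReal.tsum_le_tsum key
  have := ENNReal.rpow_le_rpow hsum (by norm_num : (0:ℝ) ≤ 1/2)
  rw [ENNReal.mul_rpow_of_nonneg _ _ (by norm_num : (0:ℝ) ≤ 1/2)] at this
  have hCr : (ENNReal.ofReal (C ^ 2)) ^ ((1:ℝ)/2) = ENNReal.ofReal C := by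
    rw [ENNReal.ofReal_rpow_of_nonneg (sq_nonneg C) (by norm_num : (0:ℝ) ≤ 1/2)]
    congr 1
    rw [← Real.rpow_natCast C 2, ← Real.rpow_mul hC0]
    norm_num
  rw [hCr] at this
  exact this
end

section
/- Let ξ₁, ξ₂, ξ₃ ∈ ℤ with ξ := ξ₁ + ξ₂ + ξ₃, suppose (ξ₁ + ξ₂)(ξ₂ + ξ₃)(ξ₃ + ξ₁) ≠ 0, and suppose 4|ξ₃| ≤ |ξ|. Then |ξ₁ + ξ₂| · |ξ₂ + ξ₃| · |ξ₃ + ξ₁| ≥ (9/32) ξ². -/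
/-- Lower bound on the resonance factor used in Case 2 of the proof of Lemma 3.2:
if the three pairwise sums are nonzero and `4|ξ₃| ≤ |ξ|` where `ξ = ξ₁+ξ₂+ξ₃`, then
`|ξ₁+ξ₂| |ξ₂+ξ₃| |ξ₃+ξ₁| ≥ (9/32) ξ²`. -/
theorem stmt13 (ξ₁ ξ₂ ξ₃ : ℤ) (h : (ξ₁ + ξ₂) * (ξ₂ + ξ₃) * (ξ₃ + ξ₁) ≠ 0)
    (hsmall : 4 * |ξ₃| ≤ |ξ₁ + ξ₂ + ξ₃|) :
    (9/32 : ℝ) * ((ξ₁ + ξ₂ + ξ₃ : ℤ) : ℝ) ^ 2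
      ≤ |((ξ₁ + ξ₂ : ℤ) : ℝ)| * |((ξ₂ + ξ₃ : ℤ) : ℝ)| * |((ξ₃ + ξ₁ : ℤ) : ℝ)| := by
  set a := ξ₁ + ξ₂ with ha'
  set b := ξ₂ + ξ₃ with hb'
  set c := ξ₃ + ξ₁ with hc'
  set s := ξ₁ + ξ₂ + ξ₃ with hs'
  have ha : a ≠ 0 := fun h0 => h (by rw [h0]; ring)
  have hb : b ≠ 0 := fun h0 => h (by rw [h0]; ring)
  have hc : c ≠ 0 := fun h0 => h (by rw [h0]; ring)
  have hA : 1 ≤ |a| := Int.one_le_abs (by simpa using ha)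
  have hB : 1 ≤ |b| := Int.one_le_abs (by simpa using hb)
  have hC : 1 ≤ |c| := Int.one_le_abs (by simpa using hc)
  have hsa : |s| ≤ |a| + |ξ₃| := by
    calc |s| = |a + ξ₃| := by rw [ha', hs']
    _ ≤ |a| + |ξ₃| := abs_add_le _ _
  have hsbc : |s| ≤ |b| + |c| + |ξ₃| := by
    have : |s + ξ₃| ≤ |b| + |c| := by
      have : s + ξ₃ = b + c := by rw [hb', hc', hs']; ring
      rw [this]; exact abs_add_le _ _
    have h2 : |s| ≤ |s + ξ₃| + |ξ₃| := by
      have h3 := abs_sub_abs_le_abs_sub s (-ξ₃)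
      simp only [abs_neg, sub_neg_eq_add] at h3
      linarith
    linarith
  have hD : 0 ≤ |ξ₃| := abs_nonneg _
  have key : 9 * s ^ 2 ≤ 32 * (|a| * |b| * |c|) := by
    have hsq : |s| ^ 2 = s ^ 2 := sq_abs s
    rcases le_or_gt |s| 2 with h2 | h2
    · -- then ξ₃ = 0
      have hd0 : |ξ₃| = 0 := by omega
      have hbc : 1 ≤ |b| * |c| := by nlinarith
      have hTa : |s| ≤ |a| := by linarith
      nlinarith [abs_nonneg s, mul_le_mul hTa hbc (by norm_num) (abs_nonneg a)]
    · have h1 : 3 * |s| ≤ 4 * |a| := by linarith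
      have hbc : |b| + |c| - 1 ≤ |b| * |c| := by nlinarith [(|b| - 1) * (|c| - 1)]
      have h2' : 3 * |s| - 4 ≤ 4 * (|b| * |c|) := by linarith
      have hpos : 0 ≤ 3 * |s| - 4 := by omega
      nlinarith [mul_le_mul h1 h2' hpos (by positivity : (0:ℤ) ≤ 4 * |a|)]
  have keyR : (9 : ℝ) * (s : ℝ) ^ 2 ≤ 32 * (|(a:ℝ)| * |(b:ℝ)| * |(c:ℝ)|) := by
    exact_mod_cast key
  linarith
end

section
/- Let 0 ≤ s < 1/2 and 0 < δ ≤ (1/2 − s)/5. There exists a constant C = C(s, δ) such that for all integers ξ₁, ξ₂, ξ₃ with ξ := ξ₁ + ξ₂ + ξ₃, ξ₃ ≠ 0, and (ξ₁ + ξ₂)(ξ₂ + ξ₃)(ξ₃ + ξ₁) ≠ 0, ⟨ξ₁⟩^{s+δ} ⟨ξ₂⟩^{s+δ} ⟨ξ₃⟩^{s+δ} ⟨ξ⟩^{1/2−s} ≤ C |ξ₃| · ( |ξ₁ + ξ₂| · |ξ₂ + ξ₃| · |ξ₃ + ξ₁| )^{1/2−δ}. -/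
private lemma rpow_le_rpow'' {x y : ℝ} (p q : ℝ) (hx : 0 ≤ x) (hxy : x ≤ y)
    (h1y : 1 ≤ y) (hp : 0 ≤ p) (hpq : p ≤ q) : x ^ p ≤ y ^ q :=
  (Real.rpow_le_rpow hx hxy hp).trans (Real.rpow_le_rpow_of_exponent_le h1y hpq)

set_option maxHeartbeats 1000000 in
/-- Finiteness of the multiplier supremum `M'` at the heart of the proof of Lemma 3.2:
for `0 ≤ s < 1/2` and `0 < δ ≤ (1/2-s)/5`,
`⟨ξ₁⟩^{s+δ} ⟨ξ₂⟩^{s+δ} ⟨ξ₃⟩^{s+δ} ⟨ξ⟩^{1/2-s}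
  ≲ |ξ₃| (|ξ₁+ξ₂| |ξ₂+ξ₃| |ξ₃+ξ₁|)^{1/2-δ}` where `ξ = ξ₁+ξ₂+ξ₃`. -/
theorem stmt14 (s δ : ℝ) (hs0 : 0 ≤ s) (hs : s < 1/2) (hδ0 : 0 < δ)
    (hδ : δ ≤ (1/2 - s)/5) :
    ∃ C : ℝ, 0 < C ∧ ∀ ξ₁ ξ₂ ξ₃ : ℤ, ξ₃ ≠ 0 →
      (ξ₁ + ξ₂) * (ξ₂ + ξ₃) * (ξ₃ + ξ₁) ≠ 0 →
      (1 + |(ξ₁ : ℝ)|) ^ (s + δ) * (1 + |(ξ₂ : ℝ)|) ^ (s + δ) * (1 + |(ξ₃ : ℝ)|) ^ (s + δ) *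
          (1 + |((ξ₁ + ξ₂ + ξ₃ : ℤ) : ℝ)|) ^ (1/2 - s)
        ≤ C * |(ξ₃ : ℝ)| *
          (|((ξ₁ + ξ₂ : ℤ) : ℝ)| * |((ξ₂ + ξ₃ : ℤ) : ℝ)| * |((ξ₃ + ξ₁ : ℤ) : ℝ)|) ^ (1/2 - δ) := by
  have hα0 : 0 ≤ s + δ := by linarith
  have hα1 : s + δ ≤ 1 := by linarith
  have hβ0 : 0 ≤ 1/2 - s := by linarith
  have hu0 : 0 ≤ 1/2 - δ := by linarith
  have hu1 : 1/2 - δ ≤ 1 := by linarith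
  refine ⟨10000, by norm_num, fun ξ₁ ξ₂ ξ₃ h3 habc => ?_⟩
  have ha : (ξ₁ + ξ₂ : ℤ) ≠ 0 := fun h => habc (by rw [h, zero_mul, zero_mul])
  have hb : (ξ₂ + ξ₃ : ℤ) ≠ 0 := fun h => habc (by rw [h, mul_zero, zero_mul])
  have hc : (ξ₃ + ξ₁ : ℤ) ≠ 0 := fun h => habc (by rw [h, mul_zero])
  have hA1 : (1:ℝ) ≤ |((ξ₁+ξ₂ : ℤ):ℝ)| := by exact_mod_cast Int.one_le_abs ha
  have hB1 : (1:ℝ) ≤ |((ξ₂+ξ₃ : ℤ):ℝ)| := by exact_mod_cast Int.one_le_abs hb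
  have hC1 : (1:ℝ) ≤ |((ξ₃+ξ₁ : ℤ):ℝ)| := by exact_mod_cast Int.one_le_abs hc
  have ht1 : (1:ℝ) ≤ |(ξ₃ : ℝ)| := by exact_mod_cast Int.one_le_abs h3
  have castA : ((ξ₁+ξ₂ : ℤ):ℝ) = (ξ₁:ℝ) + (ξ₂:ℝ) := by push_cast; ring
  have castB : ((ξ₂+ξ₃ : ℤ):ℝ) = (ξ₂:ℝ) + (ξ₃:ℝ) := by push_cast; ring
  have castC : ((ξ₃+ξ₁ : ℤ):ℝ) = (ξ₃:ℝ) + (ξ₁:ℝ) := by push_cast; ring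
  have castS : ((ξ₁+ξ₂+ξ₃ : ℤ):ℝ) = (ξ₁:ℝ) + (ξ₂:ℝ) + (ξ₃:ℝ) := by push_cast; ring
  rw [castA] at hA1 ⊢
  rw [castB] at hB1 ⊢
  rw [castC] at hC1 ⊢
  rw [castS]
  set x1 : ℝ := (ξ₁ : ℝ) with hx1
  set x2 : ℝ := (ξ₂ : ℝ) with hx2
  set x3 : ℝ := (ξ₃ : ℝ) with hx3
  set A : ℝ := |x1 + x2| with hA
  set B : ℝ := |x2 + x3| with hB
  set Cc : ℝ := |x3 + x1| with hCc
  set t : ℝ := |x3| with hT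
  set N : ℝ := max A (max B Cc) with hN
  have hAN : A ≤ N := le_max_left _ _
  have hBN : B ≤ N := le_trans (le_max_left _ _) (le_max_right _ _)
  have hCN : Cc ≤ N := le_trans (le_max_right _ _) (le_max_right _ _)
  have hN1 : (1:ℝ) ≤ N := le_trans hA1 hAN
  have hN0 : (0:ℝ) < 3 * N := by linarith
  have h3N1 : (1:ℝ) ≤ 3 * N := by linarith
  -- size bounds for the four frequencies
  have habs1 : 1 + |x1| ≤ 3 * N := by
    have h : |x1| * 2 = |(x1+x2) - (x2+x3) + (x3+x1)| := by
      rw [show (x1+x2) - (x2+x3) + (x3+x1) = x1 * 2 by ring, abs_mul]; norm_num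
    have h2 : |(x1+x2) - (x2+x3) + (x3+x1)| ≤ A + B + Cc :=
      le_trans (abs_add_le _ _) (by gcongr; exact abs_sub _ _)
    linarith [abs_nonneg x1, hAN, hBN, hCN, hN1]
  have habs2 : 1 + |x2| ≤ 3 * N := by
    have h : |x2| * 2 = |(x1+x2) + (x2+x3) - (x3+x1)| := by
      rw [show (x1+x2) + (x2+x3) - (x3+x1) = x2 * 2 by ring, abs_mul]; norm_num
    have h2 : |(x1+x2) + (x2+x3) - (x3+x1)| ≤ A + B + Cc :=
      le_trans (abs_sub _ _) (by gcongr; exact abs_add_le _ _)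
    linarith [abs_nonneg x2, hAN, hBN, hCN, hN1]
  have habs3 : 1 + |x3| ≤ 3 * N := by
    have h : |x3| * 2 = |(x2+x3) + (x3+x1) - (x1+x2)| := by
      rw [show (x2+x3) + (x3+x1) - (x1+x2) = x3 * 2 by ring, abs_mul]; norm_num
    have h2 : |(x2+x3) + (x3+x1) - (x1+x2)| ≤ B + Cc + A :=
      le_trans (abs_sub _ _) (by gcongr; exact abs_add_le _ _)
    linarith [abs_nonneg x3, hAN, hBN, hCN, hN1]
  have habsS : 1 + |x1 + x2 + x3| ≤ 3 * N := by
    have h : |x1+x2+x3| * 2 = |(x1+x2) + (x2+x3) + (x3+x1)| := by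
      rw [show (x1+x2) + (x2+x3) + (x3+x1) = (x1+x2+x3) * 2 by ring, abs_mul]; norm_num
    have h2 : |(x1+x2) + (x2+x3) + (x3+x1)| ≤ A + B + Cc :=
      le_trans (abs_add_le _ _) (by gcongr; exact abs_add_le _ _)
    linarith [abs_nonneg (x1+x2+x3), hAN, hBN, hCN, hN1]
  have hPabc : N ≤ A * B * Cc := by
    have hA0 : (0:ℝ) ≤ A := by linarith
    have hB0 : (0:ℝ) ≤ B := by linarith
    have hC0 : (0:ℝ) ≤ Cc := by linarith
    have h1 : A ≤ A * B * Cc :=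
      le_trans (le_mul_of_one_le_right hA0 hB1) (le_mul_of_one_le_right (by positivity) hC1)
    have hAC1 : (1:ℝ) ≤ A * Cc := by
      have := mul_le_mul hA1 hC1 (by norm_num) (by linarith only [hA1])
      linarith only [this]
    have hAB1 : (1:ℝ) ≤ A * B := by
      have := mul_le_mul hA1 hB1 (by norm_num) (by linarith only [hA1])
      linarith only [this]
    have h2 : B ≤ A * B * Cc := by
      have hp : (0:ℝ) ≤ B * (A * Cc - 1) := mul_nonneg hB0 (by linarith only [hAC1])
      nlinarith [hp]
    have h3' : Cc ≤ A * B * Cc := by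
      have hp : (0:ℝ) ≤ Cc * (A * B - 1) := mul_nonneg hC0 (by linarith only [hAB1])
      nlinarith [hp]
    exact max_le h1 (max_le h2 h3')
  have hABC1 : (1:ℝ) ≤ A * B * Cc := le_trans hN1 hPabc
  have hABC0 : (0:ℝ) ≤ A * B * Cc := by linarith
  have ht0 : (0:ℝ) < t := by rw [hT]; linarith
  have hP0 : (0:ℝ) ≤ (A * B * Cc) ^ (1/2 - δ) := Real.rpow_nonneg hABC0 _
  have hfac1 : (0:ℝ) ≤ 1 + |x1| := by positivity
  have hfac2 : (0:ℝ) ≤ 1 + |x2| := by positivity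
  have hfac3 : (0:ℝ) ≤ 1 + |x3| := by positivity
  have hfacS : (0:ℝ) ≤ 1 + |x1+x2+x3| := by positivity
  by_cases hcase : N ≤ 100 * t
  · -- Case I : ξ₃ comparable to N
    have step1 : (1 + |x1|) ^ (s+δ) * (1 + |x2|) ^ (s+δ) * (1 + |x3|) ^ (s+δ) *
        (1 + |x1+x2+x3|) ^ (1/2 - s) ≤ (3*N) ^ ((s+δ)+(s+δ)+(s+δ)+(1/2-s)) := by
      rw [Real.rpow_add hN0, Real.rpow_add hN0, Real.rpow_add hN0]
      gcongr
    have step2 : (3*N) ^ ((s+δ)+(s+δ)+(s+δ)+(1/2-s)) ≤ (3*N) ^ ((1:ℝ)+(1/2-δ)) :=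
      Real.rpow_le_rpow_of_exponent_le h3N1 (by linarith only [hδ, hs])
    have step3 : (3*N) ^ ((1:ℝ)+(1/2-δ)) = (3*N) * (3*N) ^ (1/2-δ) := by
      rw [Real.rpow_add hN0, Real.rpow_one]
    have step4 : (3*N) ^ ((1:ℝ)+(1/2-δ)) ≤ 300 * t * (3 * (A*B*Cc) ^ (1/2-δ)) := by
      rw [step3]
      have e1 : (3*N : ℝ) ≤ 300 * t := by linarith
      have e2 : (3*N) ^ (1/2-δ) ≤ 3 * (A*B*Cc) ^ (1/2-δ) := by
        have emul : (3*N) ^ (1/2-δ) = 3 ^ ((1:ℝ)/2-δ) * N ^ ((1:ℝ)/2-δ) :=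
          Real.mul_rpow (by norm_num) (by linarith)
        rw [emul]
        have e3 : (3:ℝ) ^ ((1:ℝ)/2-δ) ≤ 3 := by
          calc (3:ℝ) ^ ((1:ℝ)/2-δ) ≤ 3 ^ (1:ℝ) :=
            Real.rpow_le_rpow_of_exponent_le (by norm_num) (by linarith)
          _ = 3 := Real.rpow_one 3
        have e4 : N ^ ((1:ℝ)/2-δ) ≤ (A*B*Cc) ^ ((1:ℝ)/2-δ) :=
          Real.rpow_le_rpow (by linarith) hPabc (by linarith)
        have e5 : (0:ℝ) ≤ N ^ ((1:ℝ)/2-δ) := Real.rpow_nonneg (by linarith) _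
        exact mul_le_mul e3 e4 e5 (by norm_num)
      have h2 : (0:ℝ) ≤ (3*N) ^ (1/2-δ) := Real.rpow_nonneg (by linarith) _
      exact mul_le_mul e1 e2 h2 (by linarith)
    calc (1 + |x1|) ^ (s+δ) * (1 + |x2|) ^ (s+δ) * (1 + |x3|) ^ (s+δ) *
        (1 + |x1+x2+x3|) ^ (1/2 - s) ≤ 300 * t * (3 * (A*B*Cc) ^ (1/2-δ)) :=
          le_trans step1 (le_trans step2 step4)
      _ ≤ 10000 * t * (A*B*Cc) ^ (1/2-δ) := by
          have hTP : (0:ℝ) ≤ t * ((A*B*Cc) ^ (1/2-δ)) := mul_nonneg (le_of_lt ht0) hP0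
          linarith only [hTP]
  · -- Case II : ξ₃ much smaller than N ; then the product A*B*Cc ≥ N²/4
    push_neg at hcase
    have hN100 : (100:ℝ) ≤ N := by linarith
    have hqa : A ≤ B + Cc + 2*t := by
      have he : x1 + x2 = (x2+x3) + (x3+x1) - 2*x3 := by ring
      calc A = |(x2+x3) + (x3+x1) - 2*x3| := by rw [hA, he]
        _ ≤ |(x2+x3) + (x3+x1)| + |2*x3| := abs_sub _ _
        _ ≤ (B + Cc) + 2*t := by
            have h1 := abs_add_le (x2+x3) (x3+x1)
            have h2 : |2*x3| = 2*t := by rw [abs_mul]; norm_num; rfl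
            rw [h2]; linarith
    have hqb : B ≤ A + Cc + 2*t := by
      have he : x2 + x3 = (x1+x2) - (x3+x1) + 2*x3 := by ring
      calc B = |(x1+x2) - (x3+x1) + 2*x3| := by rw [hB, he]
        _ ≤ |(x1+x2) - (x3+x1)| + |2*x3| := abs_add_le _ _
        _ ≤ (A + Cc) + 2*t := by
            have h1 := abs_sub (x1+x2) (x3+x1)
            have h2 : |2*x3| = 2*t := by rw [abs_mul]; norm_num; rfl
            rw [h2]; linarith
    have hqc : Cc ≤ A + B + 2*t := by
      have he : x3 + x1 = (x1+x2) - (x2+x3) + 2*x3 := by ring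
      calc Cc = |(x1+x2) - (x2+x3) + 2*x3| := by rw [hCc, he]
        _ ≤ |(x1+x2) - (x2+x3)| + |2*x3| := abs_add_le _ _
        _ ≤ (A + B) + 2*t := by
            have h1 := abs_sub (x1+x2) (x2+x3)
            have h2 : |2*x3| = 2*t := by rw [abs_mul]; norm_num; rfl
            rw [h2]; linarith
    have hP : N * N ≤ 4 * (A * B * Cc) := by
      have hNor : N = A ∨ N = B ∨ N = Cc := by
        rcases max_choice A (max B Cc) with h | h
        · exact Or.inl (hN.trans h)
        · rcases max_choice B Cc with h' | h'
          · exact Or.inr (Or.inl ((hN.trans h).trans h'))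
          · exact Or.inr (Or.inr ((hN.trans h).trans h'))
      rcases hNor with h | h | h
      · have hBC : N/4 ≤ B * Cc := by
          have hp : (0:ℝ) ≤ (B-1)*(Cc-1) :=
            mul_nonneg (by linarith only [hB1]) (by linarith only [hC1])
          linarith only [hp, hqa, hcase, hN100, h, ht1]
        have hg : N * (N/4) ≤ A * (B * Cc) := by
          rw [← h]; exact mul_le_mul_of_nonneg_left hBC (by linarith only [hN100])
        linarith only [hg]
      · have hBC : N/4 ≤ A * Cc := by
          have hp : (0:ℝ) ≤ (A-1)*(Cc-1) :=
            mul_nonneg (by linarith only [hA1]) (by linarith only [hC1])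
          linarith only [hp, hqb, hcase, hN100, h, ht1]
        have hg : N * (N/4) ≤ B * (A * Cc) := by
          rw [← h]; exact mul_le_mul_of_nonneg_left hBC (by linarith only [hN100])
        linarith only [hg]
      · have hBC : N/4 ≤ A * B := by
          have hp : (0:ℝ) ≤ (A-1)*(B-1) :=
            mul_nonneg (by linarith only [hA1]) (by linarith only [hB1])
          linarith only [hp, hqc, hcase, hN100, h, ht1]
        have hg : N * (N/4) ≤ Cc * (A * B) := by
          rw [← h]; exact mul_le_mul_of_nonneg_left hBC (by linarith only [hN100])
        linarith only [hg]
    have e3 : (1 + |x3|) ^ (s+δ) ≤ 2*t := by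
      calc (1 + |x3|) ^ (s+δ) ≤ (2*t) ^ (1:ℝ) := by
            apply rpow_le_rpow'' _ _ hfac3 _ (by linarith) hα0 hα1
            rw [hT]; linarith
        _ = 2*t := Real.rpow_one _
    have step1 : (1 + |x1|) ^ (s+δ) * (1 + |x2|) ^ (s+δ) * (1 + |x3|) ^ (s+δ) *
        (1 + |x1+x2+x3|) ^ (1/2 - s)
        ≤ (3*N) ^ (s+δ) * (3*N) ^ (s+δ) * (2*t) * (3*N) ^ (1/2-s) := by
      have p1 := Real.rpow_le_rpow hfac1 habs1 hα0
      have p2 := Real.rpow_le_rpow hfac2 habs2 hα0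
      have pS := Real.rpow_le_rpow hfacS habsS hβ0
      have b0 : (0:ℝ) ≤ (3*N) ^ (s+δ) := Real.rpow_nonneg (le_of_lt hN0) _
      have lvl1 := mul_le_mul p1 p2 (Real.rpow_nonneg hfac2 _) b0
      have lvl2 := mul_le_mul lvl1 e3 (Real.rpow_nonneg hfac3 _) (mul_nonneg b0 b0)
      exact mul_le_mul lvl2 pS (Real.rpow_nonneg hfacS _)
        (mul_nonneg (mul_nonneg b0 b0) (by linarith only [ht0]))
    have step2 : (3*N) ^ (s+δ) * (3*N) ^ (s+δ) * (2*t) * (3*N) ^ (1/2-s)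
        = (2*t) * (3*N) ^ ((s+δ)+((s+δ)+(1/2-s))) := by
      rw [Real.rpow_add hN0 (s+δ) ((s+δ)+(1/2-s)), Real.rpow_add hN0 (s+δ) (1/2-s)]; ring
    have step3 : (3*N) ^ ((s+δ)+((s+δ)+(1/2-s))) ≤ (3*N) ^ ((1/2-δ)+(1/2-δ)) :=
      Real.rpow_le_rpow_of_exponent_le h3N1 (by linarith only [hδ, hs])
    have step4 : (3*N) ^ ((1/2-δ)+(1/2-δ)) ≤ 36 * (A*B*Cc) ^ (1/2-δ) := by
      have e1 : (3*N) ^ ((1/2-δ)+(1/2-δ)) = ((3*N)*(3*N)) ^ ((1:ℝ)/2-δ) := by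
        rw [Real.mul_rpow (le_of_lt hN0) (le_of_lt hN0), ← Real.rpow_add hN0]
      have e2 : ((3*N)*(3*N) : ℝ) ≤ 36 * (A*B*Cc) := by linarith only [hP]
      have e4 : ((3*N)*(3*N)) ^ ((1:ℝ)/2-δ) ≤ (36 * (A*B*Cc)) ^ ((1:ℝ)/2-δ) :=
        Real.rpow_le_rpow (by positivity) e2 (by linarith only [hu0])
      have e5 : (36 * (A*B*Cc)) ^ ((1:ℝ)/2-δ) = 36 ^ ((1:ℝ)/2-δ) * (A*B*Cc) ^ ((1:ℝ)/2-δ) :=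
        Real.mul_rpow (by norm_num) hABC0
      have e6 : (36:ℝ) ^ ((1:ℝ)/2-δ) ≤ 36 := by
        calc (36:ℝ) ^ ((1:ℝ)/2-δ) ≤ 36 ^ (1:ℝ) :=
          Real.rpow_le_rpow_of_exponent_le (by norm_num) (by linarith only [hu1])
        _ = 36 := Real.rpow_one 36
      have e7 : (0:ℝ) ≤ (A*B*Cc) ^ ((1:ℝ)/2-δ) := Real.rpow_nonneg hABC0 _
      calc (3*N) ^ ((1/2-δ)+(1/2-δ)) = ((3*N)*(3*N)) ^ ((1:ℝ)/2-δ) := e1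
        _ ≤ (36 * (A*B*Cc)) ^ ((1:ℝ)/2-δ) := e4
        _ = 36 ^ ((1:ℝ)/2-δ) * (A*B*Cc) ^ ((1:ℝ)/2-δ) := e5
        _ ≤ 36 * (A*B*Cc) ^ ((1:ℝ)/2-δ) := mul_le_mul_of_nonneg_right e6 e7
    calc (1 + |x1|) ^ (s+δ) * (1 + |x2|) ^ (s+δ) * (1 + |x3|) ^ (s+δ) *
        (1 + |x1+x2+x3|) ^ (1/2 - s)
        ≤ (2*t) * (3*N) ^ ((s+δ)+((s+δ)+(1/2-s))) := by rw [← step2]; exact step1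
      _ ≤ (2*t) * (36 * (A*B*Cc) ^ (1/2-δ)) :=
          mul_le_mul_of_nonneg_left (le_trans step3 step4) (by linarith only [ht0])
      _ ≤ 10000 * t * (A*B*Cc) ^ (1/2-δ) := by
          have hTP : (0:ℝ) ≤ t * ((A*B*Cc) ^ (1/2-δ)) := mul_nonneg (le_of_lt ht0) hP0
          linarith only [hTP]
end

section
/- Let 0 ≤ s ≤ 1/2, T > 0, H ≥ 0, let a : ℤ → ℂ be a bounded sequence, and let b : [0, T] → (ℤ → ℂ) be measurable with Σ_{ξ≠0} ⟨ξ⟩² |b_ξ(t)|² ≤ H² for every t ∈ [0, T]. Then ( ∫₀^T Σ_{ξ∈ℤ, ξ≠0} (⟨ξ⟩^{4s+1} / ξ²) |a_ξ|² |b_ξ(t)|⁴ dt )^{1/2} ≤ 2 T^{1/2} ‖a‖_{ℓ^∞} H². -/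
open MeasureTheory

lemma aux_rpow (s : ℝ) (hs0 : 0 ≤ s) (hs : s ≤ 1/2) (ξ : ℤ) (hξ : ξ ≠ 0) :
    (1 + |(ξ : ℝ)|) ^ (4 * s + 1) ≤ 2 * (ξ : ℝ) ^ 2 * (1 + |(ξ : ℝ)|) ^ 2 := by
  have h1 : (1:ℝ) ≤ |(ξ : ℝ)| := by
    rw [← Int.cast_abs]
    exact_mod_cast Int.one_le_abs hξ
  have hb : (1:ℝ) ≤ 1 + |(ξ : ℝ)| := by linarith [abs_nonneg (ξ : ℝ)]
  have h2 : (1 + |(ξ : ℝ)|) ^ (4 * s + 1) ≤ (1 + |(ξ : ℝ)|) ^ ((3:ℕ) : ℝ) :=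
    Real.rpow_le_rpow_of_exponent_le hb (by push_cast; linarith)
  rw [Real.rpow_natCast] at h2
  have h3 : (1 + |(ξ : ℝ)|) ^ (3:ℕ) ≤ 2 * (ξ : ℝ) ^ 2 * (1 + |(ξ : ℝ)|) ^ 2 := by
    have hsq : |(ξ : ℝ)| ^ 2 = (ξ : ℝ) ^ 2 := sq_abs _
    nlinarith [sq_nonneg (|(ξ : ℝ)| - 1), sq_nonneg (1 + |(ξ : ℝ)|)]
  linarith

/-- Fourier-coefficient form of the second estimate of Lemma 3.3:
`(∫₀^T Σ_{ξ≠0} ⟨ξ⟩^{4s+1}/ξ² |a_ξ|² |b_ξ(t)|⁴ dt)^{1/2} ≤ 2 T^{1/2} ‖a‖_{ℓ∞} H²`,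
when `Σ_{ξ≠0} ⟨ξ⟩² |b_ξ(t)|² ≤ H²` for every `t ∈ [0,T]`. -/
theorem stmt16 (s T H : ℝ) (hs0 : 0 ≤ s) (hs : s ≤ 1/2) (hT : 0 < T) (hH : 0 ≤ H)
    (a : ℤ → ℂ) (ha : BddAbove (Set.range fun ξ : ℤ => ‖a ξ‖))
    (b : ℝ → ℤ → ℂ) (hb : ∀ ξ : ℤ, Measurable (fun t => b t ξ))
    (hbound : ∀ t ∈ Set.Icc (0:ℝ) T,
      (∑' ξ : ℤ, if ξ ≠ 0 then
          ENNReal.ofReal ((1 + |(ξ : ℝ)|) ^ 2 * ‖b t ξ‖ ^ 2) else 0)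
        ≤ ENNReal.ofReal (H ^ 2)) :
    (∫⁻ t in Set.Icc (0:ℝ) T, ∑' ξ : ℤ, if ξ ≠ 0 then
        ENNReal.ofReal ((1 + |(ξ : ℝ)|) ^ (4 * s + 1) / (ξ : ℝ) ^ 2 * ‖a ξ‖ ^ 2 * ‖b t ξ‖ ^ 4)
      else 0) ^ ((1:ℝ)/2)
    ≤ ENNReal.ofReal (2 * T ^ ((1:ℝ)/2) * (⨆ ξ : ℤ, ‖a ξ‖) * H ^ 2) := by
  set M : ℝ := ⨆ ξ : ℤ, ‖a ξ‖ with hM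
  have hMle : ∀ ξ : ℤ, ‖a ξ‖ ≤ M := fun ξ => le_ciSup ha ξ
  have hM0 : 0 ≤ M := le_trans (norm_nonneg (a 0)) (hMle 0)
  -- pointwise-in-t bound on the sum
  have key : ∀ t ∈ Set.Icc (0:ℝ) T,
      (∑' ξ : ℤ, if ξ ≠ 0 then
        ENNReal.ofReal ((1 + |(ξ : ℝ)|) ^ (4 * s + 1) / (ξ : ℝ) ^ 2 * ‖a ξ‖ ^ 2 * ‖b t ξ‖ ^ 4)
      else 0) ≤ ENNReal.ofReal (2 * M ^ 2 * H ^ 2 * H ^ 2) := by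
    intro t ht
    have hsum := hbound t ht
    have step : (∑' ξ : ℤ, if ξ ≠ 0 then
        ENNReal.ofReal ((1 + |(ξ : ℝ)|) ^ (4 * s + 1) / (ξ : ℝ) ^ 2 * ‖a ξ‖ ^ 2 * ‖b t ξ‖ ^ 4)
      else 0) ≤ ∑' ξ : ℤ, ENNReal.ofReal (2 * M ^ 2 * H ^ 2) *
        (if ξ ≠ 0 then ENNReal.ofReal ((1 + |(ξ : ℝ)|) ^ 2 * ‖b t ξ‖ ^ 2) else 0) := by
      refine ENNReal.tsum_le_tsum fun ξ => ?_
      by_cases hξ : ξ = 0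
      · simp [hξ]
      · simp only [hξ, if_neg, ne_eq, not_false_eq_true, if_pos]
        rw [← ENNReal.ofReal_mul (by positivity)]
        apply ENNReal.ofReal_le_ofReal
        -- real inequality
        have hb1 : (1:ℝ) ≤ |(ξ : ℝ)| := by
          rw [← Int.cast_abs]; exact_mod_cast Int.one_le_abs hξ
        have hbb : (1:ℝ) ≤ 1 + |(ξ : ℝ)| := by linarith
        have hCH : (1 + |(ξ : ℝ)|) ^ 2 * ‖b t ξ‖ ^ 2 ≤ H ^ 2 := by
          have h1 : (if ξ ≠ 0 then
              ENNReal.ofReal ((1 + |(ξ : ℝ)|) ^ 2 * ‖b t ξ‖ ^ 2) else 0)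
              ≤ ENNReal.ofReal (H ^ 2) :=
            le_trans (ENNReal.le_tsum ξ) hsum
          rw [if_pos hξ] at h1
          exact (ENNReal.ofReal_le_ofReal_iff (by positivity)).mp h1
        have hb2 : ‖b t ξ‖ ^ 2 ≤ (1 + |(ξ : ℝ)|) ^ 2 * ‖b t ξ‖ ^ 2 := by
          have hp : (1:ℝ) ≤ (1 + |(ξ : ℝ)|) ^ 2 := one_le_pow₀ hbb
          nlinarith [mul_nonneg (sub_nonneg.mpr hp) (sq_nonneg (‖b t ξ‖))]
        have hdiv : (1 + |(ξ : ℝ)|) ^ (4 * s + 1) / (ξ : ℝ) ^ 2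
            ≤ 2 * (1 + |(ξ : ℝ)|) ^ 2 := by
          rw [div_le_iff₀ (by positivity : (0:ℝ) < (ξ:ℝ)^2)]
          calc (1 + |(ξ : ℝ)|) ^ (4 * s + 1) ≤ 2 * (ξ : ℝ) ^ 2 * (1 + |(ξ : ℝ)|) ^ 2 :=
                aux_rpow s hs0 hs ξ hξ
            _ = 2 * (1 + |(ξ : ℝ)|) ^ 2 * (ξ : ℝ) ^ 2 := by ring
        have haM : ‖a ξ‖ ^ 2 ≤ M ^ 2 := by
          nlinarith [hMle ξ, norm_nonneg (a ξ)]
        have hnn : (0:ℝ) ≤ (1 + |(ξ : ℝ)|) ^ (4 * s + 1) / (ξ : ℝ) ^ 2 := by positivity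
        calc (1 + |(ξ : ℝ)|) ^ (4 * s + 1) / (ξ : ℝ) ^ 2 * ‖a ξ‖ ^ 2 * ‖b t ξ‖ ^ 4
            ≤ 2 * (1 + |(ξ : ℝ)|) ^ 2 * M ^ 2 * ‖b t ξ‖ ^ 4 := by
              have h4 : (0:ℝ) ≤ ‖b t ξ‖ ^ 4 := by positivity
              apply mul_le_mul_of_nonneg_right _ h4
              apply mul_le_mul hdiv haM (by positivity) (by positivity)
          _ = 2 * M ^ 2 * ‖b t ξ‖ ^ 2 * ((1 + |(ξ : ℝ)|) ^ 2 * ‖b t ξ‖ ^ 2) := by ring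
          _ ≤ 2 * M ^ 2 * H ^ 2 * ((1 + |(ξ : ℝ)|) ^ 2 * ‖b t ξ‖ ^ 2) := by
              have h5 : ‖b t ξ‖ ^ 2 ≤ H ^ 2 := le_trans hb2 hCH
              have hC : (0:ℝ) ≤ 2 * M ^ 2 * ((1 + |(ξ : ℝ)|) ^ 2 * ‖b t ξ‖ ^ 2) := by
                positivity
              nlinarith [mul_nonneg (sub_nonneg.mpr h5) hC]
    calc _ ≤ _ := step
      _ = ENNReal.ofReal (2 * M ^ 2 * H ^ 2) *
          ∑' ξ : ℤ, (if ξ ≠ 0 then ENNReal.ofReal ((1 + |(ξ : ℝ)|) ^ 2 * ‖b t ξ‖ ^ 2) else 0) :=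
          ENNReal.tsum_mul_left
      _ ≤ ENNReal.ofReal (2 * M ^ 2 * H ^ 2) * ENNReal.ofReal (H ^ 2) :=
          mul_le_mul_right hsum _
      _ = ENNReal.ofReal (2 * M ^ 2 * H ^ 2 * H ^ 2) := by
          rw [← ENNReal.ofReal_mul (by positivity)]
  -- integrate
  have hint : (∫⁻ t in Set.Icc (0:ℝ) T, ∑' ξ : ℤ, if ξ ≠ 0 then
        ENNReal.ofReal ((1 + |(ξ : ℝ)|) ^ (4 * s + 1) / (ξ : ℝ) ^ 2 * ‖a ξ‖ ^ 2 * ‖b t ξ‖ ^ 4)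
      else 0) ≤ ENNReal.ofReal (2 * M ^ 2 * H ^ 2 * H ^ 2 * T) := by
    calc _ ≤ ∫⁻ _ in Set.Icc (0:ℝ) T, ENNReal.ofReal (2 * M ^ 2 * H ^ 2 * H ^ 2) :=
          setLIntegral_mono measurable_const key
      _ = ENNReal.ofReal (2 * M ^ 2 * H ^ 2 * H ^ 2) * volume (Set.Icc (0:ℝ) T) := by
          rw [setLIntegral_const]
      _ = ENNReal.ofReal (2 * M ^ 2 * H ^ 2 * H ^ 2 * T) := by
          rw [Real.volume_Icc, ← ENNReal.ofReal_mul (by positivity)]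
          norm_num
  calc _ ≤ (ENNReal.ofReal (2 * M ^ 2 * H ^ 2 * H ^ 2 * T)) ^ ((1:ℝ)/2) :=
        ENNReal.rpow_le_rpow hint (by norm_num)
    _ = ENNReal.ofReal ((2 * M ^ 2 * H ^ 2 * H ^ 2 * T) ^ ((1:ℝ)/2)) := by
        rw [← ENNReal.ofReal_rpow_of_nonneg (by positivity) (by norm_num)]
    _ ≤ ENNReal.ofReal (2 * T ^ ((1:ℝ)/2) * M * H ^ 2) := by
        apply ENNReal.ofReal_le_ofReal
        set R : ℝ := 2 * T ^ ((1:ℝ)/2) * M * H ^ 2 with hR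
        have hR0 : 0 ≤ R := by positivity
        have hTsq : (T ^ ((1:ℝ)/2)) ^ 2 = T := by
          rw [← Real.rpow_natCast (T ^ ((1:ℝ)/2)) 2, ← Real.rpow_mul hT.le]
          norm_num
        have hRsq : R ^ 2 = 4 * T * M ^ 2 * H ^ 4 := by
          rw [hR]; ring_nf; rw [hTsq]; ring
        have h1 : 2 * M ^ 2 * H ^ 2 * H ^ 2 * T ≤ R ^ 2 := by
          rw [hRsq]; nlinarith [hM0, hT.le, sq_nonneg H, sq_nonneg M]
        calc (2 * M ^ 2 * H ^ 2 * H ^ 2 * T) ^ ((1:ℝ)/2) ≤ (R ^ 2) ^ ((1:ℝ)/2) :=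
              Real.rpow_le_rpow (by positivity) h1 (by norm_num)
          _ = R := by
              rw [← Real.sqrt_eq_rpow, Real.sqrt_sq hR0]
end

section
/- Let η : ℝ → ℂ be a Schwartz function and let −1/2 < b′ ≤ b < 1/2. There exists a constant C = C(η, b, b′) such that for every T ∈ (0, 1) and every measurable g : ℝ → ℂ with ∫_ℝ (1 + |τ|)^{2b} |g(τ)|² dτ < ∞, ( ∫_ℝ (1 + |τ|)^{2b′} | ∫_ℝ T η̂(T(τ − σ)) g(σ) dσ |² dτ )^{1/2} ≤ C T^{b − b′} ( ∫_ℝ (1 + |τ|)^{2b} |g(τ)|² dτ )^{1/2}, where η̂(τ) := ∫_ℝ η(t) e^{−itτ} dt, so that τ ↦ T η̂(Tτ) is the Fourier transform of t ↦ η(t/T). -/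
open MeasureTheory
open scoped ENNReal

noncomputable section
namespace Stmt17Aux

lemma lint_scale (f : ℝ → ℝ≥0∞) (hf : Measurable f) {c : ℝ} (hc : 0 < c) :
    ∫⁻ x : ℝ, f (c * x) = ENNReal.ofReal c⁻¹ * ∫⁻ y, f y := by
  rw [← lintegral_map hf (measurable_const_mul c), Real.map_volume_mul_left hc.ne',
    lintegral_smul_measure, abs_of_pos (inv_pos.mpr hc), smul_eq_mul]

lemma lint_shift (f : ℝ → ℝ≥0∞) (hf : Measurable f) (τ : ℝ) :
    ∫⁻ x : ℝ, f (τ - x) = ∫⁻ y, f y := by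
  have h : MeasurePreserving (fun x : ℝ => τ - x) volume volume :=
    ⟨measurable_const.sub measurable_id, Measure.map_sub_left_eq_self volume τ⟩
  exact h.lintegral_comp hf

def Cint : ℝ≥0∞ := ∫⁻ v : ℝ, ENNReal.ofReal ((1 + |v|) ^ (-(2:ℝ)))

lemma Cint_lt_top : Cint < ∞ := by
  have := finite_integral_one_add_norm (E := ℝ) (μ := volume) (r := 2) (by norm_num)
  simpa [Cint, Real.norm_eq_abs] using this

lemma lint_kernel2 {T : ℝ} (hT : 0 < T) (τ : ℝ) :
    ∫⁻ σ : ℝ, ENNReal.ofReal (T * ((1 + T * |τ - σ|) ^ (2:ℝ))⁻¹) = Cint := by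
  have hg : Measurable fun u : ℝ => ENNReal.ofReal (T * ((1 + T * |u|) ^ (2:ℝ))⁻¹) := by
    fun_prop
  rw [lint_shift _ hg τ]
  have hf : Measurable fun v : ℝ => ENNReal.ofReal (T * ((1 + |v|) ^ (2:ℝ))⁻¹) := by fun_prop
  have hcomp : ∀ u : ℝ, ENNReal.ofReal (T * ((1 + T * |u|) ^ (2:ℝ))⁻¹)
      = ENNReal.ofReal (T * ((1 + |T * u|) ^ (2:ℝ))⁻¹) := by
    intro u; rw [abs_mul, abs_of_pos hT]
  calc ∫⁻ u : ℝ, ENNReal.ofReal (T * ((1 + T * |u|) ^ (2:ℝ))⁻¹)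
      = ∫⁻ u : ℝ, ENNReal.ofReal (T * ((1 + |T * u|) ^ (2:ℝ))⁻¹) := by
        simp_rw [hcomp]
    _ = ENNReal.ofReal T⁻¹ * ∫⁻ v : ℝ, ENNReal.ofReal (T * ((1 + |v|) ^ (2:ℝ))⁻¹) :=
        lint_scale _ hf hT
    _ = Cint := by
        have : ∀ v : ℝ, ENNReal.ofReal (T * ((1 + |v|) ^ (2:ℝ))⁻¹)
            = ENNReal.ofReal T * ENNReal.ofReal ((1 + |v|) ^ (-(2:ℝ))) := by
          intro v
          rw [← ENNReal.ofReal_mul hT.le, Real.rpow_neg (by positivity)]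
        simp_rw [this]
        rw [lintegral_const_mul' _ _ ENNReal.ofReal_ne_top, ← mul_assoc,
          ← ENNReal.ofReal_mul (by positivity), inv_mul_cancel₀ hT.ne', ENNReal.ofReal_one,
          one_mul, Cint]

/-- finiteness of `∫_{|v|≤1} |v|^{-a}` -/
lemma smallball_const {a : ℝ} (ha1 : a < 1) :
    (∫⁻ v in Set.Icc (-1:ℝ) 1, ENNReal.ofReal (|v| ^ (-a))) < ∞ := by
  have hIoc : (∫⁻ v in Set.Ioc (0:ℝ) 1, ENNReal.ofReal (|v| ^ (-a))) < ∞ := by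
    have hint : IntervalIntegrable (fun x : ℝ => x ^ (-a)) volume 0 1 :=
      intervalIntegral.intervalIntegrable_rpow' (by linarith)
    have hio : IntegrableOn (fun x : ℝ => x ^ (-a)) (Set.Ioc 0 1) volume :=
      (intervalIntegrable_iff_integrableOn_Ioc_of_le zero_le_one).mp hint
    have := hio.2
    refine lt_of_le_of_lt ?_ this
    refine setLIntegral_mono_ae (by fun_prop) ?_
    filter_upwards [] with v hv
    rw [Real.enorm_eq_ofReal_abs, abs_of_pos hv.1]
    exact ENNReal.ofReal_le_ofReal (le_abs_self _)
  have hsplit : Set.Icc (-1:ℝ) 1 = Set.Icc (-1:ℝ) 0 ∪ Set.Ioc (0:ℝ) 1 := by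
    ext x; simp only [Set.mem_Icc, Set.mem_union, Set.mem_Ioc]
    constructor
    · rintro ⟨h1, h2⟩; rcases le_or_gt x 0 with h | h
      · exact Or.inl ⟨h1, h⟩
      · exact Or.inr ⟨h, h2⟩
    · rintro (⟨h1, h2⟩ | ⟨h1, h2⟩) <;> constructor <;> linarith
  rw [hsplit, lintegral_union measurableSet_Ioc (by
    rw [Set.disjoint_iff]; rintro x ⟨⟨_, h2⟩, ⟨h3, _⟩⟩; linarith)]
  have hneg : (∫⁻ v in Set.Icc (-1:ℝ) 0, ENNReal.ofReal (|v| ^ (-a)))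
      = ∫⁻ v in Set.Icc (0:ℝ) 1, ENNReal.ofReal (|v| ^ (-a)) := by
    have hmp : MeasurePreserving (fun x : ℝ => -x) volume volume :=
      Measure.measurePreserving_neg volume
    have hpre : (fun x : ℝ => -x) ⁻¹' (Set.Icc (0:ℝ) 1) = Set.Icc (-1:ℝ) 0 := by
      ext x; simp only [Set.mem_preimage, Set.mem_Icc]; constructor <;> intro h <;>
        constructor <;> linarith [h.1, h.2]
    have := hmp.setLIntegral_comp_preimage (s := Set.Icc (0:ℝ) 1)
      measurableSet_Icc (f := fun v : ℝ => ENNReal.ofReal (|v| ^ (-a))) (by fun_prop)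
    rw [hpre] at this
    rw [← this]
    apply lintegral_congr; intro x; simp
  rw [hneg, Measure.restrict_congr_set Ioc_ae_eq_Icc.symm]
  exact ENNReal.add_lt_top.mpr ⟨hIoc, hIoc⟩


lemma smallball {a : ℝ} (ha0 : 0 ≤ a) (ha1 : a < 1) {T : ℝ} (hT : 0 < T) :
    ∫⁻ σ in Set.Icc (-(1/T)) (1/T), ENNReal.ofReal ((1 + |σ|) ^ (-a))
      ≤ ENNReal.ofReal (T ^ (a-1)) *
        ∫⁻ v in Set.Icc (-1:ℝ) 1, ENNReal.ofReal (|v| ^ (-a)) := by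
  set f : ℝ → ℝ≥0∞ :=
    fun v => (Set.Icc (-1:ℝ) 1).indicator (fun v => ENNReal.ofReal (T^a * |v| ^ (-a))) v with hfdef
  have hf : Measurable f := Measurable.indicator (by fun_prop) measurableSet_Icc
  have h0 : ∀ᵐ σ : ℝ, σ ≠ (0:ℝ) := by
    refine ae_iff.mpr ?_
    simp [Set.setOf_eq_eq_singleton']
  have step2 : ∫⁻ σ in Set.Icc (-(1/T)) (1/T), ENNReal.ofReal ((1 + |σ|) ^ (-a))
      ≤ ∫⁻ σ : ℝ, f (T * σ) := by
    rw [← lintegral_indicator measurableSet_Icc]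
    refine lintegral_mono_ae ?_
    filter_upwards [h0] with σ hσ0
    by_cases hmem : σ ∈ Set.Icc (-(1/T)) (1/T)
    · rw [Set.indicator_of_mem hmem]
      have h1 : T * (1/T) = 1 := mul_one_div_cancel hT.ne'
      have hmem2 : T * σ ∈ Set.Icc (-1:ℝ) 1 := by
        have h2 := hmem.1; have h3 := hmem.2
        constructor <;> nlinarith
      show _ ≤ (Set.Icc (-1:ℝ) 1).indicator (fun v => ENNReal.ofReal (T^a * |v| ^ (-a))) (T * σ)
      rw [show (Set.Icc (-1:ℝ) 1).indicator
            (fun v => ENNReal.ofReal (T^a * |v| ^ (-a))) (T * σ)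
          = ENNReal.ofReal (T^a * |T * σ| ^ (-a)) from Set.indicator_of_mem hmem2 _]
      apply ENNReal.ofReal_le_ofReal
      have hσpos : 0 < |σ| := abs_pos.mpr hσ0
      have hval : T^a * |T * σ| ^ (-a) = |σ| ^ (-a) := by
        rw [abs_mul, abs_of_pos hT, Real.mul_rpow hT.le (abs_nonneg σ), ← mul_assoc,
          ← Real.rpow_add hT, add_neg_cancel, Real.rpow_zero, one_mul]
      rw [hval]
      exact Real.rpow_le_rpow_of_nonpos hσpos (by linarith [abs_nonneg σ])
        (neg_nonpos.mpr ha0)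
    · rw [Set.indicator_of_notMem hmem]; exact zero_le
  refine step2.trans ?_
  rw [lint_scale f hf hT, lintegral_indicator measurableSet_Icc]
  have : ∀ v : ℝ, ENNReal.ofReal (T^a * |v| ^ (-a))
      = ENNReal.ofReal (T^a) * ENNReal.ofReal (|v| ^ (-a)) :=
    fun v => ENNReal.ofReal_mul (Real.rpow_nonneg hT.le a)
  simp_rw [this]
  rw [lintegral_const_mul' _ _ ENNReal.ofReal_ne_top, ← mul_assoc,
    ← ENNReal.ofReal_mul (by positivity)]
  apply mul_le_mul_left
  apply ENNReal.ofReal_le_ofReal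
  rw [Real.rpow_sub hT, Real.rpow_one, div_eq_mul_inv, mul_comm]


lemma rpow_le_one_add {x p : ℝ} (hx : 0 ≤ x) (hp0 : 0 ≤ p) (hp1 : p ≤ 1) : x ^ p ≤ 1 + x := by
  rcases le_or_gt x 1 with h | h
  · exact (Real.rpow_le_one hx h hp0).trans (by linarith)
  · calc x ^ p ≤ x ^ (1:ℝ) := Real.rpow_le_rpow_of_exponent_le h.le hp1
      _ = x := Real.rpow_one x
      _ ≤ 1 + x := by linarith

lemma KB {a δ : ℝ} (hd0 : 0 ≤ δ) (hda : δ ≤ a) (ha1 : a < 1) :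
    ∃ CK : ℝ, 0 < CK ∧ ∀ T : ℝ, 0 < T → T < 1 → ∀ τ : ℝ,
      ∫⁻ σ : ℝ, ENNReal.ofReal (T * ((1 + T * |τ - σ|) ^ (3:ℝ))⁻¹ * (1 + |σ|) ^ (-a))
        ≤ ENNReal.ofReal (CK * (T ^ δ * (1 + |τ|) ^ (δ - a))) := by
  have ha0 : 0 ≤ a := hd0.trans hda
  set CR : ℝ := Cint.toReal + 1 with hCRdef
  have hCR : Cint ≤ ENNReal.ofReal CR :=
    calc Cint = ENNReal.ofReal Cint.toReal := (ENNReal.ofReal_toReal Cint_lt_top.ne).symm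
      _ ≤ ENNReal.ofReal CR := ENNReal.ofReal_le_ofReal (by rw [hCRdef]; linarith)
  have hCR1 : 1 ≤ CR := by
    have := ENNReal.toReal_nonneg (a := Cint); rw [hCRdef]; linarith
  have hCRpos : 0 < CR := by linarith
  set c1 : ℝ≥0∞ := ∫⁻ v in Set.Icc (-1:ℝ) 1, ENNReal.ofReal (|v| ^ (-a)) with hc1def
  set c1R : ℝ := c1.toReal + 1 with hc1Rdef
  have hc1 : c1 ≤ ENNReal.ofReal c1R :=
    calc c1 = ENNReal.ofReal c1.toReal := (ENNReal.ofReal_toReal (smallball_const ha1).ne).symm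
      _ ≤ ENNReal.ofReal c1R := ENNReal.ofReal_le_ofReal (by rw [hc1Rdef]; linarith)
  have hc1pos : 0 < c1R := by
    have := ENNReal.toReal_nonneg (a := c1); rw [hc1Rdef]; linarith
  refine ⟨2 ^ a * CR + 2 * c1R + 2 * CR, by positivity, ?_⟩
  intro T hT hT1 τ
  set R : ℝ := (1 + |τ|) / 2 with hRdef
  have hτ1 : (0:ℝ) < 1 + |τ| := by positivity
  have hR : 0 < R := by positivity
  set A : Set ℝ := Set.Icc (τ - R) (τ + R) with hAdef
  set S : Set ℝ := Set.Icc (-(1/T)) (1/T) with hSdef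
  have hAmeas : MeasurableSet A := measurableSet_Icc
  have hSmeas : MeasurableSet S := measurableSet_Icc
  set F : ℝ → ℝ≥0∞ :=
    fun σ => ENNReal.ofReal (T * ((1 + T * |τ - σ|) ^ (3:ℝ))⁻¹ * (1 + |σ|) ^ (-a)) with hFdef
  set g : ℝ := T ^ δ * (1 + |τ|) ^ (δ - a) with hgdef
  have hgpos : 0 < g := by rw [hgdef]; positivity
  -- elementary facts
  have factA : ∀ σ ∈ A, R ≤ 1 + |σ| := by
    intro σ hσ
    have h1 : |τ - σ| ≤ R := by
      rw [abs_le]; exact ⟨by linarith [hσ.2], by linarith [hσ.1]⟩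
    have h2 : |τ| - |σ| ≤ |τ - σ| := abs_sub_abs_le_abs_sub τ σ
    rw [hRdef]; linarith
  have factB : ∀ σ ∉ A, (1 + T * (1 + |τ|)) / 2 ≤ 1 + T * |τ - σ| := by
    intro σ hσ
    have h1 : R < |τ - σ| := by
      by_contra h
      push_neg at h
      rw [abs_le] at h
      exact hσ ⟨by linarith [h.2], by linarith [h.1]⟩
    nlinarith
  have hbase : ∀ σ : ℝ, (1:ℝ) ≤ 1 + T * |τ - σ| := by
    intro σ; nlinarith [abs_nonneg (τ - σ), hT.le]
  have h2apos : (0:ℝ) < 2 ^ a := Real.rpow_pos_of_pos (by norm_num) a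
  -- the σ-decay bound on A
  have hdecA : ∀ σ ∈ A, (1 + |σ|) ^ (-a) ≤ 2 ^ a * (1 + |τ|) ^ (-a) := by
    intro σ hσ
    have h3 : (1 + |σ|) ^ (-a) ≤ R ^ (-a) :=
      Real.rpow_le_rpow_of_nonpos hR (factA σ hσ) (neg_nonpos.mpr ha0)
    have h4 : R ^ (-a) = 2 ^ a * (1 + |τ|) ^ (-a) := by
      rw [hRdef, Real.div_rpow hτ1.le (by norm_num),
        Real.rpow_neg (by norm_num : (0:ℝ) ≤ 2), div_eq_mul_inv, inv_inv, mul_comm]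
    rw [← h4]; exact h3
  -- the kernel-decay bound off A
  have hdecB : ∀ σ ∉ A, (1 + T * |τ - σ|)⁻¹ ≤ 2 * (1 + T * (1 + |τ|))⁻¹ := by
    intro σ hσ
    have h1 := factB σ hσ
    have h2 : (0:ℝ) < 1 + T * (1 + |τ|) := by positivity
    rw [show (2:ℝ) * (1 + T * (1 + |τ|))⁻¹ = ((1 + T * (1 + |τ|)) / 2)⁻¹ by
      field_simp]
    exact inv_anti₀ (by positivity) h1
  -- key exponent inequality used on B-terms
  have keyB : T ^ a * (1 + T * (1 + |τ|))⁻¹ ≤ g := by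
    have h1 : (T * (1 + |τ|)) ^ (a - δ) ≤ 1 + T * (1 + |τ|) :=
      rpow_le_one_add (by positivity) (by linarith) (by nlinarith)
    have h2 : (0:ℝ) < 1 + T * (1 + |τ|) := by positivity
    rw [show T ^ a * (1 + T * (1 + |τ|))⁻¹ ≤ g ↔
        T ^ a * (1 + T * (1 + |τ|))⁻¹ * (1 + T * (1 + |τ|)) ≤ g * (1 + T * (1 + |τ|)) from
      by rw [mul_le_mul_iff_of_pos_right h2]]
    rw [mul_assoc, inv_mul_cancel₀ h2.ne', mul_one]
    calc T ^ a = g * (T * (1 + |τ|)) ^ (a - δ) := by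
          rw [hgdef, Real.mul_rpow hT.le hτ1.le,
            show T ^ δ * (1 + |τ|) ^ (δ - a) * (T ^ (a - δ) * (1 + |τ|) ^ (a - δ))
              = (T ^ δ * T ^ (a - δ)) * ((1 + |τ|) ^ (δ - a) * (1 + |τ|) ^ (a - δ)) from by ring,
            ← Real.rpow_add hT, ← Real.rpow_add hτ1,
            show δ + (a - δ) = a from by ring, show δ - a + (a - δ) = 0 from by ring,
            Real.rpow_zero, mul_one]
      _ ≤ g * (1 + T * (1 + |τ|)) := mul_le_mul_of_nonneg_left h1 hgpos.le
  -- bound on A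
  have termA : ∫⁻ σ in A, F σ ≤ ENNReal.ofReal (2 ^ a * CR * g) := by
    by_cases hcase : T * (1 + |τ|) ≤ 1
    · -- small case: use measure of A
      have hpt : ∀ σ ∈ A, F σ ≤ ENNReal.ofReal (T * (2 ^ a * (1 + |τ|) ^ (-a))) := by
        intro σ hσ
        apply ENNReal.ofReal_le_ofReal
        have h1 : ((1 + T * |τ - σ|) ^ (3:ℝ))⁻¹ ≤ 1 := by
          rw [inv_le_one_iff₀]
          right
          exact Real.one_le_rpow (hbase σ) (by norm_num)
        have hκ : T * ((1 + T * |τ - σ|) ^ (3:ℝ))⁻¹ ≤ T :=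
          mul_le_of_le_one_right hT.le h1
        exact mul_le_mul hκ (hdecA σ hσ) (Real.rpow_nonneg (by positivity) _) hT.le
      have hmeasbound : ∫⁻ σ in A, F σ
          ≤ ENNReal.ofReal (T * (2 ^ a * (1 + |τ|) ^ (-a))) * volume A := by
        rw [← setLIntegral_const A _]
        exact setLIntegral_mono_ae (by fun_prop) (Filter.Eventually.of_forall hpt)
      refine hmeasbound.trans ?_
      rw [hAdef, Real.volume_Icc, show τ + R - (τ - R) = 2 * R from by ring, hRdef,
        show 2 * ((1 + |τ|)/2) = 1 + |τ| from by ring,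
        ← ENNReal.ofReal_mul (by positivity)]
      apply ENNReal.ofReal_le_ofReal
      have key : T * (1 + |τ|) ^ (1 - a) ≤ g := by
        have e1 : T ^ δ * (1 + |τ|) ^ (δ - a) * (T ^ (1 - δ) * (1 + |τ|) ^ (1 - δ))
            = T * (1 + |τ|) ^ (1 - a) := by
          rw [show T ^ δ * (1 + |τ|) ^ (δ - a) * (T ^ (1 - δ) * (1 + |τ|) ^ (1 - δ))
              = (T ^ δ * T ^ (1 - δ)) * ((1 + |τ|) ^ (δ - a) * (1 + |τ|) ^ (1 - δ)) from by ring,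
            ← Real.rpow_add hT, ← Real.rpow_add hτ1,
            show δ + (1 - δ) = (1:ℝ) from by ring,
            show δ - a + (1 - δ) = 1 - a from by ring, Real.rpow_one]
        have h5 : T ^ (1 - δ) * (1 + |τ|) ^ (1 - δ) ≤ 1 := by
          rw [← Real.mul_rpow hT.le hτ1.le]
          exact Real.rpow_le_one (by positivity) hcase (by linarith)
        calc T * (1 + |τ|) ^ (1 - a)
            = g * (T ^ (1 - δ) * (1 + |τ|) ^ (1 - δ)) := e1.symm
          _ ≤ g := mul_le_of_le_one_right hgpos.le h5
      calc T * (2 ^ a * (1 + |τ|) ^ (-a)) * (1 + |τ|)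
          = 2 ^ a * (T * (1 + |τ|) ^ (1 - a)) := by
            rw [show (1:ℝ) - a = -a + 1 from by ring, Real.rpow_add hτ1, Real.rpow_one]
            ring
        _ ≤ 2 ^ a * (CR * g) := by
            apply mul_le_mul_of_nonneg_left _ h2apos.le
            nlinarith
        _ = 2 ^ a * CR * g := by ring
    · -- big case: use the full kernel integral
      push_neg at hcase
      have hpt : ∀ σ ∈ A, F σ ≤ ENNReal.ofReal (2 ^ a * (1 + |τ|) ^ (-a))
          * ENNReal.ofReal (T * ((1 + T * |τ - σ|) ^ (2:ℝ))⁻¹) := by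
        intro σ hσ
        rw [← ENNReal.ofReal_mul (by positivity)]
        apply ENNReal.ofReal_le_ofReal
        have h1 : ((1 + T * |τ - σ|) ^ (3:ℝ))⁻¹ ≤ ((1 + T * |τ - σ|) ^ (2:ℝ))⁻¹ := by
          apply inv_anti₀ (Real.rpow_pos_of_pos (by linarith [hbase σ]) _)
          exact Real.rpow_le_rpow_of_exponent_le (hbase σ) (by norm_num)
        calc T * ((1 + T * |τ - σ|) ^ (3:ℝ))⁻¹ * (1 + |σ|) ^ (-a)
            ≤ T * ((1 + T * |τ - σ|) ^ (2:ℝ))⁻¹ * (2 ^ a * (1 + |τ|) ^ (-a)) := by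
              apply mul_le_mul (mul_le_mul_of_nonneg_left h1 hT.le) (hdecA σ hσ)
                (Real.rpow_nonneg (by positivity) _) (by positivity)
          _ = 2 ^ a * (1 + |τ|) ^ (-a) * (T * ((1 + T * |τ - σ|) ^ (2:ℝ))⁻¹) := by ring
      calc ∫⁻ σ in A, F σ
          ≤ ∫⁻ σ in A, ENNReal.ofReal (2 ^ a * (1 + |τ|) ^ (-a))
              * ENNReal.ofReal (T * ((1 + T * |τ - σ|) ^ (2:ℝ))⁻¹) :=
            setLIntegral_mono_ae (by fun_prop) (Filter.Eventually.of_forall hpt)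
        _ = ENNReal.ofReal (2 ^ a * (1 + |τ|) ^ (-a))
              * ∫⁻ σ in A, ENNReal.ofReal (T * ((1 + T * |τ - σ|) ^ (2:ℝ))⁻¹) :=
            lintegral_const_mul' _ _ ENNReal.ofReal_ne_top
        _ ≤ ENNReal.ofReal (2 ^ a * (1 + |τ|) ^ (-a))
              * ∫⁻ σ : ℝ, ENNReal.ofReal (T * ((1 + T * |τ - σ|) ^ (2:ℝ))⁻¹) :=
            mul_le_mul_right (setLIntegral_le_lintegral _ _) _
        _ = ENNReal.ofReal (2 ^ a * (1 + |τ|) ^ (-a)) * Cint := by rw [lint_kernel2 hT τ]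
        _ ≤ ENNReal.ofReal (2 ^ a * (1 + |τ|) ^ (-a)) * ENNReal.ofReal CR :=
            mul_le_mul_right hCR _
        _ ≤ ENNReal.ofReal (2 ^ a * CR * g) := by
            rw [← ENNReal.ofReal_mul (by positivity)]
            apply ENNReal.ofReal_le_ofReal
            have h5 : (1:ℝ) ≤ (T * (1 + |τ|)) ^ δ := Real.one_le_rpow hcase.le hd0
            have e1 : (1 + |τ|) ^ (-a) * (T * (1 + |τ|)) ^ δ = g := by
              rw [Real.mul_rpow hT.le hτ1.le, hgdef,
                show (1 + |τ|) ^ (-a) * (T ^ δ * (1 + |τ|) ^ δ)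
                  = T ^ δ * ((1 + |τ|) ^ (-a) * (1 + |τ|) ^ δ) from by ring,
                ← Real.rpow_add hτ1, show -a + δ = δ - a from by ring]
            have key : (1 + |τ|) ^ (-a) ≤ g := by
              rw [← e1]
              exact le_mul_of_one_le_right (Real.rpow_nonneg hτ1.le _) h5
            calc (2:ℝ) ^ a * (1 + |τ|) ^ (-a) * CR = 2 ^ a * CR * (1 + |τ|) ^ (-a) := by ring
              _ ≤ 2 ^ a * CR * g := mul_le_mul_of_nonneg_left key (by positivity)
  -- pointwise kernel bounds off A
  have hcube1 : ∀ σ ∉ A, ((1 + T * |τ - σ|) ^ (3:ℝ))⁻¹ ≤ 2 * (1 + T * (1 + |τ|))⁻¹ := by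
    intro σ hσ
    refine le_trans ?_ (hdecB σ hσ)
    have h1 : (1 + T * |τ - σ|) ^ (1:ℝ) ≤ (1 + T * |τ - σ|) ^ (3:ℝ) :=
      Real.rpow_le_rpow_of_exponent_le (hbase σ) (by norm_num)
    rw [Real.rpow_one] at h1
    exact inv_anti₀ (by linarith [hbase σ]) h1
  have termB1 : ∫⁻ σ in S ∩ Aᶜ, F σ ≤ ENNReal.ofReal (2 * c1R * g) := by
    have hpt : ∀ σ, σ ∈ S ∩ Aᶜ → F σ ≤
        ENNReal.ofReal (2 * T * (1 + T * (1 + |τ|))⁻¹) * ENNReal.ofReal ((1 + |σ|) ^ (-a)) := by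
      intro σ hσ
      rw [← ENNReal.ofReal_mul (by positivity)]
      apply ENNReal.ofReal_le_ofReal
      have h1 := hcube1 σ hσ.2
      calc T * ((1 + T * |τ - σ|) ^ (3:ℝ))⁻¹ * (1 + |σ|) ^ (-a)
          ≤ T * (2 * (1 + T * (1 + |τ|))⁻¹) * (1 + |σ|) ^ (-a) := by
            apply mul_le_mul_of_nonneg_right (mul_le_mul_of_nonneg_left h1 hT.le)
              (Real.rpow_nonneg (by positivity) _)
        _ = 2 * T * (1 + T * (1 + |τ|))⁻¹ * (1 + |σ|) ^ (-a) := by ring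
    calc ∫⁻ σ in S ∩ Aᶜ, F σ
        ≤ ∫⁻ σ in S ∩ Aᶜ, ENNReal.ofReal (2 * T * (1 + T * (1 + |τ|))⁻¹)
            * ENNReal.ofReal ((1 + |σ|) ^ (-a)) :=
          setLIntegral_mono_ae (by fun_prop) (Filter.Eventually.of_forall hpt)
      _ = ENNReal.ofReal (2 * T * (1 + T * (1 + |τ|))⁻¹)
            * ∫⁻ σ in S ∩ Aᶜ, ENNReal.ofReal ((1 + |σ|) ^ (-a)) :=
          lintegral_const_mul' _ _ ENNReal.ofReal_ne_top
      _ ≤ ENNReal.ofReal (2 * T * (1 + T * (1 + |τ|))⁻¹)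
            * ∫⁻ σ in S, ENNReal.ofReal ((1 + |σ|) ^ (-a)) :=
          mul_le_mul_right (lintegral_mono' (Measure.restrict_mono Set.inter_subset_left
            le_rfl) (le_refl _)) _
      _ ≤ ENNReal.ofReal (2 * T * (1 + T * (1 + |τ|))⁻¹)
            * (ENNReal.ofReal (T ^ (a-1)) * c1) :=
          mul_le_mul_right (smallball ha0 ha1 hT) _
      _ ≤ ENNReal.ofReal (2 * T * (1 + T * (1 + |τ|))⁻¹)
            * (ENNReal.ofReal (T ^ (a-1)) * ENNReal.ofReal c1R) :=
          mul_le_mul_right (mul_le_mul_right hc1 _) _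
      _ = ENNReal.ofReal (2 * T * (1 + T * (1 + |τ|))⁻¹ * (T ^ (a-1) * c1R)) := by
          rw [← ENNReal.ofReal_mul (Real.rpow_nonneg hT.le _),
            ← ENNReal.ofReal_mul (by positivity)]
      _ ≤ ENNReal.ofReal (2 * c1R * g) := by
          apply ENNReal.ofReal_le_ofReal
          have hTT : T * T ^ (a-1) = T ^ a := by
            nth_rewrite 1 [← Real.rpow_one T]
            rw [← Real.rpow_add hT]; norm_num
          calc 2 * T * (1 + T * (1 + |τ|))⁻¹ * (T ^ (a-1) * c1R)
              = 2 * c1R * ((T * T ^ (a-1)) * (1 + T * (1 + |τ|))⁻¹) := by ring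
            _ = 2 * c1R * (T ^ a * (1 + T * (1 + |τ|))⁻¹) := by rw [hTT]
            _ ≤ 2 * c1R * g := mul_le_mul_of_nonneg_left keyB (by positivity)
  have termB2 : ∫⁻ σ in Sᶜ ∩ Aᶜ, F σ ≤ ENNReal.ofReal (2 * CR * g) := by
    have hpt : ∀ σ, σ ∈ Sᶜ ∩ Aᶜ → F σ ≤
        ENNReal.ofReal (2 * T ^ a * (1 + T * (1 + |τ|))⁻¹)
          * ENNReal.ofReal (T * ((1 + T * |τ - σ|) ^ (2:ℝ))⁻¹) := by
      intro σ hσ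
      rw [← ENNReal.ofReal_mul (by positivity)]
      apply ENNReal.ofReal_le_ofReal
      have hbσ : 0 < 1 + T * |τ - σ| := by linarith [hbase σ]
      have hσS : 1/T ≤ 1 + |σ| := by
        have h1 : σ ∉ S := hσ.1
        rw [hSdef, Set.mem_Icc] at h1
        push_neg at h1
        rcases le_or_gt (-(1/T)) σ with h | h
        · have := h1 h
          have : 1/T < |σ| := lt_of_lt_of_le this (le_abs_self σ)
          linarith [abs_nonneg σ]
        · have : 1/T < |σ| := by
            rw [abs_of_neg (by nlinarith [one_div_pos.mpr hT] : σ < 0)]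
            linarith
          linarith
      have hdecS : (1 + |σ|) ^ (-a) ≤ T ^ a := by
        have h2 : (1 + |σ|) ^ (-a) ≤ (1/T) ^ (-a) :=
          Real.rpow_le_rpow_of_nonpos (one_div_pos.mpr hT) hσS (neg_nonpos.mpr ha0)
        refine h2.trans_eq ?_
        rw [one_div, Real.inv_rpow hT.le, Real.rpow_neg hT.le, inv_inv]
      have hsplit3 : ((1 + T * |τ - σ|) ^ (3:ℝ))⁻¹
          = ((1 + T * |τ - σ|) ^ (2:ℝ))⁻¹ * (1 + T * |τ - σ|)⁻¹ := by
        rw [show (3:ℝ) = 2 + 1 from by norm_num, Real.rpow_add hbσ, Real.rpow_one, mul_inv]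
      rw [hsplit3]
      calc T * (((1 + T * |τ - σ|) ^ (2:ℝ))⁻¹ * (1 + T * |τ - σ|)⁻¹) * (1 + |σ|) ^ (-a)
          = (T * ((1 + T * |τ - σ|) ^ (2:ℝ))⁻¹) * ((1 + T * |τ - σ|)⁻¹ * (1 + |σ|) ^ (-a)) := by
            ring
        _ ≤ (T * ((1 + T * |τ - σ|) ^ (2:ℝ))⁻¹) * ((2 * (1 + T * (1 + |τ|))⁻¹) * T ^ a) := by
            apply mul_le_mul_of_nonneg_left _ (by positivity)
            exact mul_le_mul (hdecB σ hσ.2) hdecS (Real.rpow_nonneg (by positivity) _)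
              (by positivity)
        _ = 2 * T ^ a * (1 + T * (1 + |τ|))⁻¹ * (T * ((1 + T * |τ - σ|) ^ (2:ℝ))⁻¹) := by ring
    calc ∫⁻ σ in Sᶜ ∩ Aᶜ, F σ
        ≤ ∫⁻ σ in Sᶜ ∩ Aᶜ, ENNReal.ofReal (2 * T ^ a * (1 + T * (1 + |τ|))⁻¹)
            * ENNReal.ofReal (T * ((1 + T * |τ - σ|) ^ (2:ℝ))⁻¹) :=
          setLIntegral_mono_ae (by fun_prop) (Filter.Eventually.of_forall hpt)
      _ = ENNReal.ofReal (2 * T ^ a * (1 + T * (1 + |τ|))⁻¹)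
            * ∫⁻ σ in Sᶜ ∩ Aᶜ, ENNReal.ofReal (T * ((1 + T * |τ - σ|) ^ (2:ℝ))⁻¹) :=
          lintegral_const_mul' _ _ ENNReal.ofReal_ne_top
      _ ≤ ENNReal.ofReal (2 * T ^ a * (1 + T * (1 + |τ|))⁻¹)
            * ∫⁻ σ : ℝ, ENNReal.ofReal (T * ((1 + T * |τ - σ|) ^ (2:ℝ))⁻¹) :=
          mul_le_mul_right (setLIntegral_le_lintegral _ _) _
      _ = ENNReal.ofReal (2 * T ^ a * (1 + T * (1 + |τ|))⁻¹) * Cint := by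
          rw [lint_kernel2 hT τ]
      _ ≤ ENNReal.ofReal (2 * T ^ a * (1 + T * (1 + |τ|))⁻¹) * ENNReal.ofReal CR :=
          mul_le_mul_right hCR _
      _ ≤ ENNReal.ofReal (2 * CR * g) := by
          rw [← ENNReal.ofReal_mul (by positivity)]
          apply ENNReal.ofReal_le_ofReal
          calc 2 * T ^ a * (1 + T * (1 + |τ|))⁻¹ * CR
              = 2 * CR * (T ^ a * (1 + T * (1 + |τ|))⁻¹) := by ring
            _ ≤ 2 * CR * g := mul_le_mul_of_nonneg_left keyB (by positivity)
  -- assemble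
  have hsplitB : ∫⁻ σ in Aᶜ, F σ = (∫⁻ σ in S ∩ Aᶜ, F σ) + ∫⁻ σ in Sᶜ ∩ Aᶜ, F σ := by
    rw [← Measure.restrict_restrict hSmeas, ← Measure.restrict_restrict hSmeas.compl]
    exact (lintegral_add_compl F hSmeas (μ := volume.restrict Aᶜ)).symm
  calc ∫⁻ σ : ℝ, F σ = (∫⁻ σ in A, F σ) + ∫⁻ σ in Aᶜ, F σ :=
        (lintegral_add_compl F hAmeas).symm
    _ ≤ ENNReal.ofReal (2 ^ a * CR * g)
        + (ENNReal.ofReal (2 * c1R * g) + ENNReal.ofReal (2 * CR * g)) := by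
        rw [hsplitB]
        exact add_le_add termA (add_le_add termB1 termB2)
    _ = ENNReal.ofReal ((2 ^ a * CR + 2 * c1R + 2 * CR) * g) := by
        rw [← ENNReal.ofReal_add (by positivity) (by positivity),
          ← ENNReal.ofReal_add (by positivity) (by positivity)]
        ring_nf
    _ ≤ ENNReal.ofReal ((2 ^ a * CR + 2 * c1R + 2 * CR) * g) := le_refl _

lemma schur (k : ℝ → ℝ → ℝ≥0∞) (hk : Measurable (Function.uncurry k))
    (h : ℝ → ℝ≥0∞) (hh : Measurable h) (hh0 : ∀ x, h x ≠ 0) (hht : ∀ x, h x ≠ ∞)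
    (A : ℝ≥0∞) (hA : A ≠ ∞)
    (hrow : ∀ τ, ∫⁻ σ, k τ σ * h σ ≤ A * h τ)
    (hcol : ∀ σ, ∫⁻ τ, k τ σ * h τ ≤ A * h σ)
    (G : ℝ → ℝ≥0∞) (hG : Measurable G) (hGt : ∀ σ, G σ ≠ ∞) :
    ∫⁻ τ, (∫⁻ σ, k τ σ * G σ) ^ 2 ≤ A ^ 2 * ∫⁻ σ, G σ ^ 2 := by
  have hconj : Real.HolderConjugate 2 2 := Real.holderConjugate_iff.mpr ⟨by norm_num, by norm_num⟩
  have hps2 : ∀ x : ℝ≥0∞, (x ^ ((1:ℝ)/2)) ^ (2:ℝ) = x := by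
    intro x; rw [← ENNReal.rpow_mul]; norm_num
  have hpsn : ∀ x : ℝ≥0∞, (x ^ ((1:ℝ)/2)) ^ (2:ℕ) = x := by
    intro x
    rw [← ENNReal.rpow_natCast (x ^ ((1:ℝ)/2)) 2, ← ENNReal.rpow_mul]; norm_num
  have key : ∀ τ, (∫⁻ σ, k τ σ * G σ) ^ 2
      ≤ (A * h τ) * ∫⁻ σ, k τ σ * (G σ ^ 2 / h σ) := by
    intro τ
    have hmk : Measurable (k τ) := hk.of_uncurry_left
    have hpt : ∀ σ, k τ σ * G σ
        = ((k τ σ * h σ) ^ ((1:ℝ)/2)) * ((k τ σ * (G σ ^ 2 / h σ)) ^ ((1:ℝ)/2)) := by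
      intro σ
      rw [← ENNReal.mul_rpow_of_nonneg _ _ (by norm_num : (0:ℝ) ≤ 1/2)]
      rw [show k τ σ * h σ * (k τ σ * (G σ ^ 2 / h σ))
          = (k τ σ * k τ σ) * (h σ * (G σ ^ 2 / h σ)) from by ring,
        ENNReal.mul_div_cancel' (fun h => absurd h (hh0 σ)) (fun h => absurd h (hht σ)),
        show k τ σ * k τ σ * G σ ^ 2 = (k τ σ * G σ) ^ 2 from by ring,
        ← ENNReal.rpow_natCast (k τ σ * G σ) 2, ← ENNReal.rpow_mul]
      norm_num
    have hmeas1 : Measurable fun σ => (k τ σ * h σ) ^ ((1:ℝ)/2) :=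
      (hmk.mul hh).pow_const _
    have hmeas2 : Measurable fun σ => (k τ σ * (G σ ^ 2 / h σ)) ^ ((1:ℝ)/2) :=
      (hmk.mul ((hG.pow_const 2).div hh)).pow_const _
    have CS : ∫⁻ σ, k τ σ * G σ
        ≤ (∫⁻ σ, k τ σ * h σ) ^ ((1:ℝ)/2) * (∫⁻ σ, k τ σ * (G σ ^ 2 / h σ)) ^ ((1:ℝ)/2) := by
      have := ENNReal.lintegral_mul_le_Lp_mul_Lq volume hconj hmeas1.aemeasurable
        hmeas2.aemeasurable
      simp only [Pi.mul_apply] at this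
      calc ∫⁻ σ, k τ σ * G σ
          = ∫⁻ σ, ((k τ σ * h σ) ^ ((1:ℝ)/2)) * ((k τ σ * (G σ ^ 2 / h σ)) ^ ((1:ℝ)/2)) :=
            lintegral_congr hpt
        _ ≤ (∫⁻ σ, ((k τ σ * h σ) ^ ((1:ℝ)/2)) ^ (2:ℝ)) ^ ((1:ℝ)/2)
            * (∫⁻ σ, ((k τ σ * (G σ ^ 2 / h σ)) ^ ((1:ℝ)/2)) ^ (2:ℝ)) ^ ((1:ℝ)/2) := this
        _ = (∫⁻ σ, k τ σ * h σ) ^ ((1:ℝ)/2) * (∫⁻ σ, k τ σ * (G σ ^ 2 / h σ)) ^ ((1:ℝ)/2) := by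
            simp_rw [hps2]
    calc (∫⁻ σ, k τ σ * G σ) ^ 2
        ≤ ((∫⁻ σ, k τ σ * h σ) ^ ((1:ℝ)/2) * (∫⁻ σ, k τ σ * (G σ ^ 2 / h σ)) ^ ((1:ℝ)/2)) ^ 2 :=
          pow_le_pow_left' CS 2
      _ = (∫⁻ σ, k τ σ * h σ) * (∫⁻ σ, k τ σ * (G σ ^ 2 / h σ)) := by
          rw [mul_pow, hpsn, hpsn]
      _ ≤ (A * h τ) * ∫⁻ σ, k τ σ * (G σ ^ 2 / h σ) := mul_le_mul_left (hrow τ) _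
  calc ∫⁻ τ, (∫⁻ σ, k τ σ * G σ) ^ 2
      ≤ ∫⁻ τ, (A * h τ) * ∫⁻ σ, k τ σ * (G σ ^ 2 / h σ) := lintegral_mono key
    _ = A * ∫⁻ τ, ∫⁻ σ, h τ * (k τ σ * (G σ ^ 2 / h σ)) := by
        rw [← lintegral_const_mul' A _ hA]
        congr 1
        funext τ
        rw [mul_assoc, lintegral_const_mul' (h τ) _ (hht τ)]
    _ = A * ∫⁻ σ, ∫⁻ τ, h τ * (k τ σ * (G σ ^ 2 / h σ)) := by
        congr 1
        apply lintegral_lintegral_swap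
        apply Measurable.aemeasurable
        exact (hh.comp measurable_fst).mul
          (hk.mul (((hG.comp measurable_snd).pow_const 2).div (hh.comp measurable_snd)))
    _ ≤ A * ∫⁻ σ, A * G σ ^ 2 := by
        apply mul_le_mul_right
        apply lintegral_mono
        intro σ
        have hc : G σ ^ 2 / h σ ≠ ∞ :=
          (ENNReal.div_lt_top (by simp [ENNReal.pow_ne_top (hGt σ)]) (hh0 σ)).ne
        calc ∫⁻ τ, h τ * (k τ σ * (G σ ^ 2 / h σ))
            = (G σ ^ 2 / h σ) * ∫⁻ τ, k τ σ * h τ := by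
              rw [← lintegral_const_mul' _ _ hc]
              congr 1; funext τ; ring
          _ ≤ (G σ ^ 2 / h σ) * (A * h σ) := mul_le_mul_right (hcol σ) _
          _ = A * (G σ ^ 2 / h σ * h σ) := by ring
          _ = A * G σ ^ 2 := by rw [ENNReal.div_mul_cancel (hh0 σ) (hht σ)]
    _ = A ^ 2 * ∫⁻ σ, G σ ^ 2 := by
        rw [lintegral_const_mul' A _ hA, ← mul_assoc, sq]

open scoped FourierTransform in
lemma phi_decay (η : SchwartzMap ℝ ℂ) :
    ∃ C : ℝ, 0 < C ∧ ∀ x : ℝ,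
      ‖∫ t : ℝ, η t * Complex.exp (-(Complex.I * (t:ℂ) * (x:ℂ)))‖
        ≤ C * ((1 + |x|) ^ (3:ℝ))⁻¹ := by
  set ψ := SchwartzMap.fourierTransformCLM ℂ η with hψ
  obtain ⟨C0, hC0, h0⟩ := ψ.decay 0 0
  obtain ⟨C3, hC3, h3⟩ := ψ.decay 3 0
  refine ⟨343 * (4 * C0 + 4 * C3), by positivity, ?_⟩
  intro x
  have h2π : (0:ℝ) < 2 * Real.pi := by positivity
  set y : ℝ := x / (2 * Real.pi) with hy
  have hid : (∫ t : ℝ, η t * Complex.exp (-(Complex.I * (t:ℂ) * (x:ℂ)))) = ψ y := by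
    rw [hψ, SchwartzMap.fourierTransformCLM_apply, SchwartzMap.fourier_coe,
      Real.fourier_real_eq_integral_exp_smul]
    apply integral_congr_ae
    filter_upwards [] with v
    have harg : -2 * Real.pi * v * y = -(v * x) := by
      rw [hy]; field_simp
    rw [harg, smul_eq_mul, mul_comm]
    congr 1
    push_cast
    ring_nf
  rw [hid]
  have hb1 : ‖ψ y‖ ≤ C0 := by
    have := h0 y
    simpa [norm_iteratedFDeriv_zero] using this
  have hb2 : |y| ^ 3 * ‖ψ y‖ ≤ C3 := by
    have := h3 y
    simpa [norm_iteratedFDeriv_zero, Real.norm_eq_abs] using this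
  have hkey : ‖ψ y‖ * (1 + |y|) ^ 3 ≤ 4 * C0 + 4 * C3 := by
    nlinarith [abs_nonneg y, norm_nonneg (ψ y), sq_nonneg (1 - |y|),
      mul_nonneg (mul_nonneg (sq_nonneg (1 - |y|)) (abs_nonneg y)) (norm_nonneg (ψ y)),
      mul_nonneg (sq_nonneg (1 - |y|)) (norm_nonneg (ψ y)),
      mul_nonneg (mul_nonneg (sq_nonneg (1 - |y|)) (abs_nonneg y)) (abs_nonneg y)]
  have hcomp : (1 + |x|) ^ 3 ≤ 343 * (1 + |y|) ^ 3 := by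
    have h7 : 2 * Real.pi ≤ 7 := by nlinarith [Real.pi_lt_d2]
    have hxy : (1 + |x|) / 7 ≤ 1 + |y| := by
      have : |y| = |x| / (2 * Real.pi) := by rw [hy, abs_div, abs_of_pos h2π]
      rw [this]
      have : |x| / 7 ≤ |x| / (2 * Real.pi) := by
        apply div_le_div_of_nonneg_left (abs_nonneg x) h2π h7
      have h17 : (1:ℝ)/7 ≤ 1 := by norm_num
      calc (1 + |x|) / 7 = 1/7 + |x|/7 := by ring
        _ ≤ 1 + |x| / (2 * Real.pi) := by linarith
    calc (1 + |x|) ^ 3 = 343 * ((1 + |x|) / 7) ^ 3 := by ring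
      _ ≤ 343 * (1 + |y|) ^ 3 := by
          have := pow_le_pow_left₀ (by positivity) hxy 3
          linarith
  have hfin : ‖ψ y‖ * (1 + |x|) ^ 3 ≤ 343 * (4 * C0 + 4 * C3) := by
    calc ‖ψ y‖ * (1 + |x|) ^ 3 ≤ ‖ψ y‖ * (343 * (1 + |y|) ^ 3) :=
          mul_le_mul_of_nonneg_left hcomp (norm_nonneg _)
      _ = 343 * (‖ψ y‖ * (1 + |y|) ^ 3) := by ring
      _ ≤ 343 * (4 * C0 + 4 * C3) := by linarith
  rw [show ((3:ℝ)) = ((3:ℕ):ℝ) from by norm_num, Real.rpow_natCast]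
  rw [← div_eq_mul_inv, le_div_iff₀ (by positivity)]
  exact hfin

end Stmt17Aux

open Stmt17Aux in
/-- Frequency-side, per-mode form of Proposition 2.2 (time localization
`‖η(t/T) u‖_{X^{s,b'}} ≲ T^{b-b'} ‖u‖_{X^{s,b}}`): multiplication by `η(t/T)` acts on
the time-Fourier side as convolution with `T η̂(T·)`, and
`(∫ (1+|τ|)^{2b'} |∫ T η̂(T(τ-σ)) g(σ) dσ|² dτ)^{1/2}
  ≤ C T^{b-b'} (∫ (1+|τ|)^{2b} |g(τ)|² dτ)^{1/2}`
for `-1/2 < b' ≤ b < 1/2` and `T ∈ (0,1)`, where `η̂(τ) = ∫ η(t) e^{-itτ} dt`. -/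
theorem stmt17 (η : SchwartzMap ℝ ℂ) (b b' : ℝ)
    (hb' : -(1/2) < b') (hbb' : b' ≤ b) (hb : b < 1/2) :
    ∃ C : ℝ, 0 < C ∧ ∀ T : ℝ, T ∈ Set.Ioo (0:ℝ) 1 → ∀ g : ℝ → ℂ,
      AEStronglyMeasurable g volume →
      Integrable (fun τ : ℝ => (1 + |τ|) ^ (2 * b) * ‖g τ‖ ^ 2) →
      (∫⁻ τ : ℝ, ENNReal.ofReal ((1 + |τ|) ^ (2 * b') *
          ‖∫ σ : ℝ, (T : ℂ) *
              (∫ t : ℝ, η t * Complex.exp (-(Complex.I * (t : ℂ) * ((T * (τ - σ) : ℝ) : ℂ)))) *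
              g σ‖ ^ 2)) ^ ((1:ℝ)/2)
      ≤ ENNReal.ofReal (C * T ^ (b - b')) *
        (∫⁻ τ : ℝ, ENNReal.ofReal ((1 + |τ|) ^ (2 * b) * ‖g τ‖ ^ 2)) ^ ((1:ℝ)/2) := by
  obtain ⟨C₃, hC₃, hdec⟩ := phi_decay η
  set θ : ℝ := min b' (-b) with hθdef
  set a₁ : ℝ := b - θ with ha₁def
  set a₂ : ℝ := -b' - θ with ha₂def
  have hδ0 : 0 ≤ b - b' := by linarith
  have hda₁ : b - b' ≤ a₁ := by
    have : θ ≤ b' := min_le_left _ _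
    rw [ha₁def]; linarith
  have ha₁1 : a₁ < 1 := by
    rw [ha₁def, hθdef]
    rcases min_cases b' (-b) with ⟨h1, _⟩ | ⟨h1, _⟩ <;> rw [h1] <;> linarith
  have hda₂ : b - b' ≤ a₂ := by
    have : θ ≤ -b := min_le_right _ _
    rw [ha₂def]; linarith
  have ha₂1 : a₂ < 1 := by
    rw [ha₂def, hθdef]
    rcases min_cases b' (-b) with ⟨h1, _⟩ | ⟨h1, _⟩ <;> rw [h1] <;> linarith
  obtain ⟨K₁, hK₁, hKB₁⟩ := KB hδ0 hda₁ ha₁1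
  obtain ⟨K₂, hK₂, hKB₂⟩ := KB hδ0 hda₂ ha₂1
  refine ⟨C₃ * (K₁ + K₂), by positivity, ?_⟩
  rintro T ⟨hT0, hT1⟩ g hgm hgint
  clear hgint
  -- replace `g` by a strongly measurable representative
  set g₁ : ℝ → ℂ := hgm.mk g with hg₁def
  have hg₁m : StronglyMeasurable g₁ := hgm.stronglyMeasurable_mk
  have hgeq : g =ᵐ[volume] g₁ := hgm.ae_eq_mk
  have hLHSg : ∀ τ : ℝ,
      (∫ σ : ℝ, (T : ℂ) *
        (∫ t : ℝ, η t * Complex.exp (-(Complex.I * (t : ℂ) * ((T * (τ - σ) : ℝ) : ℂ)))) * g σ)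
      = ∫ σ : ℝ, (T : ℂ) *
        (∫ t : ℝ, η t * Complex.exp (-(Complex.I * (t : ℂ) * ((T * (τ - σ) : ℝ) : ℂ)))) * g₁ σ := by
    intro τ
    apply integral_congr_ae
    filter_upwards [hgeq] with σ hσ
    rw [hσ]
  have hRHSg : (∫⁻ τ : ℝ, ENNReal.ofReal ((1 + |τ|) ^ (2 * b) * ‖g τ‖ ^ 2))
      = ∫⁻ τ : ℝ, ENNReal.ofReal ((1 + |τ|) ^ (2 * b) * ‖g₁ τ‖ ^ 2) := by
    apply lintegral_congr_ae
    filter_upwards [hgeq] with τ hτ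
    rw [hτ]
  simp_rw [hLHSg, hRHSg]
  -- weights and kernel
  set W : ℝ → ℝ → ℝ≥0∞ := fun (r : ℝ) (x : ℝ) => ENNReal.ofReal ((1 + |x|) ^ r) with hWdef
  have hWpos : ∀ r x, W r x ≠ 0 := by
    intro r x
    simp only [hWdef, ne_eq, ENNReal.ofReal_eq_zero, not_le]
    positivity
  have hWtop : ∀ r x, W r x ≠ ∞ := fun r x => ENNReal.ofReal_ne_top
  have hWmeas : ∀ r, Measurable (W r) := by
    intro r
    apply Measurable.ennreal_ofReal
    fun_prop
  have hWmul : ∀ r s x, W r x * W s x = W (r + s) x := by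
    intro r s x
    rw [hWdef, ← ENNReal.ofReal_mul (by positivity),
      ← Real.rpow_add (by positivity : (0:ℝ) < 1 + |x|)]
  set κ : ℝ → ℝ → ℝ≥0∞ :=
    fun τ σ => ENNReal.ofReal (C₃ * (T * ((1 + T * |τ - σ|) ^ (3:ℝ))⁻¹)) with hκdef
  set k : ℝ → ℝ → ℝ≥0∞ := fun τ σ => W b' τ * (κ τ σ * W (-b) σ) with hkdef
  set G : ℝ → ℝ≥0∞ := fun σ => (‖g₁ σ‖₊ : ℝ≥0∞) with hGdef
  set Gt : ℝ → ℝ≥0∞ := fun σ => W b σ * G σ with hGtdef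
  set A : ℝ≥0∞ := ENNReal.ofReal (C₃ * (K₁ + K₂) * T ^ (b - b')) with hAdef
  -- row bound
  have hrow : ∀ τ, ∫⁻ σ, k τ σ * W θ σ ≤ A * W θ τ := by
    intro τ
    have hmerge : ∀ σ, k τ σ * W θ σ
        = W b' τ * (ENNReal.ofReal C₃
            * ENNReal.ofReal (T * ((1 + T * |τ - σ|) ^ (3:ℝ))⁻¹ * (1 + |σ|) ^ (-a₁))) := by
      intro σ
      have hr : (1 + |σ|) ^ (-b) * (1 + |σ|) ^ θ = (1 + |σ|) ^ (-a₁) := by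
        rw [← Real.rpow_add (by positivity : (0:ℝ) < 1 + |σ|)]
        congr 1
        rw [ha₁def]; ring
      simp only [hkdef, hκdef, hWdef]
      rw [mul_assoc]
      congr 1
      rw [← ENNReal.ofReal_mul (by positivity), ← ENNReal.ofReal_mul (by positivity),
        ← ENNReal.ofReal_mul hC₃.le]
      congr 1
      rw [mul_assoc, hr]
      ring
    simp_rw [hmerge]
    rw [lintegral_const_mul' _ _ (hWtop b' τ), lintegral_const_mul' _ _ ENNReal.ofReal_ne_top]
    calc W b' τ * (ENNReal.ofReal C₃
          * ∫⁻ σ, ENNReal.ofReal (T * ((1 + T * |τ - σ|) ^ (3:ℝ))⁻¹ * (1 + |σ|) ^ (-a₁)))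
        ≤ W b' τ * (ENNReal.ofReal C₃
          * ENNReal.ofReal (K₁ * (T ^ (b - b') * (1 + |τ|) ^ ((b - b') - a₁)))) := by
          exact mul_le_mul_right (mul_le_mul_right (hKB₁ T hT0 hT1 τ) _) _
      _ ≤ A * W θ τ := by
          rw [hWdef, hAdef, ← ENNReal.ofReal_mul hC₃.le,
            ← ENNReal.ofReal_mul (by positivity), ← ENNReal.ofReal_mul (by positivity)]
          apply ENNReal.ofReal_le_ofReal
          have hexp : (1 + |τ|) ^ (b') * (1 + |τ|) ^ ((b - b') - a₁) = (1 + |τ|) ^ θ := by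
            rw [← Real.rpow_add (by positivity : (0:ℝ) < 1 + |τ|)]
            congr 1
            rw [ha₁def]; ring
          calc (1 + |τ|) ^ b' * (C₃ * (K₁ * (T ^ (b - b') * (1 + |τ|) ^ ((b - b') - a₁))))
              = C₃ * K₁ * T ^ (b - b')
                  * ((1 + |τ|) ^ b' * (1 + |τ|) ^ ((b - b') - a₁)) := by ring
            _ = C₃ * K₁ * T ^ (b - b') * (1 + |τ|) ^ θ := by rw [hexp]
            _ ≤ C₃ * (K₁ + K₂) * T ^ (b - b') * (1 + |τ|) ^ θ := by
                have h1 : (0:ℝ) ≤ T ^ (b - b') := Real.rpow_nonneg hT0.le _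
                have h2 : (0:ℝ) ≤ (1 + |τ|) ^ θ := Real.rpow_nonneg (by positivity) _
                nlinarith [mul_nonneg (mul_nonneg hC₃.le hK₂.le) (mul_nonneg h1 h2)]
  -- column bound
  have hcol : ∀ σ, ∫⁻ τ, k τ σ * W θ τ ≤ A * W θ σ := by
    intro σ
    have hmerge : ∀ τ, k τ σ * W θ τ
        = W (-b) σ * (ENNReal.ofReal C₃
            * ENNReal.ofReal (T * ((1 + T * |σ - τ|) ^ (3:ℝ))⁻¹ * (1 + |τ|) ^ (-a₂))) := by
      intro τ
      have hr : (1 + |τ|) ^ b' * (1 + |τ|) ^ θ = (1 + |τ|) ^ (-a₂) := by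
        rw [← Real.rpow_add (by positivity : (0:ℝ) < 1 + |τ|)]
        congr 1
        rw [ha₂def]; ring
      simp only [hkdef, hκdef, hWdef]
      rw [abs_sub_comm τ σ]
      rw [show ENNReal.ofReal ((1 + |τ|) ^ b')
            * (ENNReal.ofReal (C₃ * (T * ((1 + T * |σ - τ|) ^ (3:ℝ))⁻¹))
              * ENNReal.ofReal ((1 + |σ|) ^ (-b))) * ENNReal.ofReal ((1 + |τ|) ^ θ)
          = ENNReal.ofReal ((1 + |σ|) ^ (-b))
            * (ENNReal.ofReal (C₃ * (T * ((1 + T * |σ - τ|) ^ (3:ℝ))⁻¹))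
              * (ENNReal.ofReal ((1 + |τ|) ^ b') * ENNReal.ofReal ((1 + |τ|) ^ θ))) from by ring]
      congr 1
      rw [← ENNReal.ofReal_mul (by positivity), hr,
        ← ENNReal.ofReal_mul (by positivity), ← ENNReal.ofReal_mul hC₃.le]
      congr 1
      ring
    simp_rw [hmerge]
    rw [lintegral_const_mul' _ _ (hWtop (-b) σ), lintegral_const_mul' _ _ ENNReal.ofReal_ne_top]
    calc W (-b) σ * (ENNReal.ofReal C₃
          * ∫⁻ τ, ENNReal.ofReal (T * ((1 + T * |σ - τ|) ^ (3:ℝ))⁻¹ * (1 + |τ|) ^ (-a₂)))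
        ≤ W (-b) σ * (ENNReal.ofReal C₃
          * ENNReal.ofReal (K₂ * (T ^ (b - b') * (1 + |σ|) ^ ((b - b') - a₂)))) := by
          exact mul_le_mul_right (mul_le_mul_right (hKB₂ T hT0 hT1 σ) _) _
      _ ≤ A * W θ σ := by
          rw [hWdef, hAdef, ← ENNReal.ofReal_mul hC₃.le,
            ← ENNReal.ofReal_mul (by positivity), ← ENNReal.ofReal_mul (by positivity)]
          apply ENNReal.ofReal_le_ofReal
          have hexp : (1 + |σ|) ^ (-b) * (1 + |σ|) ^ ((b - b') - a₂) = (1 + |σ|) ^ θ := by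
            rw [← Real.rpow_add (by positivity : (0:ℝ) < 1 + |σ|)]
            congr 1
            rw [ha₂def]; ring
          calc (1 + |σ|) ^ (-b) * (C₃ * (K₂ * (T ^ (b - b') * (1 + |σ|) ^ ((b - b') - a₂))))
              = C₃ * K₂ * T ^ (b - b')
                  * ((1 + |σ|) ^ (-b) * (1 + |σ|) ^ ((b - b') - a₂)) := by ring
            _ = C₃ * K₂ * T ^ (b - b') * (1 + |σ|) ^ θ := by rw [hexp]
            _ ≤ C₃ * (K₁ + K₂) * T ^ (b - b') * (1 + |σ|) ^ θ := by
                have h1 : (0:ℝ) ≤ T ^ (b - b') := Real.rpow_nonneg hT0.le _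
                have h2 : (0:ℝ) ≤ (1 + |σ|) ^ θ := Real.rpow_nonneg (by positivity) _
                nlinarith [mul_nonneg (mul_nonneg hC₃.le hK₁.le) (mul_nonneg h1 h2)]
  -- measurability for Schur
  have hκunc : Measurable (Function.uncurry k) := by
    have : Function.uncurry k = fun p : ℝ × ℝ =>
        ENNReal.ofReal ((1 + |p.1|) ^ b')
        * (ENNReal.ofReal (C₃ * (T * ((1 + T * |p.1 - p.2|) ^ (3:ℝ))⁻¹))
          * ENNReal.ofReal ((1 + |p.2|) ^ (-b))) := rfl
    rw [this]
    apply Measurable.fun_mul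
    · apply Measurable.ennreal_ofReal; fun_prop
    · apply Measurable.fun_mul
      · apply Measurable.ennreal_ofReal; fun_prop
      · apply Measurable.ennreal_ofReal; fun_prop
  have hGmeas : Measurable G := hg₁m.measurable.enorm
  have hGtmeas : Measurable Gt := (hWmeas b).mul hGmeas
  have hGttop : ∀ σ, Gt σ ≠ ∞ := by
    intro σ
    exact ENNReal.mul_ne_top (hWtop b σ) ENNReal.coe_ne_top
  have hAtop : A ≠ ∞ := ENNReal.ofReal_ne_top
  -- Schur conclusion
  have hschur := schur k hκunc (W θ) (hWmeas θ) (hWpos θ) (hWtop θ) A hAtop hrow hcol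
    Gt hGtmeas hGttop
  -- pointwise domination of the inner integral
  have hinner : ∀ τ : ℝ,
      (‖∫ σ : ℝ, (T : ℂ) *
        (∫ t : ℝ, η t * Complex.exp (-(Complex.I * (t : ℂ) * ((T * (τ - σ) : ℝ) : ℂ)))) * g₁ σ‖₊
        : ℝ≥0∞) ≤ ∫⁻ σ, κ τ σ * G σ := by
    intro τ
    refine (enorm_integral_le_lintegral_enorm _).trans (lintegral_mono fun σ => ?_)
    rw [enorm_mul]
    apply mul_le_mul_left
    rw [hκdef, ← ofReal_norm_eq_enorm]
    apply ENNReal.ofReal_le_ofReal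
    rw [norm_mul, Complex.norm_real, Real.norm_eq_abs, abs_of_pos hT0]
    have h1 := hdec (T * (τ - σ))
    rw [abs_mul, abs_of_pos hT0] at h1
    calc T * ‖∫ t : ℝ, η t * Complex.exp (-(Complex.I * (t:ℂ) * ((T * (τ - σ) : ℝ) : ℂ)))‖
        ≤ T * (C₃ * ((1 + T * |τ - σ|) ^ (3:ℝ))⁻¹) :=
          mul_le_mul_of_nonneg_left h1 hT0.le
      _ = C₃ * (T * ((1 + T * |τ - σ|) ^ (3:ℝ))⁻¹) := by ring
  -- final chain
  have hmain : (∫⁻ τ : ℝ, ENNReal.ofReal ((1 + |τ|) ^ (2 * b') *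
      ‖∫ σ : ℝ, (T : ℂ) *
        (∫ t : ℝ, η t * Complex.exp (-(Complex.I * (t : ℂ) * ((T * (τ - σ) : ℝ) : ℂ)))) *
        g₁ σ‖ ^ 2))
      ≤ A ^ 2 * ∫⁻ τ : ℝ, ENNReal.ofReal ((1 + |τ|) ^ (2 * b) * ‖g₁ τ‖ ^ 2) := by
    have hGt2 : ∀ σ : ℝ, Gt σ ^ 2 = ENNReal.ofReal ((1 + |σ|) ^ (2 * b) * ‖g₁ σ‖ ^ 2) := by
      intro σ
      simp only [hGtdef, hGdef, hWdef]
      rw [mul_pow, ← ENNReal.ofReal_pow (by positivity),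
        ← enorm_eq_nnnorm, ← ofReal_norm_eq_enorm, ← ENNReal.ofReal_pow (norm_nonneg _),
        ← ENNReal.ofReal_mul (by positivity)]
      congr 2
      rw [← Real.rpow_natCast ((1 + |σ|) ^ b) 2, ← Real.rpow_mul (by positivity)]
      norm_num [mul_comm]
    calc ∫⁻ τ : ℝ, ENNReal.ofReal ((1 + |τ|) ^ (2 * b') *
        ‖∫ σ : ℝ, (T : ℂ) *
          (∫ t : ℝ, η t * Complex.exp (-(Complex.I * (t : ℂ) * ((T * (τ - σ) : ℝ) : ℂ)))) *
          g₁ σ‖ ^ 2)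
        ≤ ∫⁻ τ, (∫⁻ σ, k τ σ * Gt σ) ^ 2 := by
          apply lintegral_mono
          intro τ
          dsimp only
          have e1 : ENNReal.ofReal ((1 + |τ|) ^ (2 * b') *
              ‖∫ σ : ℝ, (T : ℂ) *
                (∫ t : ℝ, η t * Complex.exp (-(Complex.I * (t : ℂ) * ((T * (τ - σ) : ℝ) : ℂ)))) *
                g₁ σ‖ ^ 2)
              = (W b' τ * (‖∫ σ : ℝ, (T : ℂ) *
                (∫ t : ℝ, η t * Complex.exp (-(Complex.I * (t : ℂ) * ((T * (τ - σ) : ℝ) : ℂ)))) *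
                g₁ σ‖₊ : ℝ≥0∞)) ^ 2 := by
            rw [hWdef, mul_pow, ← ENNReal.ofReal_pow (by positivity),
              ← enorm_eq_nnnorm, ← ofReal_norm_eq_enorm, ← ENNReal.ofReal_pow (norm_nonneg _),
              ← ENNReal.ofReal_mul (by positivity)]
            congr 2
            rw [← Real.rpow_natCast ((1 + |τ|) ^ b') 2, ← Real.rpow_mul (by positivity)]
            norm_num [mul_comm]
          rw [e1]
          have e2 : ∫⁻ σ, k τ σ * Gt σ = W b' τ * ∫⁻ σ, κ τ σ * G σ := by
            rw [← lintegral_const_mul' _ _ (hWtop b' τ)]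
            apply lintegral_congr
            intro σ
            rw [hkdef, hGtdef]
            rw [show W b' τ * (κ τ σ * W (-b) σ) * (W b σ * G σ)
                = W b' τ * (κ τ σ * (W (-b) σ * W b σ) * G σ) from by ring,
              hWmul, show -b + b = (0:ℝ) from by ring]
            rw [show W (0:ℝ) σ = 1 from by
              rw [hWdef]; simp [Real.rpow_zero]]
            ring
          rw [e2]
          exact pow_le_pow_left' (mul_le_mul_right (hinner τ) _) 2
      _ ≤ A ^ 2 * ∫⁻ σ, Gt σ ^ 2 := hschur
      _ = A ^ 2 * ∫⁻ τ : ℝ, ENNReal.ofReal ((1 + |τ|) ^ (2 * b) * ‖g₁ τ‖ ^ 2) := by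
          congr 1
          exact lintegral_congr hGt2
  -- take square roots
  calc (∫⁻ τ : ℝ, ENNReal.ofReal ((1 + |τ|) ^ (2 * b') *
      ‖∫ σ : ℝ, (T : ℂ) *
        (∫ t : ℝ, η t * Complex.exp (-(Complex.I * (t : ℂ) * ((T * (τ - σ) : ℝ) : ℂ)))) *
        g₁ σ‖ ^ 2)) ^ ((1:ℝ)/2)
      ≤ (A ^ 2 * ∫⁻ τ : ℝ, ENNReal.ofReal ((1 + |τ|) ^ (2 * b) * ‖g₁ τ‖ ^ 2)) ^ ((1:ℝ)/2) :=
        ENNReal.rpow_le_rpow hmain (by norm_num)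
    _ = A * (∫⁻ τ : ℝ, ENNReal.ofReal ((1 + |τ|) ^ (2 * b) * ‖g₁ τ‖ ^ 2)) ^ ((1:ℝ)/2) := by
        rw [ENNReal.mul_rpow_of_nonneg _ _ (by norm_num : (0:ℝ) ≤ 1/2)]
        congr 1
        rw [← ENNReal.rpow_natCast A 2, ← ENNReal.rpow_mul]
        norm_num
end
end
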